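/- arXiv:1602.04729 — 8 statements merged into one kernel-verified Lean document; each statement's English description precedes it below -/
import Mathlib

section
/- Let α be a real number with α < 1 and consider the symbol g obtained as the primitive of ζ(s+α)−1, i.e. g(s) = ∑_{n≥2} (n^{-α}/log n) n^{-s}. Then the Volterra operator T_g is unbounded on H²: for every C > 0 there exists a finitely supported complex sequence (a_n)_{n≥1}, not identically zero, such that ∑_{N≥2} (log N)^{-2} |∑_{d∣N} d^{-α} a_{N/d}|² > C · ∑_{n≥1} |a_n|². -/
open scoped ENNReal

open Finset ArithmeticFunction

namespace VolterraAux

/-- The completely multiplicative arithmetic function `n ↦ n^(-α)`. -/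
noncomputable def psiAF (α : ℝ) : ArithmeticFunction ℝ :=
  ⟨fun n => if n = 0 then 0 else (n : ℝ) ^ (-α), if_pos rfl⟩

lemma psiAF_apply {α : ℝ} {n : ℕ} (hn : n ≠ 0) : psiAF α n = (n : ℝ) ^ (-α) := by
  simp [psiAF, hn]

lemma psiAF_mult (α : ℝ) : (psiAF α).IsMultiplicative := by
  constructor
  · rw [psiAF_apply one_ne_zero]; simp
  · intro m n _
    rcases eq_or_ne m 0 with rfl | hm
    · simp [psiAF]
    rcases eq_or_ne n 0 with rfl | hn
    · simp [psiAF]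
    rw [psiAF_apply (Nat.mul_ne_zero hm hn), psiAF_apply hm, psiAF_apply hn]
    push_cast
    rw [Real.mul_rpow (by positivity) (by positivity)]

/-- `sigAF α N = ∑_{d ∣ N} d^(-α)`. -/
noncomputable def sigAF (α : ℝ) : ArithmeticFunction ℝ :=
  (zeta : ArithmeticFunction ℕ) * psiAF α

lemma sigAF_apply {α : ℝ} {N : ℕ} (hN : N ≠ 0) :
    sigAF α N = ∑ d ∈ N.divisors, (d : ℝ) ^ (-α) := by
  rw [sigAF, coe_zeta_mul_apply]
  exact Finset.sum_congr rfl fun d hd => psiAF_apply (Nat.pos_of_mem_divisors hd).ne'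

lemma sigAF_mult (α : ℝ) : (sigAF α).IsMultiplicative :=
  isMultiplicative_zeta.natCast.mul (psiAF_mult α)

/-- `HAF α Q = ∑_{N ∣ Q} (sigAF α N)^2`. -/
noncomputable def HAF (α : ℝ) : ArithmeticFunction ℝ :=
  (zeta : ArithmeticFunction ℕ) * ((sigAF α).pmul (sigAF α))

lemma HAF_apply {α : ℝ} (Q : ℕ) :
    HAF α Q = ∑ N ∈ Q.divisors, (sigAF α N) ^ 2 := by
  rw [HAF, coe_zeta_mul_apply]
  exact Finset.sum_congr rfl fun N _ => by rw [pmul_apply, sq]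

lemma HAF_mult (α : ℝ) : (HAF α).IsMultiplicative :=
  isMultiplicative_zeta.natCast.mul ((sigAF_mult α).pmul (sigAF_mult α))

lemma sigAF_prime {α : ℝ} {p : ℕ} (hp : p.Prime) :
    sigAF α p = 1 + (p : ℝ) ^ (-α) := by
  rw [sigAF_apply hp.ne_zero, hp.divisors, Finset.sum_pair hp.one_lt.ne]
  simp

lemma HAF_prime {α : ℝ} {p : ℕ} (hp : p.Prime) :
    HAF α p = 1 + (1 + (p : ℝ) ^ (-α)) ^ 2 := by
  rw [HAF_apply, hp.divisors, Finset.sum_pair hp.one_lt.ne, sigAF_apply one_ne_zero,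
    sigAF_prime hp]
  simp

/-- log x ≤ 2 √x for x ≥ 1. -/
lemma log_le_two_sqrt {x : ℝ} (hx : 1 ≤ x) : Real.log x ≤ 2 * Real.sqrt x := by
  have h0 : (0:ℝ) ≤ x := by linarith
  have h1 : Real.log (Real.sqrt x) = Real.log x / 2 := Real.log_sqrt h0
  have h2 : Real.log (Real.sqrt x) ≤ Real.sqrt x - 1 :=
    Real.log_le_sub_one_of_pos (Real.sqrt_pos.mpr (by linarith))
  nlinarith [Real.sqrt_nonneg x]

/-- Chebyshev-type lower bound: for `n ≥ 200`, `n ≤ π(2n) · log(2n)`. -/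
lemma chebyshev {n : ℕ} (hn : 200 ≤ n) :
    (n : ℝ) ≤ ((Finset.range (2 * n + 1)).filter Nat.Prime).card *
      Real.log ((2 * n : ℕ) : ℝ) := by
  set S := (Finset.range (2 * n + 1)).filter Nat.Prime with hS
  set m := S.card
  have hn0 : 0 < n := by omega
  have hcbne : Nat.centralBinom n ≠ 0 := Nat.centralBinom_ne_zero n
  have hsub : (Nat.centralBinom n).primeFactors ⊆ S := by
    intro p hp
    have hpp : p.Prime := Nat.prime_of_mem_primeFactors hp
    have hdvd : p ∣ Nat.centralBinom n := Nat.dvd_of_mem_primeFactors hp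
    have hfac : 0 < (Nat.centralBinom n).factorization p :=
      hpp.factorization_pos_of_dvd hcbne hdvd
    have hple : p ^ (Nat.centralBinom n).factorization p ≤ 2 * n := by
      have h := Nat.pow_factorization_choose_le (p := p) (n := 2 * n) (k := n)
        (show 0 < 2*n by omega)
      unfold Nat.centralBinom
      exact h
    have hp2n : p ≤ 2 * n := le_trans (by
      calc p = p ^ 1 := (pow_one p).symm
      _ ≤ p ^ (Nat.centralBinom n).factorization p :=
          Nat.pow_le_pow_right hpp.pos hfac) hple
    rw [hS, Finset.mem_filter, Finset.mem_range]
    exact ⟨by omega, hpp⟩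
  have hcb_le : Nat.centralBinom n ≤ (2 * n) ^ m := by
    calc Nat.centralBinom n
        = ∏ p ∈ (Nat.centralBinom n).primeFactors,
            p ^ (Nat.centralBinom n).factorization p := by
          conv_lhs => rw [← Nat.factorization_prod_pow_eq_self hcbne]
          rfl
      _ ≤ ∏ _p ∈ (Nat.centralBinom n).primeFactors, 2 * n := by
          apply Finset.prod_le_prod'
          intro p _
          exact Nat.pow_factorization_choose_le (show 0 < 2*n by omega)
      _ = (2 * n) ^ (Nat.centralBinom n).primeFactors.card := by
          rw [Finset.prod_const]
      _ ≤ (2 * n) ^ m := Nat.pow_le_pow_right (by omega) (Finset.card_le_card hsub)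
  have h4 : (4 : ℕ) ^ n ≤ (2 * n + 1) * (2 * n) ^ m :=
    le_trans (Nat.four_pow_le_two_mul_add_one_mul_central_binom n)
      (Nat.mul_le_mul_left _ hcb_le)
  have h4R : (4 : ℝ) ^ n ≤ ((2 * n + 1 : ℕ) : ℝ) * ((2 * n : ℕ) : ℝ) ^ m := by
    exact_mod_cast h4
  have hyR : (1 : ℝ) < ((2 * n : ℕ) : ℝ) := by
    have h2 : (2 : ℕ) ≤ 2 * n := by omega
    exact_mod_cast show (1:ℕ) < 2*n by omega
  have hlog : (n : ℝ) * Real.log 4 ≤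
      Real.log ((2 * n + 1 : ℕ) : ℝ) + m * Real.log ((2 * n : ℕ) : ℝ) := by
    have hl := Real.log_le_log (by positivity) h4R
    rw [Real.log_pow, Real.log_mul (by positivity) (by positivity), Real.log_pow] at hl
    linarith
  have hlog4 : Real.log 4 = 2 * Real.log 2 := by
    rw [show (4:ℝ) = 2 ^ 2 by norm_num, Real.log_pow]
    push_cast; ring
  have hl2 : (0.6931471803 : ℝ) < Real.log 2 := Real.log_two_gt_d9
  have hlog2n1 : Real.log ((2 * n + 1 : ℕ) : ℝ) ≤ Real.log 4 + Real.log ((2 * n : ℕ) : ℝ) := by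
    have h1 : ((2 * n + 1 : ℕ) : ℝ) ≤ 4 * ((2 * n : ℕ) : ℝ) := by
      have hn1 : (1:ℝ) ≤ (n:ℝ) := by exact_mod_cast hn0
      push_cast; nlinarith [hn1]
    calc Real.log ((2 * n + 1 : ℕ) : ℝ) ≤ Real.log (4 * ((2 * n : ℕ) : ℝ)) :=
          Real.log_le_log (by positivity) h1
      _ = Real.log 4 + Real.log ((2 * n : ℕ) : ℝ) := Real.log_mul (by norm_num) (by positivity)
  have hsr : Real.log ((2 * n : ℕ) : ℝ) ≤ 0.2 * n := by
    have h1 : Real.log ((2 * n : ℕ) : ℝ) ≤ 2 * Real.sqrt ((2 * n : ℕ) : ℝ) :=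
      log_le_two_sqrt (le_of_lt hyR)
    have h2 : Real.sqrt ((2 * n : ℕ) : ℝ) ≤ 0.1 * n := by
      rw [Real.sqrt_le_left (by positivity)]
      push_cast
      have hnn : (200 : ℝ) ≤ (n : ℝ) := by exact_mod_cast hn
      nlinarith
    linarith
  have hmlog : (0:ℝ) ≤ m * Real.log ((2 * n : ℕ) : ℝ) := by
    have := Real.log_nonneg (le_of_lt hyR)
    positivity
  have hnn : (200 : ℝ) ≤ (n : ℝ) := by exact_mod_cast hn
  nlinarith [hlog, hlog2n1, hsr, hl2, hlog4, hmlog]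

/-- Lower bound `(2:ℝ)^(m / ⌈1/t⌉) ≤ (1+t)^m` for `0 < t ≤ 1`. -/
lemma two_pow_le {t : ℝ} (ht : 0 < t) (ht1 : t ≤ 1) (m : ℕ) :
    (2 : ℝ) ^ (m / ⌈1/t⌉₊) ≤ (1 + t) ^ m := by
  set j := ⌈1/t⌉₊ with hj
  have hj1 : 1 ≤ j := Nat.one_le_ceil_iff.mpr (by positivity)
  have hjt : 1 ≤ (j : ℝ) * t := by
    have h1 : (1/t : ℝ) ≤ j := Nat.le_ceil _
    calc (1:ℝ) = (1/t) * t := by field_simp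
    _ ≤ j * t := by gcongr
  have h2 : (2 : ℝ) ≤ (1 + t) ^ j := by
    have h3 := one_add_mul_le_pow (a := t) (by linarith) j
    linarith
  calc (2 : ℝ) ^ (m / j) ≤ ((1 + t) ^ j) ^ (m / j) :=
        pow_le_pow_left₀ (by norm_num) h2 _
    _ = (1 + t) ^ (j * (m / j)) := by rw [← pow_mul]
    _ ≤ (1 + t) ^ m := by
        apply pow_le_pow_right₀ (by linarith)
        calc j * (m / j) = m / j * j := by ring
        _ ≤ m := Nat.div_mul_le_self m j

lemma div_ceil_ge {t : ℝ} (ht : 0 < t) (ht1 : t ≤ 1) (m : ℕ) :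
    (m : ℝ) * t / 2 - 1 ≤ ((m / ⌈1/t⌉₊ : ℕ) : ℝ) := by
  set j := ⌈1/t⌉₊ with hj
  have hj1 : 1 ≤ j := Nat.one_le_ceil_iff.mpr (by positivity)
  have hjle : (j : ℝ) ≤ 2 / t := by
    have h1 : (j : ℝ) < 1/t + 1 := Nat.ceil_lt_add_one (by positivity)
    have h2 : (1 : ℝ) ≤ 1/t := by
      rw [le_div_iff₀ ht]; linarith
    calc (j:ℝ) ≤ 1/t + 1/t := by linarith
    _ = 2/t := by ring
  have hmlt : m < j * (m / j) + j := by
    have h5 := Nat.div_add_mod m j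
    have h6 := Nat.mod_lt m (show 0 < j by omega)
    omega
  have hmltR : (m : ℝ) < (j : ℝ) * ((m / j : ℕ) : ℝ) + j := by exact_mod_cast hmlt
  have hjpos : (0:ℝ) < j := by exact_mod_cast hj1
  have hq : (0:ℝ) ≤ ((m / j : ℕ) : ℝ) := by positivity
  have h3 : (m : ℝ) < (2/t) * (((m / j : ℕ) : ℝ) + 1) := by
    calc (m : ℝ) < (j : ℝ) * (((m / j : ℕ) : ℝ) + 1) := by linarith
    _ ≤ (2/t) * (((m / j : ℕ) : ℝ) + 1) :=
        mul_le_mul_of_nonneg_right hjle (by linarith)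
  have h4 : (m : ℝ) * t < 2 * (((m / j : ℕ) : ℝ) + 1) := by
    have h5 := mul_lt_mul_of_pos_right h3 ht
    have h6 : 2/t * (((m / j : ℕ) : ℝ) + 1) * t = 2 * (((m / j : ℕ) : ℝ) + 1) := by
      field_simp
    rw [h6] at h5
    linarith
  linarith

end VolterraAux

open VolterraAux

set_option maxHeartbeats 1000000 in
/-- For `α < 1`, the Volterra operator with symbol
`g(s) = ∑_{n≥2} (n^{-α}/log n) n^{-s}` (the primitive of `ζ(s+α)-1`) is unbounded on `H²`. -/
theorem volterra_zeta_shift_unbounded (α : ℝ) (hα : α < 1) (C : ℝ) (hC : 0 < C) :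
    ∃ a : ℕ → ℂ, (Function.support a).Finite ∧ (∃ n, 1 ≤ n ∧ a n ≠ 0) ∧
      ENNReal.ofReal C * ∑' n : ℕ, (if 1 ≤ n then ENNReal.ofReal (‖a n‖ ^ 2) else 0)
        < ∑' N : ℕ, (if 2 ≤ N then
            ENNReal.ofReal
              (‖∑ d ∈ N.divisors, ((((d : ℝ) ^ (-α) : ℝ)) : ℂ) * a (N / d)‖ ^ 2 /
                Real.log N ^ 2)
          else 0) := by
  classical
  set γ : ℝ := max α 0 with hγdef
  have hγ0 : 0 ≤ γ := le_max_right _ _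
  have hγ1 : γ < 1 := max_lt hα one_pos
  set δ : ℝ := 1 - γ with hδdef
  have hδ0 : 0 < δ := by rw [hδdef]; linarith
  set K : ℝ := (8 / Real.log 2) * (Real.log (C + 1) + 8) with hKdef
  have hl2 : (0.6931471803 : ℝ) < Real.log 2 := Real.log_two_gt_d9
  have hl2' : Real.log 2 < 1 := by
    have := Real.log_two_lt_d9; linarith
  have hlogC1 : 0 ≤ Real.log (C + 1) := Real.log_nonneg (by linarith)
  have hK0 : 0 < K := by
    apply mul_pos
    · positivity
    · linarith
  -- find suitable n
  obtain ⟨n, hn200, hKn, hlogy1⟩ :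
      ∃ n : ℕ, 200 ≤ n ∧ K * Real.log ((2*n : ℕ) : ℝ) ^ 2 ≤ ((2*n : ℕ) : ℝ) ^ δ ∧
        1 ≤ Real.log ((2*n : ℕ) : ℝ) := by
    have hlo : (fun y : ℝ => Real.log y ^ 2) =o[Filter.atTop] fun y : ℝ => y ^ δ := by
      have h1 := isLittleO_log_rpow_atTop (half_pos hδ0)
      have h2 := h1.mul h1
      apply (h2.congr' (Filter.Eventually.of_forall fun y => by ring) ?_)
      filter_upwards [Filter.eventually_gt_atTop (0:ℝ)] with y hy
      rw [← Real.rpow_add hy]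
      norm_num
    have hev : ∀ᶠ y : ℝ in Filter.atTop, K * Real.log y ^ 2 ≤ y ^ δ ∧ 1 ≤ Real.log y := by
      have h3 := hlo.def (c := 1/K) (by positivity)
      filter_upwards [h3, Filter.eventually_ge_atTop (3:ℝ)] with y h3y hy3
      have hy0 : (0:ℝ) < y := by linarith
      constructor
      · have hn1 : ‖Real.log y ^ 2‖ = Real.log y ^ 2 := by
          rw [Real.norm_eq_abs, abs_of_nonneg (by positivity)]
        have hn2 : ‖y ^ δ‖ = y ^ δ := by
          rw [Real.norm_eq_abs, abs_of_nonneg (Real.rpow_nonneg hy0.le _)]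
        rw [hn1, hn2] at h3y
        calc K * Real.log y ^ 2 ≤ K * (1/K * y ^ δ) := by gcongr
        _ = y ^ δ := by field_simp
      · have he3 : Real.exp 1 ≤ 3 := by
          have := Real.exp_one_lt_d9; linarith
        rw [show (1:ℝ) = Real.log (Real.exp 1) by rw [Real.log_exp]]
        exact Real.log_le_log (Real.exp_pos 1) (by linarith)
    have hcomp : Filter.Tendsto (fun n : ℕ => ((2*n : ℕ) : ℝ)) Filter.atTop Filter.atTop := by
      apply Filter.Tendsto.comp tendsto_natCast_atTop_atTop
      exact Filter.tendsto_atTop_mono (fun k : ℕ => by show k ≤ 2*k; omega) Filter.tendsto_id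
    obtain ⟨n, ⟨h1, h2⟩, h3⟩ := ((hcomp.eventually hev).and (Filter.eventually_ge_atTop 200)).exists
    exact ⟨n, h3, h1, h2⟩
  -- basic objects
  set y : ℝ := ((2*n : ℕ) : ℝ) with hydef
  have hy400 : (400 : ℝ) ≤ y := by
    rw [hydef]
    exact_mod_cast show (400:ℕ) ≤ 2*n by omega
  have hy1 : (1:ℝ) < y := by linarith
  have hy0 : (0:ℝ) < y := by linarith
  have hlogy0 : 0 < Real.log y := Real.log_pos hy1
  set S : Finset ℕ := (Finset.range (2 * n + 1)).filter Nat.Prime with hSdef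
  have hSprime : ∀ p ∈ S, p.Prime := fun p hp => (Finset.mem_filter.mp hp).2
  have hSle : ∀ p ∈ S, p ≤ 2*n := by
    intro p hp
    have h := (Finset.mem_filter.mp hp).1
    rw [Finset.mem_range] at h
    omega
  set m : ℕ := S.card with hmdef
  have hcheb : (n : ℝ) ≤ m * Real.log y := chebyshev hn200
  have hm1 : 1 ≤ m := by
    rcases Nat.eq_zero_or_pos m with h | h
    · rw [h] at hcheb
      simp at hcheb
      have : (200:ℝ) ≤ (n:ℝ) := by exact_mod_cast hn200
      linarith
    · exact h
  have hmy : (m : ℝ) ≤ y := by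
    have hsub : S ⊆ Finset.Ico 2 (2*n+1) := by
      intro p hp
      rw [Finset.mem_Ico]
      exact ⟨(hSprime p hp).two_le, by have := hSle p hp; omega⟩
    have h1 : m ≤ 2*n - 1 := by
      have h2 := Finset.card_le_card hsub
      simpa [Nat.card_Ico] using h2
    rw [hydef]
    exact_mod_cast show m ≤ 2*n by omega
  set Q : ℕ := ∏ p ∈ S, p with hQdef
  have hQpos : 0 < Q := Finset.prod_pos fun p hp => (hSprime p hp).pos
  have hQne : Q ≠ 0 := hQpos.ne'
  have h2S : 2 ∈ S := by
    rw [hSdef, Finset.mem_filter, Finset.mem_range]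
    exact ⟨by omega, Nat.prime_two⟩
  have hQ2 : 2 ≤ Q := Nat.le_of_dvd hQpos (Finset.dvd_prod_of_mem _ h2S)
  have hlogQpos : 0 < Real.log (Q:ℝ) := Real.log_pos (by exact_mod_cast hQ2)
  -- t
  set t : ℝ := min (y ^ (-α)) 1 with htdef
  have ht0 : 0 < t := lt_min (Real.rpow_pos_of_pos hy0 _) one_pos
  have ht1 : t ≤ 1 := min_le_right _ _
  have htγ : y ^ (-γ) ≤ t := by
    rcases le_or_gt 0 α with h0 | h0
    · have hγα : γ = α := max_eq_left h0
      apply le_min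
      · rw [hγα]
      · rw [hγα]
        exact Real.rpow_le_one_of_one_le_of_nonpos hy1.le (by linarith)
    · have hγα : γ = 0 := max_eq_right h0.le
      rw [hγα]
      simp only [neg_zero, Real.rpow_zero]
      exact le_min (Real.one_le_rpow hy1.le (by linarith)) le_rfl
  have hpt : ∀ p ∈ S, t ≤ (p : ℝ) ^ (-α) := by
    intro p hp
    have hp2 : (2:ℝ) ≤ (p:ℝ) := by exact_mod_cast (hSprime p hp).two_le
    have hpy : (p:ℝ) ≤ y := by
      rw [hydef]
      exact_mod_cast hSle p hp
    rcases le_or_gt 0 α with h0 | h0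
    · calc t ≤ y ^ (-α) := min_le_left _ _
      _ ≤ (p:ℝ) ^ (-α) := by
          rw [Real.rpow_neg hy0.le, Real.rpow_neg (by linarith)]
          exact inv_anti₀ (Real.rpow_pos_of_pos (by linarith) _)
            (Real.rpow_le_rpow (by linarith) hpy h0)
    · calc t ≤ 1 := ht1
      _ ≤ (p:ℝ) ^ (-α) := Real.one_le_rpow (by linarith) (by linarith)
  set j : ℕ := ⌈1/t⌉₊ with hjdef
  set q : ℕ := m / j with hqdef
  -- product lower bound
  have hprod : (2:ℝ)^m * (2:ℝ)^q ≤ HAF α Q := by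
    have hHQ : HAF α Q = ∏ p ∈ S, (1 + (1 + (p : ℝ) ^ (-α)) ^ 2) := by
      rw [hQdef, (HAF_mult α).map_prod_of_prime S hSprime]
      exact Finset.prod_congr rfl fun p hp => HAF_prime (hSprime p hp)
    rw [hHQ]
    calc (2:ℝ)^m * (2:ℝ)^q
        ≤ (2:ℝ)^m * (1+t)^m :=
          mul_le_mul_of_nonneg_left (two_pow_le ht0 ht1 m) (by positivity)
      _ = ∏ _p ∈ S, (2 * (1+t)) := by
          rw [Finset.prod_const, mul_pow, hmdef]
      _ ≤ ∏ p ∈ S, (1 + (1 + (p : ℝ) ^ (-α)) ^ 2) := by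
          apply Finset.prod_le_prod
          · intro p _; positivity
          · intro p hp
            have h1 := hpt p hp
            have h2 : 0 ≤ (p:ℝ) ^ (-α) := Real.rpow_nonneg (by positivity) _
            nlinarith [sq_nonneg (1 - (p:ℝ)^(-α))]
  -- 2^q is big
  have hqbig : C * (y * Real.log y)^2 + 1 ≤ (2:ℝ)^q := by
    have hq1 : (m : ℝ) * t / 2 - 1 ≤ (q : ℝ) := div_ceil_ge ht0 ht1 m
    have hmt : y ^ δ / (2 * Real.log y) ≤ (m:ℝ) * t := by
      have hm2 : y / (2 * Real.log y) ≤ (m:ℝ) := by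
        rw [div_le_iff₀ (by positivity)]
        calc y = 2 * (n:ℝ) := by rw [hydef]; push_cast; ring
        _ ≤ 2 * ((m:ℝ) * Real.log y) := by linarith
        _ = (m:ℝ) * (2 * Real.log y) := by ring
      calc y ^ δ / (2 * Real.log y) = (y / (2 * Real.log y)) * y ^ (-γ) := by
            rw [hδdef, show (1:ℝ) - γ = 1 + (-γ) by ring, Real.rpow_add hy0,
              Real.rpow_one]
            ring
        _ ≤ (m:ℝ) * t :=
            mul_le_mul hm2 htγ (Real.rpow_nonneg hy0.le _) (by positivity)
    have hq2 : y ^ δ / (4 * Real.log y) - 1 ≤ (q : ℝ) := by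
      have heq : (y ^ δ / (2 * Real.log y)) / 2 = y ^ δ / (4 * Real.log y) := by
        rw [div_div]
        congr 1
        ring
      rw [← heq]
      linarith
    -- log of the target
    have hBpos : (0:ℝ) < C * (y * Real.log y)^2 + 1 := by positivity
    have hB4 : C * (y * Real.log y)^2 + 1 ≤ (C+1) * y^4 := by
      have hly : Real.log y ≤ y := by
        have := Real.log_le_sub_one_of_pos hy0
        linarith
      have h1 : (y * Real.log y)^2 ≤ y^4 := by
        have h2 : y * Real.log y ≤ y * y := by gcongr
        have h3 : 0 ≤ y * Real.log y := by positivity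
        calc (y * Real.log y)^2 ≤ (y*y)^2 := pow_le_pow_left₀ h3 h2 2
        _ = y^4 := by ring
      have h4 : (1:ℝ) ≤ y^4 := one_le_pow₀ hy1.le
      nlinarith
    have hlogB : Real.log ((C+1) * y^4) = Real.log (C+1) + 4 * Real.log y := by
      rw [Real.log_mul (by positivity) (by positivity), Real.log_pow]
      push_cast; ring
    -- key exponent inequality
    have hexp : Real.log (C+1) + 4 * Real.log y ≤ (q:ℝ) * Real.log 2 := by
      have hKl : K * Real.log y / 4 ≤ y ^ δ / (4 * Real.log y) := by
        rw [div_le_div_iff₀ (by norm_num) (by positivity)]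
        calc K * Real.log y * (4 * Real.log y) = K * Real.log y ^2 * 4 := by ring
        _ ≤ y ^ δ * 4 := by nlinarith
      have hKlog2 : K * Real.log 2 = 8 * (Real.log (C+1) + 8) := by
        rw [hKdef]
        field_simp
      have h5 : (y ^ δ / (4 * Real.log y) - 1) * Real.log 2 ≤ (q:ℝ) * Real.log 2 := by
        gcongr <;> linarith
      have h6 : (K * Real.log y / 4 - 1) * Real.log 2 ≤
          (y ^ δ / (4 * Real.log y) - 1) * Real.log 2 := by
        gcongr <;> linarith
      have h7 : (K * Real.log y / 4 - 1) * Real.log 2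
          = 2 * (Real.log (C+1) + 8) * Real.log y - Real.log 2 := by
        have : K * Real.log y / 4 * Real.log 2 = K * Real.log 2 * Real.log y / 4 := by ring
        rw [sub_mul, this, hKlog2]
        ring
      have h8 : Real.log (C+1) + 4 * Real.log y ≤
          2 * (Real.log (C+1) + 8) * Real.log y - Real.log 2 := by
        nlinarith
      linarith
    calc C * (y * Real.log y)^2 + 1 ≤ (C+1) * y^4 := hB4
    _ ≤ (2:ℝ) ^ ((q:ℕ):ℝ) := by
        rw [Real.le_rpow_iff_log_le (by positivity) (by norm_num)]
        rw [hlogB]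
        exact hexp
    _ = (2:ℝ) ^ q := Real.rpow_natCast 2 q
  -- log Q ≤ m log y
  have hlogQ : Real.log (Q:ℝ) ≤ m * Real.log y := by
    have h1 : ((Q:ℕ):ℝ) = ∏ p ∈ S, (p:ℝ) := by
      rw [hQdef]; push_cast; rfl
    rw [h1, Real.log_prod (fun p hp => by
      have := (hSprime p hp).pos
      positivity)]
    calc ∑ p ∈ S, Real.log (p:ℝ) ≤ ∑ _p ∈ S, Real.log y := by
          apply Finset.sum_le_sum
          intro p hp
          apply Real.log_le_log
          · exact_mod_cast (hSprime p hp).pos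
          · rw [hydef]; exact_mod_cast hSle p hp
      _ = m * Real.log y := by rw [Finset.sum_const, hmdef]; ring
  -- the main real inequality
  set dQ : ℕ := Q.divisors.card with hdQdef
  have hdQ : (dQ : ℝ) = 2^m := by
    have h1 : (ArithmeticFunction.sigma 0) Q = dQ := by
      rw [hdQdef, ArithmeticFunction.sigma_zero_apply]
    have h2 : (ArithmeticFunction.sigma 0) Q = 2^m := by
      rw [hQdef, (isMultiplicative_sigma (k := 0)).map_prod_of_prime S hSprime]
      rw [show (2:ℕ)^m = ∏ _p ∈ S, 2 by rw [Finset.prod_const, hmdef]]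
      apply Finset.prod_congr rfl
      intro p hp
      rw [ArithmeticFunction.sigma_zero_apply, (hSprime p hp).divisors]
      exact Finset.card_pair (hSprime p hp).one_lt.ne
    rw [← h1, h2]
    push_cast; ring
  have hmain : C * dQ * Real.log (Q:ℝ) ^ 2 + 1 ≤ HAF α Q - 1 := by
    have h2m2 : (2:ℝ) ≤ 2^m := by
      calc (2:ℝ) = 2^1 := (pow_one 2).symm
      _ ≤ 2^m := pow_le_pow_right₀ (by norm_num) hm1
    have hlogQsq : Real.log (Q:ℝ)^2 ≤ (y * Real.log y)^2 := by
      have h1 : Real.log (Q:ℝ) ≤ y * Real.log y := by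
        calc Real.log (Q:ℝ) ≤ m * Real.log y := hlogQ
        _ ≤ y * Real.log y := by gcongr
      nlinarith
    have h3 : (2:ℝ)^m * (C * (y * Real.log y)^2 + 1) ≤ 2^m * (2:ℝ)^q := by
      gcongr <;> positivity
    have h4 : C * dQ * Real.log (Q:ℝ)^2 + 2^m ≤ (2:ℝ)^m * (C * (y * Real.log y)^2 + 1) := by
      rw [hdQ]
      have h5 : C * 2^m * Real.log (Q:ℝ)^2 ≤ C * 2^m * (y * Real.log y)^2 := by
        gcongr
      have h6 : (2:ℝ)^m * (C * (y * Real.log y)^2 + 1) = C * 2^m * (y * Real.log y)^2 + 2^m := by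
        ring
      linarith
    linarith [hprod, h3, h4, h2m2]
  -- now build the witness
  set a : ℕ → ℂ := fun k => if k ∈ Q.divisors then (1:ℂ) else 0 with hadef
  refine ⟨a, ?_, ⟨1, le_refl 1, ?_⟩, ?_⟩
  · apply Set.Finite.subset Q.divisors.finite_toSet
    intro x hx
    rw [Function.mem_support] at hx
    by_contra hmem
    exact hx (by rw [hadef]; simp only; rw [if_neg (by simpa using hmem)])
  · rw [hadef]
    simp only
    rw [if_pos (Nat.one_mem_divisors.mpr hQne)]
    exact one_ne_zero
  -- the inequality
  · -- LHS value
    have hL : (∑' k : ℕ, (if 1 ≤ k then ENNReal.ofReal (‖a k‖ ^ 2) else 0)) = (dQ : ℝ≥0∞) := by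
      rw [tsum_eq_sum (s := Q.divisors) ?_]
      · rw [show (dQ : ℝ≥0∞) = ∑ _k ∈ Q.divisors, 1 by
          rw [Finset.sum_const, hdQdef]; simp]
        apply Finset.sum_congr rfl
        intro k hk
        have hk1 : 1 ≤ k := Nat.pos_of_mem_divisors hk
        rw [if_pos hk1, hadef]
        simp only
        rw [if_pos hk]
        simp
      · intro k hk
        have : a k = 0 := by rw [hadef]; simp only; rw [if_neg hk]
        rw [this]
        simp
    rw [hL]
    -- RHS lower bound
    set D2 : Finset ℕ := Q.divisors.erase 1 with hD2def
    have hterm : ∀ N ∈ D2,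
        (if 2 ≤ N then
          ENNReal.ofReal
            (‖∑ d ∈ N.divisors, ((((d : ℝ) ^ (-α) : ℝ)) : ℂ) * a (N / d)‖ ^ 2 /
              Real.log N ^ 2) else 0)
        = ENNReal.ofReal ((sigAF α N)^2 / Real.log N ^ 2) := by
      intro N hN
      have hNdvd : N ∣ Q := (Nat.mem_divisors.mp (Finset.mem_of_mem_erase hN)).1
      have hNne : N ≠ 1 := Finset.ne_of_mem_erase hN
      have hNpos : 0 < N := Nat.pos_of_mem_divisors (Finset.mem_of_mem_erase hN)
      have hN2 : 2 ≤ N := by omega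
      rw [if_pos hN2]
      congr 1
      have hsum : ∑ d ∈ N.divisors, ((((d : ℝ) ^ (-α) : ℝ)) : ℂ) * a (N / d)
          = ((sigAF α N : ℝ) : ℂ) := by
        rw [sigAF_apply hNpos.ne']
        push_cast
        apply Finset.sum_congr rfl
        intro d hd
        have hddvd : d ∣ N := (Nat.mem_divisors.mp hd).1
        have hNd : N / d ∣ Q := dvd_trans (Nat.div_dvd_of_dvd hddvd) hNdvd
        have : a (N / d) = 1 := by
          rw [hadef]; simp only
          rw [if_pos (Nat.mem_divisors.mpr ⟨hNd, hQne⟩)]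
        rw [this, mul_one]
      rw [hsum]
      have hsig_nonneg : 0 ≤ sigAF α N := by
        rw [sigAF_apply hNpos.ne']
        apply Finset.sum_nonneg
        intro d hd
        positivity
      rw [Complex.norm_real, Real.norm_eq_abs, abs_of_nonneg hsig_nonneg]
    have hRlow : ENNReal.ofReal ((HAF α Q - 1) / Real.log (Q:ℝ) ^ 2)
        ≤ ∑' N : ℕ, (if 2 ≤ N then
            ENNReal.ofReal
              (‖∑ d ∈ N.divisors, ((((d : ℝ) ^ (-α) : ℝ)) : ℂ) * a (N / d)‖ ^ 2 /
                Real.log N ^ 2)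
          else 0) := by
      have hHsum : HAF α Q - 1 = ∑ N ∈ D2, (sigAF α N)^2 := by
        have h1 : HAF α Q = ∑ N ∈ Q.divisors, (sigAF α N)^2 := HAF_apply Q
        have h2 : ∑ N ∈ Q.divisors, (sigAF α N)^2
            = (sigAF α 1)^2 + ∑ N ∈ D2, (sigAF α N)^2 := by
          rw [hD2def]
          exact (Finset.add_sum_erase _ _ (Nat.one_mem_divisors.mpr hQne)).symm
        have h3 : sigAF α 1 = 1 := (sigAF_mult α).map_one
        rw [h1, h2, h3]
        ring
      calc ENNReal.ofReal ((HAF α Q - 1) / Real.log (Q:ℝ) ^ 2)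
          = ∑ N ∈ D2, ENNReal.ofReal ((sigAF α N)^2 / Real.log (Q:ℝ) ^ 2) := by
            rw [← ENNReal.ofReal_sum_of_nonneg (fun N _ => by positivity)]
            rw [hHsum, Finset.sum_div]
        _ ≤ ∑ N ∈ D2, ENNReal.ofReal ((sigAF α N)^2 / Real.log N ^ 2) := by
            apply Finset.sum_le_sum
            intro N hN
            apply ENNReal.ofReal_le_ofReal
            have hNdvd : N ∣ Q := (Nat.mem_divisors.mp (Finset.mem_of_mem_erase hN)).1
            have hNne : N ≠ 1 := Finset.ne_of_mem_erase hN
            have hNpos : 0 < N := Nat.pos_of_mem_divisors (Finset.mem_of_mem_erase hN)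
            have hN2 : 2 ≤ N := by omega
            have hlogN : 0 < Real.log (N:ℝ) := Real.log_pos (by exact_mod_cast hN2)
            have hNQ : Real.log (N:ℝ) ≤ Real.log (Q:ℝ) := by
              apply Real.log_le_log (by positivity)
              exact_mod_cast Nat.le_of_dvd hQpos hNdvd
            apply div_le_div_of_nonneg_left (by positivity) (by positivity)
            nlinarith
        _ = ∑ N ∈ D2, (if 2 ≤ N then
              ENNReal.ofReal
                (‖∑ d ∈ N.divisors, ((((d : ℝ) ^ (-α) : ℝ)) : ℂ) * a (N / d)‖ ^ 2 /
                  Real.log N ^ 2) else 0) := by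
            exact (Finset.sum_congr rfl hterm).symm
        _ ≤ ∑' N : ℕ, (if 2 ≤ N then
              ENNReal.ofReal
                (‖∑ d ∈ N.divisors, ((((d : ℝ) ^ (-α) : ℝ)) : ℂ) * a (N / d)‖ ^ 2 /
                  Real.log N ^ 2) else 0) := ENNReal.sum_le_tsum D2
    -- conclude
    have hstrict : ENNReal.ofReal C * (dQ : ℝ≥0∞)
        < ENNReal.ofReal ((HAF α Q - 1) / Real.log (Q:ℝ) ^ 2) := by
      have h1 : ENNReal.ofReal C * (dQ : ℝ≥0∞) = ENNReal.ofReal (C * dQ) := by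
        rw [ENNReal.ofReal_mul hC.le, ENNReal.ofReal_natCast]
      have hdQpos : (0:ℝ) < (dQ:ℝ) := by rw [hdQ]; positivity
      have hr2 : C * (dQ:ℝ) < (HAF α Q - 1) / Real.log (Q:ℝ) ^ 2 := by
        rw [lt_div_iff₀ (pow_pos hlogQpos 2)]
        linarith [hmain]
      rw [h1]
      exact (ENNReal.ofReal_lt_ofReal_iff ((mul_pos hC hdQpos).trans hr2)).mpr hr2
    exact lt_of_lt_of_le hstrict hRlow
end

section
/- For every sequence (d_n)_{n≥2} of nonnegative real numbers, (3/4) · ∑_{k=0}^∞ 4^{-k} ∑_{2 ≤ n ≤ e^{2^k}} d_n ≤ ∑_{n=2}^∞ d_n/(log n)² ≤ 4 · ∑_{k=0}^∞ 4^{-k} ∑_{2 ≤ n ≤ e^{2^k}} d_n. -/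
open scoped ENNReal

lemma geom_tail (m : ℕ) :
    (∑' k : ℕ, if m ≤ k then (4 : ℝ≥0∞)⁻¹ ^ k else 0)
      = (4 : ℝ≥0∞)⁻¹ ^ m * (1 - 4⁻¹)⁻¹ := by
  have hinj : Function.Injective (fun j : ℕ => j + m) := add_left_injective m
  rw [← Function.Injective.tsum_eq hinj (f := fun k => if m ≤ k then (4 : ℝ≥0∞)⁻¹ ^ k else 0) ?_]
  · have : ∀ j : ℕ, (if m ≤ j + m then (4 : ℝ≥0∞)⁻¹ ^ (j + m) else 0)
        = (4 : ℝ≥0∞)⁻¹ ^ m * (4 : ℝ≥0∞)⁻¹ ^ j := by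
      intro j
      rw [if_pos (Nat.le_add_left m j), pow_add, mul_comm]
    rw [tsum_congr this, ENNReal.tsum_mul_left, ENNReal.tsum_geometric]
  · intro x hx
    have hmx : m ≤ x := by
      by_contra h
      exact hx (by simp [h])
    exact ⟨x - m, by simpa using Nat.sub_add_cancel hmx⟩

lemma one_sub_quarter : (1 : ℝ≥0∞) - 4⁻¹ = 3 / 4 := by
  rw [ENNReal.sub_eq_of_eq_add (by simp)]
  rw [← one_div, ENNReal.div_add_div_same]
  norm_num
  rw [ENNReal.div_self] <;> norm_num

lemma quarter_cancel : (3/4 : ℝ≥0∞) * ((1:ℝ≥0∞) - 4⁻¹)⁻¹ = 1 := by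
  rw [one_sub_quarter, ENNReal.mul_inv_cancel (by norm_num) (by simp [ENNReal.div_eq_top])]

lemma key_bounds (L : ℝ) (hL : 1/2 ≤ L) :
    (3/4 : ℝ≥0∞) * (∑' k : ℕ, if L ≤ 2 ^ k then (4 : ℝ≥0∞)⁻¹ ^ k else 0)
        ≤ (ENNReal.ofReal (L ^ 2))⁻¹
    ∧ (ENNReal.ofReal (L ^ 2))⁻¹
        ≤ 4 * ∑' k : ℕ, if L ≤ 2 ^ k then (4 : ℝ≥0∞)⁻¹ ^ k else 0 := by
  have hL0 : 0 < L := by linarith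
  have hex : ∃ k : ℕ, L ≤ (2:ℝ) ^ k := by
    obtain ⟨n, hn⟩ := pow_unbounded_of_one_lt L (by norm_num : (1:ℝ) < 2)
    exact ⟨n, hn.le⟩
  set m := Nat.find hex with hm
  set c := ∑' k : ℕ, if L ≤ (2:ℝ) ^ k then (4 : ℝ≥0∞)⁻¹ ^ k else 0 with hc
  have h1 : L ≤ (2:ℝ) ^ m := Nat.find_spec hex
  have h2 : (2:ℝ) ^ m ≤ 2 * L := by
    rcases Nat.eq_zero_or_pos m with h | h
    · rw [h]; simpa using by linarith
    · have hlt : ¬ (L ≤ (2:ℝ) ^ (m - 1)) := Nat.find_min hex (by omega)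
      push_neg at hlt
      calc (2:ℝ) ^ m = 2 * 2 ^ (m - 1) := by
            rw [← pow_succ']; congr 1; omega
        _ ≤ 2 * L := by nlinarith
  have h4m : ((2:ℝ) ^ m) ^ 2 = (4:ℝ) ^ m := by
    rw [show (4:ℝ) = 2 ^ 2 by norm_num, ← pow_mul, ← pow_mul, mul_comm]
  have h1sq : L ^ 2 ≤ (4:ℝ) ^ m := by nlinarith
  have h2sq : (4:ℝ) ^ m ≤ 4 * L ^ 2 := by nlinarith
  have hofr : ((4:ℝ≥0∞) ^ m) = ENNReal.ofReal ((4:ℝ) ^ m) := by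
    rw [ENNReal.ofReal_pow (by norm_num)]
    norm_num
  have hc_le : c ≤ (4 : ℝ≥0∞)⁻¹ ^ m * (1 - 4⁻¹)⁻¹ := by
    rw [← geom_tail m]
    apply ENNReal.tsum_le_tsum
    intro k
    split_ifs with hk hk2
    · exact le_rfl
    · exact absurd (Nat.find_min' hex hk) hk2
    · exact zero_le
    · exact le_rfl
  have hc_ge : (4 : ℝ≥0∞)⁻¹ ^ m ≤ c := by
    have := ENNReal.le_tsum (f := fun k : ℕ => if L ≤ (2:ℝ) ^ k then (4 : ℝ≥0∞)⁻¹ ^ k else 0) m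
    simpa [h1] using this
  constructor
  · calc (3/4 : ℝ≥0∞) * c ≤ (3/4 : ℝ≥0∞) * ((4 : ℝ≥0∞)⁻¹ ^ m * (1 - 4⁻¹)⁻¹) :=
        mul_le_mul_right hc_le _
      _ = (3/4 : ℝ≥0∞) * ((1:ℝ≥0∞) - 4⁻¹)⁻¹ * (4 : ℝ≥0∞)⁻¹ ^ m := by ring
      _ = (4 : ℝ≥0∞)⁻¹ ^ m := by rw [quarter_cancel, one_mul]
      _ = ((4 : ℝ≥0∞) ^ m)⁻¹ := by rw [ENNReal.inv_pow]
      _ ≤ (ENNReal.ofReal (L ^ 2))⁻¹ := by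
          apply ENNReal.inv_le_inv'
          rw [hofr]
          exact ENNReal.ofReal_le_ofReal h1sq
  · have key4 : (4:ℝ≥0∞) * ((4:ℝ≥0∞) * ENNReal.ofReal (L ^ 2))⁻¹
        = (ENNReal.ofReal (L ^ 2))⁻¹ := by
      rw [ENNReal.mul_inv (Or.inl (by norm_num)) (Or.inl (by norm_num)), ← mul_assoc,
        ENNReal.mul_inv_cancel (by norm_num) (by norm_num), one_mul]
    calc (ENNReal.ofReal (L ^ 2))⁻¹ = 4 * ((4:ℝ≥0∞) * ENNReal.ofReal (L ^ 2))⁻¹ := key4.symm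
      _ ≤ 4 * ((4 : ℝ≥0∞) ^ m)⁻¹ := by
          apply mul_le_mul_right
          apply ENNReal.inv_le_inv'
          rw [hofr]
          calc ENNReal.ofReal ((4:ℝ) ^ m) ≤ ENNReal.ofReal (4 * L ^ 2) :=
              ENNReal.ofReal_le_ofReal h2sq
            _ = 4 * ENNReal.ofReal (L ^ 2) := by
              rw [ENNReal.ofReal_mul (by norm_num)]; norm_num
      _ = 4 * (4 : ℝ≥0∞)⁻¹ ^ m := by rw [ENNReal.inv_pow]
      _ ≤ 4 * c := mul_le_mul_right hc_ge _


/-- the dyadic decomposition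
`(3/4) ∑_k 4^{-k} ∑_{2 ≤ n ≤ e^{2^k}} d_n ≤ ∑_{n≥2} d_n/(log n)² ≤ 4 ∑_k 4^{-k} ∑_{2 ≤ n ≤ e^{2^k}} d_n`
for every sequence of nonnegative reals `(d_n)_{n≥2}` (stated in `ℝ≥0∞` so that both sides are
always defined, possibly infinite). -/
theorem dyadic_decomposition (d : ℕ → ℝ) (hd : ∀ n, 0 ≤ d n) :
    (3 / 4 : ℝ≥0∞) * (∑' k : ℕ, (4 : ℝ≥0∞)⁻¹ ^ k *
        ∑ n ∈ Finset.Icc 2 ⌊Real.exp ((2 : ℝ) ^ k)⌋₊, ENNReal.ofReal (d n))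
      ≤ (∑' n : ℕ, if 2 ≤ n then ENNReal.ofReal (d n) / ENNReal.ofReal (Real.log n ^ 2) else 0)
    ∧ (∑' n : ℕ, if 2 ≤ n then ENNReal.ofReal (d n) / ENNReal.ofReal (Real.log n ^ 2) else 0)
      ≤ 4 * ∑' k : ℕ, (4 : ℝ≥0∞)⁻¹ ^ k *
        ∑ n ∈ Finset.Icc 2 ⌊Real.exp ((2 : ℝ) ^ k)⌋₊, ENNReal.ofReal (d n) := by
  set D : ℕ → ℝ≥0∞ := fun n => ENNReal.ofReal (d n) with hD
  set F : ℕ → ℕ → ℝ≥0∞ := fun k n =>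
    if 2 ≤ n ∧ Real.log n ≤ (2:ℝ) ^ k then (4 : ℝ≥0∞)⁻¹ ^ k * D n else 0 with hF
  have hterm : ∀ k : ℕ,
      (4 : ℝ≥0∞)⁻¹ ^ k * ∑ n ∈ Finset.Icc 2 ⌊Real.exp ((2:ℝ) ^ k)⌋₊, D n
        = ∑' n : ℕ, F k n := by
    intro k
    rw [tsum_eq_sum (s := Finset.Icc 2 ⌊Real.exp ((2:ℝ) ^ k)⌋₊) ?_, Finset.mul_sum]
    · apply Finset.sum_congr rfl
      intro n hn
      rw [Finset.mem_Icc] at hn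
      have hn0 : (0:ℝ) < n := by
        have : (2:ℝ) ≤ n := by exact_mod_cast hn.1
        linarith
      have hle : (n:ℝ) ≤ Real.exp ((2:ℝ) ^ k) :=
        le_trans (by exact_mod_cast Nat.cast_le.mpr hn.2) (Nat.floor_le (Real.exp_pos _).le)
      simp only [hF]
      rw [if_pos ⟨hn.1, (Real.log_le_iff_le_exp hn0).mpr hle⟩]
    · intro n hn
      simp only [hF]
      rw [if_neg]
      rintro ⟨h2n, hlog⟩
      apply hn
      rw [Finset.mem_Icc]
      have hn0 : (0:ℝ) < n := by
        have : (2:ℝ) ≤ n := by exact_mod_cast h2n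
        linarith
      exact ⟨h2n, Nat.le_floor ((Real.log_le_iff_le_exp hn0).mp hlog)⟩
  have hswap : (∑' k : ℕ, (4 : ℝ≥0∞)⁻¹ ^ k *
      ∑ n ∈ Finset.Icc 2 ⌊Real.exp ((2:ℝ) ^ k)⌋₊, D n) = ∑' n : ℕ, ∑' k : ℕ, F k n := by
    rw [tsum_congr hterm, ENNReal.tsum_comm]
  have hinner : ∀ n : ℕ, (∑' k : ℕ, F k n)
      = if 2 ≤ n then
          (∑' k : ℕ, if Real.log n ≤ (2:ℝ) ^ k then (4 : ℝ≥0∞)⁻¹ ^ k else 0) * D n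
        else 0 := by
    intro n
    by_cases h2 : 2 ≤ n
    · rw [if_pos h2, ← ENNReal.tsum_mul_right]
      apply tsum_congr
      intro k
      simp only [hF]
      by_cases hg : Real.log n ≤ (2:ℝ) ^ k
      · rw [if_pos ⟨h2, hg⟩, if_pos hg]
      · rw [if_neg (fun h => hg h.2), if_neg hg, zero_mul]
    · rw [if_neg h2]
      have : ∀ k : ℕ, F k n = 0 := by
        intro k
        simp only [hF]
        rw [if_neg (fun h => h2 h.1)]
      rw [tsum_congr this, tsum_zero]
  have hLhalf : ∀ n : ℕ, 2 ≤ n → (1/2 : ℝ) ≤ Real.log n := by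
    intro n h2
    have h1 : Real.log 2 ≤ Real.log n :=
      Real.log_le_log (by norm_num) (by exact_mod_cast h2)
    have := Real.log_two_gt_d9
    linarith
  constructor
  · rw [hswap, ← ENNReal.tsum_mul_left]
    apply ENNReal.tsum_le_tsum
    intro n
    rw [hinner n]
    by_cases h2 : 2 ≤ n
    · rw [if_pos h2, if_pos h2, div_eq_mul_inv]
      have hkey := (key_bounds (Real.log n) (hLhalf n h2)).1
      calc (3/4 : ℝ≥0∞) *
          ((∑' k : ℕ, if Real.log n ≤ (2:ℝ) ^ k then (4 : ℝ≥0∞)⁻¹ ^ k else 0) * D n)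
          = ((3/4 : ℝ≥0∞) *
            (∑' k : ℕ, if Real.log n ≤ (2:ℝ) ^ k then (4 : ℝ≥0∞)⁻¹ ^ k else 0)) * D n :=
            (mul_assoc _ _ _).symm
        _ ≤ (ENNReal.ofReal (Real.log n ^ 2))⁻¹ * D n := mul_le_mul_left hkey _
        _ = D n * (ENNReal.ofReal (Real.log n ^ 2))⁻¹ := mul_comm _ _
    · rw [if_neg h2, if_neg h2, mul_zero]
  · rw [hswap, ← ENNReal.tsum_mul_left]
    apply ENNReal.tsum_le_tsum
    intro n
    rw [hinner n]
    by_cases h2 : 2 ≤ n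
    · rw [if_pos h2, if_pos h2, div_eq_mul_inv]
      have hkey := (key_bounds (Real.log n) (hLhalf n h2)).2
      calc D n * (ENNReal.ofReal (Real.log n ^ 2))⁻¹
          = (ENNReal.ofReal (Real.log n ^ 2))⁻¹ * D n := mul_comm _ _
        _ ≤ (4 * ∑' k : ℕ, if Real.log n ≤ (2:ℝ) ^ k then (4 : ℝ≥0∞)⁻¹ ^ k else 0) * D n :=
            mul_le_mul_left hkey _
        _ = 4 * ((∑' k : ℕ, if Real.log n ≤ (2:ℝ) ^ k then (4 : ℝ≥0∞)⁻¹ ^ k else 0) * D n) :=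
            mul_assoc _ _ _
    · rw [if_neg h2, if_neg h2, mul_zero]
end

section
/- Let ψ : ℕ_{≥1} → [0,∞) be an arbitrary nonnegative arithmetic function, φ : ℕ_{≥1} → (0,∞) an arbitrary positive arithmetic function, x ≥ 1 a real number, and (a_k)_{k≥1} a complex sequence. Then ∑_{n ≤ x} |∑_{d∣n} ψ(d) a_{n/d}|² ≤ (∑_{n ≤ x} φ(n)ψ(n)) · (max_{m ≤ x} ∑_{d∣m} ψ(d)/φ(d)) · ∑_{k ≤ x} |a_k|². -/
open Finset

private lemma tmb_cauchy (ψ φ : ℕ → ℝ) (hψ : ∀ n, 0 ≤ ψ n) (hφ : ∀ n, 0 < φ n)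
    (a : ℕ → ℂ) (n : ℕ) :
    (∑ d ∈ n.divisors, ψ d * ‖a (n / d)‖) ^ 2
      ≤ (∑ d ∈ n.divisors, ψ d / φ d) *
        (∑ d ∈ n.divisors, ψ d * φ d * ‖a (n / d)‖ ^ 2) := by
  have h := Finset.sum_mul_sq_le_sq_mul_sq n.divisors
      (fun d => Real.sqrt (ψ d / φ d)) (fun d => Real.sqrt (ψ d * φ d) * ‖a (n / d)‖)
  have e1 : ∀ d, Real.sqrt (ψ d / φ d) * (Real.sqrt (ψ d * φ d) * ‖a (n / d)‖)
      = ψ d * ‖a (n / d)‖ := by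
    intro d
    have hdiv : (0:ℝ) ≤ ψ d / φ d := div_nonneg (hψ d) (hφ d).le
    rw [← mul_assoc, ← Real.sqrt_mul hdiv]
    have hphi : φ d ≠ 0 := (hφ d).ne'
    have : ψ d / φ d * (ψ d * φ d) = ψ d ^ 2 := by
      field_simp
    rw [this, Real.sqrt_sq (hψ d)]
  have e2 : ∀ d, Real.sqrt (ψ d / φ d) ^ 2 = ψ d / φ d := fun d =>
    Real.sq_sqrt (div_nonneg (hψ d) (hφ d).le)
  have e3 : ∀ d, (Real.sqrt (ψ d * φ d) * ‖a (n / d)‖) ^ 2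
      = ψ d * φ d * ‖a (n / d)‖ ^ 2 := by
    intro d
    rw [mul_pow, Real.sq_sqrt (mul_nonneg (hψ d) (hφ d).le)]
  calc (∑ d ∈ n.divisors, ψ d * ‖a (n / d)‖) ^ 2
      = (∑ d ∈ n.divisors,
          Real.sqrt (ψ d / φ d) * (Real.sqrt (ψ d * φ d) * ‖a (n / d)‖)) ^ 2 := by
        rw [Finset.sum_congr rfl fun d _ => (e1 d).symm]
    _ ≤ (∑ d ∈ n.divisors, Real.sqrt (ψ d / φ d) ^ 2) *
        (∑ d ∈ n.divisors, (Real.sqrt (ψ d * φ d) * ‖a (n / d)‖) ^ 2) := h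
    _ = _ := by
        rw [Finset.sum_congr rfl fun d _ => e2 d, Finset.sum_congr rfl fun d _ => e3 d]

private lemma tmb_swap (ψ φ : ℕ → ℝ) (hψ : ∀ n, 0 ≤ ψ n) (hφ : ∀ n, 0 < φ n)
    (a : ℕ → ℂ) (N : ℕ) :
    ∑ n ∈ Icc 1 N, ∑ d ∈ n.divisors, ψ d * φ d * ‖a (n / d)‖ ^ 2
      ≤ (∑ n ∈ Icc 1 N, φ n * ψ n) * ∑ k ∈ Icc 1 N, ‖a k‖ ^ 2 := by
  have hterm : ∀ p : ℕ × ℕ, (0:ℝ) ≤ ψ p.1 * φ p.1 * ‖a p.2‖ ^ 2 := fun p =>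
    mul_nonneg (mul_nonneg (hψ p.1) (hφ p.1).le) (by positivity)
  have hrw : ∀ n, ∑ d ∈ n.divisors, ψ d * φ d * ‖a (n / d)‖ ^ 2
      = ∑ p ∈ n.divisorsAntidiagonal, ψ p.1 * φ p.1 * ‖a p.2‖ ^ 2 :=
    fun n => (Nat.sum_divisorsAntidiagonal (fun d k => ψ d * φ d * ‖a k‖ ^ 2)).symm
  have hdisj : ((Icc 1 N : Finset ℕ) : Set ℕ).PairwiseDisjoint Nat.divisorsAntidiagonal := by
    intro m _ n _ hmn
    simp only [Finset.disjoint_left]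
    intro p hpm hpn
    rw [Nat.mem_divisorsAntidiagonal] at hpm hpn
    exact hmn (hpm.1.symm.trans hpn.1)
  calc ∑ n ∈ Icc 1 N, ∑ d ∈ n.divisors, ψ d * φ d * ‖a (n / d)‖ ^ 2
      = ∑ p ∈ (Icc 1 N).biUnion Nat.divisorsAntidiagonal,
          ψ p.1 * φ p.1 * ‖a p.2‖ ^ 2 := by
        rw [Finset.sum_biUnion hdisj]
        exact Finset.sum_congr rfl fun n _ => hrw n
    _ ≤ ∑ p ∈ Icc 1 N ×ˢ Icc 1 N, ψ p.1 * φ p.1 * ‖a p.2‖ ^ 2 := by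
        apply Finset.sum_le_sum_of_subset_of_nonneg
        · intro p hp
          simp only [Finset.mem_biUnion] at hp
          obtain ⟨n, hn, hpn⟩ := hp
          rw [Nat.mem_divisorsAntidiagonal] at hpn
          rw [Finset.mem_Icc] at hn
          have h1 : 1 ≤ p.1 := Nat.one_le_iff_ne_zero.mpr (by
            intro h; apply hpn.2; rw [← hpn.1, h, zero_mul])
          have h2 : 1 ≤ p.2 := Nat.one_le_iff_ne_zero.mpr (by
            intro h; apply hpn.2; rw [← hpn.1, h, mul_zero])
          have hle1 : p.1 ≤ N := le_trans (le_trans (Nat.le_mul_of_pos_right _ h2) hpn.1.le) hn.2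
          have hle2 : p.2 ≤ N := le_trans (le_trans (Nat.le_mul_of_pos_left _ h1) hpn.1.le) hn.2
          simp only [Finset.mem_product, Finset.mem_Icc]
          exact ⟨⟨h1, hle1⟩, ⟨h2, hle2⟩⟩
        · intro p _ _; exact hterm p
    _ = (∑ n ∈ Icc 1 N, φ n * ψ n) * ∑ k ∈ Icc 1 N, ‖a k‖ ^ 2 := by
        rw [Finset.sum_product, Finset.sum_mul_sum]
        exact Finset.sum_congr rfl fun d _ =>
          Finset.sum_congr rfl fun k _ => by ring



/-- the Cauchy–Schwarz bound for the truncated multiplier: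
`∑_{n ≤ x} |∑_{d∣n} ψ(d) a_{n/d}|² ≤ (∑_{n ≤ x} φ(n)ψ(n)) · (max_{m ≤ x} ∑_{d∣m} ψ(d)/φ(d))
  · ∑_{k ≤ x} |a_k|²`. -/
theorem truncated_multiplier_bound (ψ : ℕ → ℝ) (hψ : ∀ n, 0 ≤ ψ n)
    (φ : ℕ → ℝ) (hφ : ∀ n, 0 < φ n) (x : ℝ) (hx : 1 ≤ x) (a : ℕ → ℂ) :
    ∑ n ∈ Finset.Icc 1 ⌊x⌋₊, ‖∑ d ∈ n.divisors, ((ψ d : ℝ) : ℂ) * a (n / d)‖ ^ 2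
      ≤ (∑ n ∈ Finset.Icc 1 ⌊x⌋₊, φ n * ψ n) *
        ((Finset.Icc 1 ⌊x⌋₊).sup'
            (Finset.nonempty_Icc.mpr (Nat.le_floor (by exact_mod_cast hx)))
            fun m => ∑ d ∈ m.divisors, ψ d / φ d) *
        ∑ k ∈ Finset.Icc 1 ⌊x⌋₊, ‖a k‖ ^ 2 := by
  set N := ⌊x⌋₊ with hNdef
  have hne : (Finset.Icc 1 N).Nonempty :=
    Finset.nonempty_Icc.mpr (Nat.le_floor (by exact_mod_cast hx))
  set S : ℝ := (Finset.Icc 1 N).sup' hne (fun m => ∑ d ∈ m.divisors, ψ d / φ d) with hSdef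
  have hS : ∀ m ∈ Icc 1 N, (∑ d ∈ m.divisors, ψ d / φ d) ≤ S := by
    intro m hm; rw [hSdef]; exact Finset.le_sup' (fun m => ∑ d ∈ m.divisors, ψ d / φ d) hm
  have hS0 : 0 ≤ S := le_trans
    (Finset.sum_nonneg fun d _ => div_nonneg (hψ d) (hφ d).le)
    (hS 1 (Finset.mem_Icc.mpr ⟨le_refl 1, Finset.nonempty_Icc.mp hne⟩))
  calc ∑ n ∈ Finset.Icc 1 N, ‖∑ d ∈ n.divisors, ((ψ d : ℝ) : ℂ) * a (n / d)‖ ^ 2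
      ≤ ∑ n ∈ Icc 1 N, (∑ d ∈ n.divisors, ψ d * ‖a (n / d)‖) ^ 2 := by
        apply Finset.sum_le_sum; intro n _
        have hb : ‖∑ d ∈ n.divisors, ((ψ d : ℝ) : ℂ) * a (n / d)‖
            ≤ ∑ d ∈ n.divisors, ψ d * ‖a (n / d)‖ := by
          refine le_trans (norm_sum_le _ _) (le_of_eq (Finset.sum_congr rfl fun d _ => ?_))
          rw [norm_mul, Complex.norm_real, Real.norm_of_nonneg (hψ d)]
        exact pow_le_pow_left₀ (norm_nonneg _) hb 2
    _ ≤ ∑ n ∈ Icc 1 N, (∑ d ∈ n.divisors, ψ d / φ d) *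
          (∑ d ∈ n.divisors, ψ d * φ d * ‖a (n / d)‖ ^ 2) :=
        Finset.sum_le_sum fun n _ => tmb_cauchy ψ φ hψ hφ a n
    _ ≤ ∑ n ∈ Icc 1 N, S * (∑ d ∈ n.divisors, ψ d * φ d * ‖a (n / d)‖ ^ 2) :=
        Finset.sum_le_sum fun n hn => mul_le_mul_of_nonneg_right (hS n hn)
          (Finset.sum_nonneg fun d _ =>
            mul_nonneg (mul_nonneg (hψ d) (hφ d).le) (by positivity))
    _ = S * ∑ n ∈ Icc 1 N, ∑ d ∈ n.divisors, ψ d * φ d * ‖a (n / d)‖ ^ 2 :=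
        (Finset.mul_sum _ _ _).symm
    _ ≤ S * ((∑ n ∈ Icc 1 N, φ n * ψ n) * ∑ k ∈ Icc 1 N, ‖a k‖ ^ 2) :=
        mul_le_mul_of_nonneg_left (tmb_swap ψ φ hψ hφ a N) hS0
    _ = (∑ n ∈ Icc 1 N, φ n * ψ n) * S * ∑ k ∈ Icc 1 N, ‖a k‖ ^ 2 := by ring
end

section
/- Let (b_p), indexed by the prime numbers p, be a complex sequence with ∑_p |b_p|² < ∞, corresponding to the linear symbol g(s) = ∑_p b_p p^{-s}. Then the operator norm of the Volterra operator T_g on H² equals ‖g‖_{H²}: the supremum of ∑_{N≥2} (log N)^{-2} |∑_{p∣N, p prime} b_p (log p) a_{N/p}|² over all complex sequences (a_n)_{n≥1} with ∑_{n≥1}|a_n|² ≤ 1 is exactly ∑_p |b_p|². -/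
open scoped ENNReal

private lemma primeDivisors_eq (N : ℕ) :
    N.divisors.filter Nat.Prime = N.primeFactors := by
  ext p
  simp only [Finset.mem_filter, Nat.mem_divisors, Nat.mem_primeFactors]
  tauto

private lemma sum_log_le {N : ℕ} (hN : 1 ≤ N) :
    ∑ p ∈ N.divisors.filter Nat.Prime, Real.log p ≤ Real.log N := by
  rw [primeDivisors_eq]
  have h1 : ∑ p ∈ N.primeFactors, Real.log p
      = Real.log (∏ p ∈ N.primeFactors, (p : ℝ)) := by
    rw [Real.log_prod]
    intro p hp
    exact_mod_cast (Nat.prime_of_mem_primeFactors hp).pos.ne'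
  rw [h1]
  have h2 : (∏ p ∈ N.primeFactors, (p : ℝ)) = ((∏ p ∈ N.primeFactors, p : ℕ) : ℝ) := by
    push_cast; ring
  rw [h2]
  have hpos : 0 < ∏ p ∈ N.primeFactors, p :=
    Finset.prod_pos fun p hp => (Nat.prime_of_mem_primeFactors hp).pos
  exact Real.log_le_log (by exact_mod_cast hpos)
    (by exact_mod_cast Nat.le_of_dvd hN (Nat.prod_primeFactors_dvd N))

/-- Per-`N` Cauchy–Schwarz bound. -/
private lemma keyCS (b a : ℕ → ℂ) {N : ℕ} (hN : 2 ≤ N) :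
    ‖∑ p ∈ N.divisors.filter Nat.Prime, b p * (Real.log p : ℂ) * a (N / p)‖ ^ 2 /
      Real.log N ^ 2
    ≤ ∑ p ∈ N.divisors.filter Nat.Prime, ‖b p‖ ^ 2 * ‖a (N / p)‖ ^ 2 := by
  set S := N.divisors.filter Nat.Prime with hS
  have hlogN : 0 < Real.log N := Real.log_pos (by exact_mod_cast hN)
  have hple : ∀ p ∈ S, 0 ≤ Real.log p ∧ Real.log p ≤ Real.log N := by
    intro p hp
    simp only [hS, Finset.mem_filter, Nat.mem_divisors] at hp
    constructor
    · exact Real.log_natCast_nonneg p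
    · exact Real.log_le_log (by exact_mod_cast hp.2.pos)
        (by exact_mod_cast Nat.le_of_dvd (by omega) hp.1.1)
  -- step 1 : triangle inequality
  have h1 : ‖∑ p ∈ S, b p * (Real.log p : ℂ) * a (N / p)‖
      ≤ ∑ p ∈ S, Real.sqrt (Real.log p) *
          (Real.sqrt (Real.log p) * (‖b p‖ * ‖a (N / p)‖)) := by
    refine (norm_sum_le _ _).trans (le_of_eq (Finset.sum_congr rfl fun p hp => ?_))
    have h0 := (hple p hp).1
    rw [norm_mul, norm_mul, Complex.norm_real, Real.norm_eq_abs, abs_of_nonneg h0]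
    have hms : Real.sqrt (Real.log p) * Real.sqrt (Real.log p) = Real.log p :=
      Real.mul_self_sqrt h0
    linear_combination (-(‖b p‖ * ‖a (N / p)‖)) * hms
  -- step 2 : Cauchy–Schwarz
  have h2 : (∑ p ∈ S, Real.sqrt (Real.log p) *
        (Real.sqrt (Real.log p) * (‖b p‖ * ‖a (N / p)‖))) ^ 2
      ≤ (∑ p ∈ S, Real.sqrt (Real.log p) ^ 2) *
        ∑ p ∈ S, (Real.sqrt (Real.log p) * (‖b p‖ * ‖a (N / p)‖)) ^ 2 :=
    Finset.sum_mul_sq_le_sq_mul_sq S _ _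
  have h3 : (∑ p ∈ S, Real.sqrt (Real.log p) ^ 2) ≤ Real.log N := by
    refine le_trans (le_of_eq (Finset.sum_congr rfl fun p hp =>
      Real.sq_sqrt (hple p hp).1)) (sum_log_le (by omega))
  have h4 : (∑ p ∈ S, (Real.sqrt (Real.log p) * (‖b p‖ * ‖a (N / p)‖)) ^ 2)
      ≤ Real.log N * ∑ p ∈ S, ‖b p‖ ^ 2 * ‖a (N / p)‖ ^ 2 := by
    rw [Finset.mul_sum]
    refine Finset.sum_le_sum fun p hp => ?_
    rw [mul_pow, Real.sq_sqrt (hple p hp).1, mul_pow]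
    have := (hple p hp).2
    have hnn : (0:ℝ) ≤ ‖b p‖ ^ 2 * ‖a (N / p)‖ ^ 2 := by positivity
    nlinarith [hnn]
  have hnorm : ‖∑ p ∈ S, b p * (Real.log p : ℂ) * a (N / p)‖ ^ 2
      ≤ Real.log N ^ 2 * ∑ p ∈ S, ‖b p‖ ^ 2 * ‖a (N / p)‖ ^ 2 := by
    have hnn : (0:ℝ) ≤ ∑ p ∈ S, Real.sqrt (Real.log p) *
        (Real.sqrt (Real.log p) * (‖b p‖ * ‖a (N / p)‖)) :=
      Finset.sum_nonneg fun p hp => by positivity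
    calc ‖∑ p ∈ S, b p * (Real.log p : ℂ) * a (N / p)‖ ^ 2
        ≤ (∑ p ∈ S, Real.sqrt (Real.log p) *
            (Real.sqrt (Real.log p) * (‖b p‖ * ‖a (N / p)‖))) ^ 2 := by
          exact pow_le_pow_left₀ (norm_nonneg _) h1 2
      _ ≤ (∑ p ∈ S, Real.sqrt (Real.log p) ^ 2) *
            ∑ p ∈ S, (Real.sqrt (Real.log p) * (‖b p‖ * ‖a (N / p)‖)) ^ 2 := h2
      _ ≤ Real.log N * (Real.log N * ∑ p ∈ S, ‖b p‖ ^ 2 * ‖a (N / p)‖ ^ 2) := by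
          refine mul_le_mul h3 h4 (Finset.sum_nonneg fun p hp => by positivity)
            hlogN.le
      _ = Real.log N ^ 2 * ∑ p ∈ S, ‖b p‖ ^ 2 * ‖a (N / p)‖ ^ 2 := by ring
  rw [div_le_iff₀ (by positivity)]
  calc ‖∑ p ∈ S, b p * (Real.log p : ℂ) * a (N / p)‖ ^ 2
      ≤ Real.log N ^ 2 * ∑ p ∈ S, ‖b p‖ ^ 2 * ‖a (N / p)‖ ^ 2 := hnorm
    _ = (∑ p ∈ S, ‖b p‖ ^ 2 * ‖a (N / p)‖ ^ 2) * Real.log N ^ 2 := by ring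

/-- for a linear symbol `g(s) = ∑_p b_p p^{-s}` with square-summable
coefficients, the operator norm of the Volterra operator on `H²` equals `‖g‖_{H²}`:
the supremum of `∑_{N≥2} (log N)^{-2} |∑_{p∣N prime} b_p (log p) a_{N/p}|²` over the unit ball
`∑_{n≥1}|a_n|² ≤ 1` is exactly `∑_p |b_p|²`. -/
theorem volterra_linear_symbol_norm (b : ℕ → ℂ)
    (hb : (∑' p : ℕ, if p.Prime then ENNReal.ofReal (‖b p‖ ^ 2) else 0) ≠ ⊤) :
    (⨆ a ∈ {a : ℕ → ℂ |
        (∑' n : ℕ, if 1 ≤ n then ENNReal.ofReal (‖a n‖ ^ 2) else 0) ≤ 1},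
      ∑' N : ℕ, (if 2 ≤ N then
          ENNReal.ofReal
            (‖∑ p ∈ N.divisors.filter Nat.Prime, b p * (Real.log p : ℂ) * a (N / p)‖ ^ 2 /
              Real.log N ^ 2)
        else 0))
    = ∑' p : ℕ, if p.Prime then ENNReal.ofReal (‖b p‖ ^ 2) else 0 := by
  apply le_antisymm
  · -- upper bound
    refine iSup₂_le fun a ha => ?_
    set F : ℕ × ℕ → ℝ≥0∞ := fun q =>
      if q.1.Prime ∧ 1 ≤ q.2 then ENNReal.ofReal (‖b q.1‖ ^ 2 * ‖a q.2‖ ^ 2) else 0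
      with hF
    calc (∑' N : ℕ, (if 2 ≤ N then
          ENNReal.ofReal
            (‖∑ p ∈ N.divisors.filter Nat.Prime, b p * (Real.log p : ℂ) * a (N / p)‖ ^ 2 /
              Real.log N ^ 2)
        else 0))
        ≤ ∑' N : ℕ, ∑ p ∈ N.divisors.filter Nat.Prime,
            ENNReal.ofReal (‖b p‖ ^ 2 * ‖a (N / p)‖ ^ 2) := by
          refine ENNReal.tsum_le_tsum fun N => ?_
          split_ifs with hN
          · rw [← ENNReal.ofReal_sum_of_nonneg (fun p _ => by positivity)]
            exact ENNReal.ofReal_le_ofReal (keyCS b a hN)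
          · exact zero_le
      _ = ∑' N : ℕ, ∑' p : (N.divisors.filter Nat.Prime : Finset ℕ),
            ENNReal.ofReal (‖b (p : ℕ)‖ ^ 2 * ‖a (N / (p : ℕ))‖ ^ 2) := by
          refine tsum_congr fun N => ?_
          exact (Finset.tsum_subtype _ _).symm
      _ = ∑' x : Σ N : ℕ, (N.divisors.filter Nat.Prime : Finset ℕ),
            ENNReal.ofReal (‖b (x.2 : ℕ)‖ ^ 2 * ‖a (x.1 / (x.2 : ℕ))‖ ^ 2) := by
          exact (ENNReal.tsum_sigma'
            (fun x : Σ N : ℕ, (N.divisors.filter Nat.Prime : Finset ℕ) =>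
              ENNReal.ofReal (‖b (x.2 : ℕ)‖ ^ 2 * ‖a (x.1 / (x.2 : ℕ))‖ ^ 2))).symm
      _ = ∑' x : Σ N : ℕ, (N.divisors.filter Nat.Prime : Finset ℕ),
            F ((x.2 : ℕ), x.1 / (x.2 : ℕ)) := by
          refine tsum_congr fun x => ?_
          obtain ⟨N, p, hp⟩ := x
          simp only [Finset.mem_filter, Nat.mem_divisors] at hp
          have h1 : 1 ≤ N / (p : ℕ) :=
            Nat.one_le_div_iff hp.2.pos |>.2 (Nat.le_of_dvd (Nat.pos_of_ne_zero hp.1.2) hp.1.1)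
          simp only [hF]
          rw [if_pos ⟨hp.2, h1⟩]
      _ ≤ ∑' q : ℕ × ℕ, F q := by
          refine ENNReal.tsum_comp_le_tsum_of_injective ?_ F
          rintro ⟨N, p, hp⟩ ⟨M, q, hq⟩ h
          simp only [Prod.mk.injEq] at h
          obtain ⟨h1, h2⟩ := h
          simp only [Finset.mem_filter, Nat.mem_divisors] at hp hq
          subst h1
          have eN : p * (N / p) = N := Nat.mul_div_cancel' hp.1.1
          have eM : p * (M / p) = M := Nat.mul_div_cancel' hq.1.1
          have hNM : N = M := by rw [← eN, ← eM, h2]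
          subst hNM
          rfl
      _ = (∑' p : ℕ, if p.Prime then ENNReal.ofReal (‖b p‖ ^ 2) else 0) *
            ∑' m : ℕ, if 1 ≤ m then ENNReal.ofReal (‖a m‖ ^ 2) else 0 := by
          rw [ENNReal.tsum_prod']
          have : ∀ p m : ℕ, F (p, m) =
              (if p.Prime then ENNReal.ofReal (‖b p‖ ^ 2) else 0) *
              (if 1 ≤ m then ENNReal.ofReal (‖a m‖ ^ 2) else 0) := by
            intro p m
            simp only [hF]
            by_cases h1 : p.Prime
            · by_cases h2 : 1 ≤ m
              · rw [if_pos ⟨h1, h2⟩, if_pos h1, if_pos h2,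
                  ENNReal.ofReal_mul (by positivity : (0:ℝ) ≤ ‖b p‖ ^ 2)]
              · rw [if_neg (by tauto), if_neg h2, mul_zero]
            · rw [if_neg (by tauto), if_neg h1, zero_mul]
          simp_rw [this, ENNReal.tsum_mul_left, ENNReal.tsum_mul_right]
      _ ≤ (∑' p : ℕ, if p.Prime then ENNReal.ofReal (‖b p‖ ^ 2) else 0) * 1 :=
          mul_le_mul_right ha _
      _ = ∑' p : ℕ, if p.Prime then ENNReal.ofReal (‖b p‖ ^ 2) else 0 := mul_one _
  · -- lower bound : test with a = e₁
    set a₀ : ℕ → ℂ := fun n => if n = 1 then 1 else 0 with ha₀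
    have hmem : a₀ ∈ {a : ℕ → ℂ |
        (∑' n : ℕ, if 1 ≤ n then ENNReal.ofReal (‖a n‖ ^ 2) else 0) ≤ 1} := by
      have : (∑' n : ℕ, if 1 ≤ n then ENNReal.ofReal (‖a₀ n‖ ^ 2) else 0) = 1 := by
        rw [tsum_eq_single 1]
        · simp [ha₀]
        · intro n hn
          rcases Nat.lt_or_ge n 1 with h | h
          · rw [if_neg (by omega)]
          · rw [if_pos h, ha₀]
            simp [hn]
      exact this.le
    have hval : (∑' N : ℕ, (if 2 ≤ N then
          ENNReal.ofReal
            (‖∑ p ∈ N.divisors.filter Nat.Prime, b p * (Real.log p : ℂ) * a₀ (N / p)‖ ^ 2 /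
              Real.log N ^ 2)
        else 0))
        = ∑' p : ℕ, if p.Prime then ENNReal.ofReal (‖b p‖ ^ 2) else 0 := by
      refine tsum_congr fun N => ?_
      by_cases hP : N.Prime
      · rw [if_pos hP.two_le, if_pos hP]
        have hSet : N.divisors.filter Nat.Prime = {N} := by
          ext q
          simp only [Finset.mem_filter, Nat.mem_divisors, Finset.mem_singleton]
          constructor
          · rintro ⟨⟨hdvd, -⟩, hq⟩
            exact ((Nat.Prime.eq_one_or_self_of_dvd hP q hdvd).resolve_left hq.ne_one)
          · rintro rfl
            exact ⟨⟨dvd_rfl, hP.ne_zero⟩, hP⟩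
        rw [hSet, Finset.sum_singleton, Nat.div_self hP.pos]
        have ha1 : a₀ 1 = 1 := by simp [ha₀]
        rw [ha1, mul_one, norm_mul, Complex.norm_real, Real.norm_eq_abs,
          abs_of_nonneg (Real.log_natCast_nonneg N)]
        congr 1
        have hlog : Real.log N ≠ 0 := (Real.log_pos (by exact_mod_cast hP.two_le)).ne'
        field_simp
      · have hzero : ∀ p ∈ N.divisors.filter Nat.Prime, b p * (Real.log p : ℂ) * a₀ (N / p) = 0 := by
          intro p hp
          simp only [Finset.mem_filter, Nat.mem_divisors] at hp
          have : N / p ≠ 1 := by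
            intro h
            have : N = p := by
              have := Nat.mul_div_cancel' hp.1.1
              rw [h, mul_one] at this
              omega
            exact hP (this ▸ hp.2)
          simp [ha₀, this]
        rw [if_neg hP]
        split_ifs with hN
        · rw [Finset.sum_eq_zero hzero]
          simp
        · rfl
    calc (∑' p : ℕ, if p.Prime then ENNReal.ofReal (‖b p‖ ^ 2) else 0)
        = _ := hval.symm
      _ ≤ _ := le_iSup₂ (f := fun a (_ : a ∈ {a : ℕ → ℂ |
            (∑' n : ℕ, if 1 ≤ n then ENNReal.ofReal (‖a n‖ ^ 2) else 0) ≤ 1}) =>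
          ∑' N : ℕ, (if 2 ≤ N then
          ENNReal.ofReal
            (‖∑ p ∈ N.divisors.filter Nat.Prime, b p * (Real.log p : ℂ) * a (N / p)‖ ^ 2 /
              Real.log N ^ 2)
        else 0)) a₀ hmem
end

section
/- For every integer n ≥ 2 and every integer m ≥ 1, ∑_{k∣n, Ω(k)=m} log k ≤ m · ω(n)^{m−1} · log n, where the sum runs over the divisors k of n having exactly m prime factors counted with multiplicity. -/
open Finset

private lemma sum_log_primeFactors_le (n : ℕ) (hn : n ≠ 0) :
    ∑ p ∈ n.primeFactors, Real.log p ≤ Real.log n := by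
  have hd : (∏ p ∈ n.primeFactors, p) ∣ n := Nat.prod_primeFactors_dvd n
  have h1 : Real.log (∏ p ∈ n.primeFactors, (p : ℝ)) = ∑ p ∈ n.primeFactors, Real.log p :=
    Real.log_prod (fun p hp => by
      exact_mod_cast (Nat.prime_of_mem_primeFactors hp).pos.ne')
  have hpos : 0 < ∏ p ∈ n.primeFactors, p :=
    Finset.prod_pos fun p hp => (Nat.prime_of_mem_primeFactors hp).pos
  rw [← h1, ← Nat.cast_prod]
  have := Nat.le_of_dvd (Nat.pos_of_ne_zero hn) hd
  gcongr

-- decomposition facts for k ∈ S (m+1)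
private lemma mem_step (n m k : ℕ) (hn : n ≠ 0)
    (hk : k ∈ n.divisors.filter (fun k => k.primeFactorsList.length = m + 1)) :
    k.minFac ∈ n.primeFactors ∧
      k / k.minFac ∈ n.divisors.filter (fun k => k.primeFactorsList.length = m) ∧
      k = k.minFac * (k / k.minFac) := by
  rw [Finset.mem_filter, Nat.mem_divisors] at hk
  obtain ⟨⟨hdvd, -⟩, hlen⟩ := hk
  have hk0 : k ≠ 0 := by rintro rfl; exact hn (zero_dvd_iff.mp hdvd)
  have hk1 : k ≠ 1 := by rintro rfl; simp at hlen
  have hp := Nat.minFac_prime hk1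
  have hpd : k.minFac ∣ k := Nat.minFac_dvd k
  have hkeq : k = k.minFac * (k / k.minFac) := (Nat.mul_div_cancel' hpd).symm
  have hj0 : k / k.minFac ≠ 0 := by
    intro h; rw [h, mul_zero] at hkeq; exact hk0 hkeq
  have hperm := Nat.perm_primeFactorsList_mul hp.pos.ne' hj0
  rw [← hkeq] at hperm
  have hlen2 : k.primeFactorsList.length =
      k.minFac.primeFactorsList.length + (k / k.minFac).primeFactorsList.length := by
    rw [hperm.length_eq, List.length_append]
  rw [Nat.primeFactorsList_prime hp] at hlen2
  simp only [List.length_singleton] at hlen2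
  have hjk : (k / k.minFac) ∣ k := ⟨k.minFac, by rw [mul_comm]; exact hkeq⟩
  refine ⟨Nat.mem_primeFactors.mpr ⟨hp, hpd.trans hdvd, hn⟩, ?_, hkeq⟩
  rw [Finset.mem_filter, Nat.mem_divisors]
  exact ⟨⟨hjk.trans hdvd, hn⟩, by omega⟩

private lemma card_S_le (n m : ℕ) (hn : n ≠ 0) :
    (n.divisors.filter (fun k => k.primeFactorsList.length = m)).card
      ≤ n.primeFactors.card ^ m := by
  induction m with
  | zero =>
    simp only [pow_zero]
    apply Finset.card_le_one.mpr ?_ |>.trans (le_refl 1)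
    intro a ha b hb
    rw [Finset.mem_filter, Nat.mem_divisors] at ha hb
    have ha0 : a ≠ 0 := fun h => hn (zero_dvd_iff.mp (h ▸ ha.1.1))
    have hb0 : b ≠ 0 := fun h => hn (zero_dvd_iff.mp (h ▸ hb.1.1))
    have : a = 1 := by
      have := ha.2; rcases Nat.primeFactorsList_eq_nil a |>.mp (List.length_eq_zero_iff.mp this) with h|h
      · exact absurd h ha0
      · exact h
    have hb1 : b = 1 := by
      have := hb.2; rcases Nat.primeFactorsList_eq_nil b |>.mp (List.length_eq_zero_iff.mp this) with h|h
      · exact absurd h hb0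
      · exact h
    rw [this, hb1]
  | succ m ih =>
    calc (n.divisors.filter (fun k => k.primeFactorsList.length = m + 1)).card
        ≤ (n.primeFactors ×ˢ n.divisors.filter (fun k => k.primeFactorsList.length = m)).card := by
          apply Finset.card_le_card_of_injOn (fun k => (k.minFac, k / k.minFac))
          · intro k hk
            obtain ⟨h1, h2, -⟩ := mem_step n m k hn hk
            exact Finset.mem_product.mpr ⟨h1, h2⟩
          · intro a ha b hb hab
            obtain ⟨-, -, hae⟩ := mem_step n m a hn (by exact_mod_cast ha)
            obtain ⟨-, -, hbe⟩ := mem_step n m b hn (by exact_mod_cast hb)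
            have h1 : a.minFac = b.minFac := congrArg Prod.fst hab
            have h2 : a / a.minFac = b / b.minFac := congrArg Prod.snd hab
            calc a = a.minFac * (a / a.minFac) := hae
              _ = b.minFac * (b / b.minFac) := by rw [h2, h1]
              _ = b := hbe.symm
      _ ≤ n.primeFactors.card ^ (m + 1) := by
          rw [Finset.card_product, pow_succ, mul_comm]
          exact Nat.mul_le_mul ih le_rfl

private lemma step_sum_le (n m : ℕ) (hn : n ≠ 0) :
    ∑ k ∈ n.divisors.filter (fun k => k.primeFactorsList.length = m + 1), Real.log k
      ≤ ((n.divisors.filter (fun k => k.primeFactorsList.length = m)).card : ℝ) * Real.log n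
        + (n.primeFactors.card : ℝ) *
          ∑ k ∈ n.divisors.filter (fun k => k.primeFactorsList.length = m), Real.log k := by
  set Sm := n.divisors.filter (fun k => k.primeFactorsList.length = m) with hSm
  set Sm1 := n.divisors.filter (fun k => k.primeFactorsList.length = m + 1) with hSm1
  have hinj : Set.InjOn (fun k : ℕ => (k.minFac, k / k.minFac)) (Sm1 : Set ℕ) := by
    intro a ha b hb hab
    obtain ⟨-, -, hae⟩ := mem_step n m a hn (by exact_mod_cast ha)
    obtain ⟨-, -, hbe⟩ := mem_step n m b hn (by exact_mod_cast hb)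
    have h1 : a.minFac = b.minFac := congrArg Prod.fst hab
    have h2 : a / a.minFac = b / b.minFac := congrArg Prod.snd hab
    calc a = a.minFac * (a / a.minFac) := hae
      _ = b.minFac * (b / b.minFac) := by rw [h2, h1]
      _ = b := hbe.symm
  have key : ∑ k ∈ Sm1, Real.log k
      = ∑ x ∈ Sm1.image (fun k : ℕ => (k.minFac, k / k.minFac)),
          (Real.log x.1 + Real.log x.2) := by
    rw [Finset.sum_image hinj]
    apply Finset.sum_congr rfl
    intro k hk
    obtain ⟨hp, hj, hke⟩ := mem_step n m k hn hk
    have hp0 : (k.minFac : ℝ) ≠ 0 := by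
      exact_mod_cast (Nat.prime_of_mem_primeFactors hp).pos.ne'
    have hj0 : ((k / k.minFac : ℕ) : ℝ) ≠ 0 := by
      exact_mod_cast (Nat.pos_of_mem_divisors (Finset.mem_filter.mp hj).1).ne'
    calc Real.log k = Real.log (k.minFac * (k / k.minFac) : ℕ) := by rw [← hke]
      _ = Real.log k.minFac + Real.log (k / k.minFac : ℕ) := by
          push_cast; rw [Real.log_mul hp0 hj0]
  rw [key]
  have hsub : Sm1.image (fun k : ℕ => (k.minFac, k / k.minFac)) ⊆ n.primeFactors ×ˢ Sm := by
    intro x hx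
    obtain ⟨k, hk, rfl⟩ := Finset.mem_image.mp hx
    obtain ⟨h1, h2, -⟩ := mem_step n m k hn hk
    exact Finset.mem_product.mpr ⟨h1, h2⟩
  calc ∑ x ∈ Sm1.image (fun k : ℕ => (k.minFac, k / k.minFac)), (Real.log x.1 + Real.log x.2)
      ≤ ∑ x ∈ n.primeFactors ×ˢ Sm, (Real.log x.1 + Real.log x.2) := by
        apply Finset.sum_le_sum_of_subset_of_nonneg hsub
        intro x hx _
        rw [Finset.mem_product] at hx
        have h1 : (1 : ℝ) ≤ x.1 := by
          exact_mod_cast (Nat.prime_of_mem_primeFactors hx.1).one_lt.le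
        have h2 : (1 : ℝ) ≤ x.2 := by
          exact_mod_cast Nat.pos_of_mem_divisors (Finset.mem_filter.mp hx.2).1
        exact add_nonneg (Real.log_nonneg h1) (Real.log_nonneg h2)
    _ = (Sm.card : ℝ) * ∑ p ∈ n.primeFactors, Real.log p
        + (n.primeFactors.card : ℝ) * ∑ j ∈ Sm, Real.log j := by
        rw [Finset.sum_product]
        have hrow : ∀ p ∈ n.primeFactors, ∑ j ∈ Sm, (Real.log p + Real.log j)
            = (Sm.card : ℝ) * Real.log p + ∑ j ∈ Sm, Real.log j := by
          intro p _
          rw [Finset.sum_add_distrib, Finset.sum_const, nsmul_eq_mul]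
        rw [Finset.sum_congr rfl hrow, Finset.sum_add_distrib, Finset.sum_const,
          nsmul_eq_mul, ← Finset.mul_sum]
    _ ≤ (Sm.card : ℝ) * Real.log n + (n.primeFactors.card : ℝ) * ∑ j ∈ Sm, Real.log j := by
        gcongr
        exact sum_log_primeFactors_le n hn

/-- for `n ≥ 2` and `m ≥ 1`,
`∑_{k∣n, Ω(k)=m} log k ≤ m · ω(n)^{m-1} · log n`, where `Ω` counts prime factors with
multiplicity and `ω` counts distinct prime factors. -/
theorem divisor_log_sum_bound (n m : ℕ) (hn : 2 ≤ n) (hm : 1 ≤ m) :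
    ∑ k ∈ n.divisors.filter (fun k => k.primeFactorsList.length = m), Real.log k
      ≤ (m : ℝ) * (n.primeFactors.card : ℝ) ^ (m - 1) * Real.log n := by
  have hn0 : n ≠ 0 := by omega
  have hL : 0 ≤ Real.log n := Real.log_nonneg (by exact_mod_cast hn.trans' (by norm_num))
  have hω : (1 : ℝ) ≤ n.primeFactors.card := by
    have : n.primeFactors.Nonempty := Nat.nonempty_primeFactors.mpr hn
    exact_mod_cast Finset.card_pos.mpr this
  obtain ⟨m', rfl⟩ : ∃ m', m = m' + 1 := ⟨m - 1, by omega⟩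
  clear hm
  simp only [Nat.add_sub_cancel]
  induction m' with
  | zero =>
    have hgoal : ((0 + 1 : ℕ) : ℝ) * (n.primeFactors.card : ℝ) ^ 0 * Real.log n = Real.log n := by
      norm_num
    rw [hgoal]
    calc ∑ k ∈ n.divisors.filter (fun k => k.primeFactorsList.length = 0 + 1), Real.log k
        ≤ ((n.divisors.filter (fun k => k.primeFactorsList.length = 0)).card : ℝ) * Real.log n
          + (n.primeFactors.card : ℝ) *
            ∑ k ∈ n.divisors.filter (fun k => k.primeFactorsList.length = 0), Real.log k :=
          step_sum_le n 0 hn0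
      _ ≤ Real.log n := by
          have hS0 : n.divisors.filter (fun k => k.primeFactorsList.length = 0) = {1} := by
            apply Finset.Subset.antisymm
            · intro a ha
              rw [Finset.mem_filter, Nat.mem_divisors] at ha
              have ha0 : a ≠ 0 := fun h => hn0 (zero_dvd_iff.mp (h ▸ ha.1.1))
              rcases Nat.primeFactorsList_eq_nil a |>.mp (List.length_eq_zero_iff.mp ha.2) with h|h
              · exact absurd h ha0
              · simp [h]
            · intro a ha
              simp only [Finset.mem_singleton] at ha
              subst ha
              rw [Finset.mem_filter, Nat.mem_divisors]
              exact ⟨⟨one_dvd n, hn0⟩, by simp⟩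
          rw [hS0]
          simp [Real.log_one]
  | succ m' ih =>
    have ih' := ih
    calc ∑ k ∈ n.divisors.filter (fun k => k.primeFactorsList.length = m' + 1 + 1), Real.log k
        ≤ ((n.divisors.filter (fun k => k.primeFactorsList.length = m' + 1)).card : ℝ) * Real.log n
          + (n.primeFactors.card : ℝ) *
            ∑ k ∈ n.divisors.filter (fun k => k.primeFactorsList.length = m' + 1), Real.log k :=
          step_sum_le n (m' + 1) hn0
      _ ≤ (n.primeFactors.card : ℝ) ^ (m' + 1) * Real.log n
          + (n.primeFactors.card : ℝ) *
            (((m' + 1 : ℕ) : ℝ) * (n.primeFactors.card : ℝ) ^ m' * Real.log n) := by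
          refine add_le_add (mul_le_mul_of_nonneg_right ?_ hL)
            (mul_le_mul_of_nonneg_left ih' (by linarith))
          exact_mod_cast card_S_le n (m' + 1) hn0
      _ = ((m' + 1 + 1 : ℕ) : ℝ) * (n.primeFactors.card : ℝ) ^ (m' + 1) * Real.log n := by
          push_cast; ring
end

section
/- There exists an absolute constant C > 0 such that for every complex sequence (b_n)_{n≥2} supported on the integers n with Ω(n) = 2 (that is, b_n = 0 unless Ω(n) = 2) and every square-summable complex sequence (a_n)_{n≥1}, ∑_{N≥2} (log N)^{-2} |∑_{k∣N, Ω(k)=2} b_k (log k) a_{N/k}|² ≤ C · (∑_{Ω(n)=2} |b_n|² (log n)/log₂ n) · ∑_{n≥1} |a_n|². In other words, the Volterra operator T_g with a 2-homogeneous symbol g(s)=∑_{Ω(n)=2} b_n n^{-s} is bounded on H² with ‖T_g‖² ≪ ∑_{Ω(n)=2} |b_n|² (log n)/log₂ n. -/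
open scoped ENNReal

/-- `log₂ x = log log x`, with the convention that it equals `1` for `x ≤ e^e`. -/
noncomputable def loglog (x : ℝ) : ℝ := max 1 (Real.log (Real.log x))

lemma one_le_loglog (x : ℝ) : 1 ≤ loglog x := le_max_left _ _

lemma loglog_pos (x : ℝ) : 0 < loglog x := lt_of_lt_of_le one_pos (one_le_loglog x)

lemma loglog_mono {x y : ℝ} (hx : 2 ≤ x) (hxy : x ≤ y) : loglog x ≤ loglog y := by
  have hx0 : (0:ℝ) < x := by linarith
  have h1 : Real.log x ≤ Real.log y := Real.log_le_log hx0 hxy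
  have hlx : 0 < Real.log x := Real.log_pos (by linarith)
  exact max_le_max le_rfl (Real.log_le_log hlx h1)

/-- product of a finset of naturals, all `≥ 2`, is at least `card !`. -/
lemma card_factorial_le_prod (S : Finset ℕ) (h2 : ∀ x ∈ S, 2 ≤ x) :
    Nat.factorial S.card ≤ ∏ x ∈ S, x := by
  induction S using Finset.strongInduction with
  | _ S ih =>
    rcases S.eq_empty_or_nonempty with rfl | hS
    · simp
    · have hMS : S.max' hS ∈ S := S.max'_mem hS
      set M := S.max' hS with hM
      have hsub : S ⊆ Finset.Icc 2 M := fun x hx =>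
        Finset.mem_Icc.mpr ⟨h2 x hx, S.le_max' x hx⟩
      have hcard : S.card ≤ M - 1 := by
        have := Finset.card_le_card hsub
        simpa [Nat.card_Icc] using this
      have hM2 : 2 ≤ M := h2 M hMS
      have herase := ih (S.erase M) (Finset.erase_ssubset hMS)
        (fun x hx => h2 x (Finset.mem_of_mem_erase hx))
      have hprod : ∏ x ∈ S, x = M * ∏ x ∈ S.erase M, x :=
        (Finset.mul_prod_erase S _ hMS).symm
      obtain ⟨c, hc⟩ : ∃ c, S.card = c + 1 :=
        ⟨S.card - 1, by have := Finset.card_pos.mpr hS; omega⟩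
      have hce : (S.erase M).card = c := by
        rw [Finset.card_erase_of_mem hMS, hc]; omega
      rw [hc, Nat.factorial_succ, hprod]
      exact Nat.mul_le_mul (by omega) (by rw [← hce]; exact herase)

/-- Key arithmetic fact: `ω(N) · loglog N ≤ 20 log N` for `N ≥ 2`. -/
lemma omega_mul_loglog_le {N : ℕ} (hN : 2 ≤ N) :
    (N.primeFactors.card : ℝ) * loglog N ≤ 20 * Real.log N := by
  have hN0 : 0 < N := by omega
  have hN1 : (1:ℝ) < N := by exact_mod_cast hN
  have hL : 0 < Real.log N := Real.log_pos hN1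
  set ω := N.primeFactors.card with hω
  set L := Real.log N with hLdef
  have h2ω : ∀ x ∈ N.primeFactors, 2 ≤ x := fun x hx =>
    (Nat.prime_of_mem_primeFactors hx).two_le
  have hproddvd : ∏ p ∈ N.primeFactors, p ∣ N := Nat.prod_primeFactors_dvd N
  have hprodle : ∏ p ∈ N.primeFactors, p ≤ N := Nat.le_of_dvd hN0 hproddvd
  -- 2^ω ≤ N
  have hpow2 : 2 ^ ω ≤ N := by
    calc 2 ^ ω ≤ ∏ p ∈ N.primeFactors, p :=
          Finset.pow_card_le_prod _ _ _ h2ω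
      _ ≤ N := hprodle
  have hωlog2 : (ω : ℝ) * Real.log 2 ≤ L := by
    have hc : ((2:ℝ)) ^ ω ≤ (N : ℝ) := by exact_mod_cast hpow2
    have h := Real.log_le_log (by positivity) hc
    rwa [Real.log_pow] at h
  have hω2L : (ω : ℝ) ≤ 2 * L := by
    have hlog2 : (0.6931471803 : ℝ) < Real.log 2 := Real.log_two_gt_d9
    nlinarith [Nat.cast_nonneg (α := ℝ) ω]
  by_cases hΛ : Real.log L ≤ 1
  · have hll : loglog (N:ℝ) = 1 := max_eq_left hΛ
    rw [hll]
    linarith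
  · push_neg at hΛ
    have hΛval : loglog N = Real.log L := max_eq_right hΛ.le
    have hL1 : 1 < L := by
      by_contra hcon
      push_neg at hcon
      have : Real.log L ≤ 0 := Real.log_nonpos hL.le hcon
      linarith
    have hlogL_le : Real.log L ≤ L := by
      have := Real.log_le_sub_one_of_pos hL
      linarith
    by_cases hω8 : ω ≤ 8
    · rw [hΛval]
      have : (ω:ℝ) ≤ 8 := by exact_mod_cast hω8
      nlinarith [hΛ.le, hlogL_le, hL.le]
    · push_neg at hω8
      set h := ω / 2 with hh
      have hh4 : 4 ≤ h := by omega
      have hω3h : (ω : ℝ) ≤ 3 * h := by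
        have : ω ≤ 2 * h + 1 := by omega
        have h1 : (ω:ℝ) ≤ 2 * h + 1 := by exact_mod_cast this
        have h2 : (4:ℝ) ≤ h := by exact_mod_cast hh4
        linarith
      -- (h+1)^h ≤ N
      have hfact2 : (h + 1) ^ h ≤ N := by
        calc (h + 1) ^ h ≤ Nat.factorial h * (h + 1) ^ h :=
              Nat.le_mul_of_pos_left _ (Nat.factorial_pos h)
          _ ≤ Nat.factorial (h + h) := Nat.factorial_mul_pow_le_factorial
          _ ≤ Nat.factorial ω := Nat.factorial_le (by omega)
          _ ≤ ∏ p ∈ N.primeFactors, p := card_factorial_le_prod _ h2ω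
          _ ≤ N := hprodle
      have hlogpow : (h : ℝ) * Real.log ((h:ℝ) + 1) ≤ L := by
        have hcast : ((h:ℝ) + 1) ^ h ≤ (N : ℝ) := by exact_mod_cast hfact2
        have h2 := Real.log_le_log (by positivity) hcast
        rwa [Real.log_pow] at h2
      rw [hΛval]
      have hlogh1 : (0:ℝ) < Real.log ((h:ℝ)+1) := by
        apply Real.log_pos
        have : (4:ℝ) ≤ h := by exact_mod_cast hh4
        linarith
      by_cases hc : Real.log L ≤ 2 * Real.log ((h:ℝ)+1)
      · -- ω Λ ≤ 3h · 2 log(h+1) ≤ 6 L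
        have hωnn : (0:ℝ) ≤ ω := Nat.cast_nonneg ω
        have hΛnn : (0:ℝ) ≤ Real.log L := by linarith
        calc (ω:ℝ) * Real.log L ≤ (3 * h) * (2 * Real.log ((h:ℝ)+1)) := by
              apply mul_le_mul hω3h hc hΛnn
              positivity
          _ = 6 * ((h:ℝ) * Real.log ((h:ℝ)+1)) := by ring
          _ ≤ 6 * L := by linarith [hlogpow]
          _ ≤ 20 * L := by linarith
      · push_neg at hc
        -- (h+1)² < L, so h+1 ≤ √L and log L ≤ 2√L
        have hsq : ((h:ℝ)+1) ^ 2 < L := by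
          have h1 : Real.log (((h:ℝ)+1) ^ 2) < Real.log L := by
            rw [Real.log_pow]
            push_cast
            linarith
          by_contra hcon
          push_neg at hcon
          have := Real.log_le_log (by linarith : (0:ℝ) < L) hcon
          linarith
        have hsqrt : (h:ℝ) + 1 ≤ Real.sqrt L := by
          rw [show L = Real.sqrt L ^ 2 from (Real.sq_sqrt (by linarith)).symm] at hsq
          nlinarith [Real.sqrt_nonneg L]
        have hsqrtpos : 0 < Real.sqrt L := Real.sqrt_pos.mpr hL
        have hlogL2 : Real.log L ≤ 2 * Real.sqrt L := by
          have h1 : Real.log (Real.sqrt L) ≤ Real.sqrt L - 1 :=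
            Real.log_le_sub_one_of_pos hsqrtpos
          have h2 : Real.log (Real.sqrt L) = Real.log L / 2 :=
            Real.log_sqrt (by linarith)
          linarith
        have hωnn : (0:ℝ) ≤ Real.log L := by linarith
        calc (ω:ℝ) * Real.log L ≤ (3 * h) * Real.log L :=
              mul_le_mul_of_nonneg_right hω3h hωnn
          _ ≤ 3 * ((h:ℝ)+1) * (2 * Real.sqrt L) := by
              have hωpos : (0:ℝ) ≤ 3 * ((h:ℝ)+1) := by positivity
              have h3 : (3:ℝ) * h ≤ 3 * ((h:ℝ)+1) := by linarith
              have h4 : (0:ℝ) ≤ (3:ℝ) * h := by positivity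
              exact mul_le_mul h3 hlogL2 hωnn hωpos
          _ ≤ 6 * (Real.sqrt L * Real.sqrt L) := by nlinarith [Real.sqrt_nonneg L]
          _ = 6 * L := by rw [Real.mul_self_sqrt (by linarith)]
          _ ≤ 20 * L := by linarith

/-- Sum of the weights over the 2-homogeneous divisors of `N`. -/
lemma sum_weights_le {N : ℕ} (hN : 2 ≤ N) :
    ∑ k ∈ N.divisors.filter (fun k => k.primeFactorsList.length = 2),
        Real.log k * loglog k ≤ 40 * Real.log N ^ 2 := by
  classical
  have hN0 : N ≠ 0 := by omega
  have hNpos : 0 < N := by omega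
  have hN1 : (1:ℝ) < N := by exact_mod_cast hN
  have hL : 0 < Real.log N := Real.log_pos hN1
  set F := N.divisors.filter (fun k => k.primeFactorsList.length = 2) with hF
  set P := N.primeFactors with hP
  set i : ℕ → ℕ × ℕ := fun k => (k.primeFactorsList.headI, k.primeFactorsList.tail.headI)
    with hi
  have hmain : ∀ k ∈ F, k = (i k).1 * (i k).2 ∧ (i k) ∈ P ×ˢ P ∧
      Real.log k * loglog k ≤ (Real.log (i k).1 + Real.log (i k).2) * loglog N := by
    intro k hk
    rw [hF, Finset.mem_filter] at hk
    obtain ⟨hkdiv, hklen⟩ := hk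
    obtain ⟨hkdvd, -⟩ := Nat.mem_divisors.mp hkdiv
    have hkpos : 0 < k := Nat.pos_of_mem_divisors hkdiv
    obtain ⟨p, q, hpq⟩ := List.length_eq_two.mp hklen
    have hik : i k = (p, q) := by simp [hi, hpq]
    have hpmem : p ∈ k.primeFactorsList := by rw [hpq]; simp
    have hqmem : q ∈ k.primeFactorsList := by rw [hpq]; simp
    have hp : p.Prime := Nat.prime_of_mem_primeFactorsList hpmem
    have hq : q.Prime := Nat.prime_of_mem_primeFactorsList hqmem
    have hkprod : k = p * q := by
      have := Nat.prod_primeFactorsList hkpos.ne'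
      rw [hpq] at this
      simpa using this.symm
    have hpP : p ∈ P := Nat.mem_primeFactors.mpr
      ⟨hp, dvd_trans ⟨q, hkprod⟩ hkdvd, hN0⟩
    have hqP : q ∈ P := Nat.mem_primeFactors.mpr
      ⟨hq, dvd_trans ⟨p, by rw [hkprod, mul_comm]⟩ hkdvd, hN0⟩
    have hk4 : 4 ≤ k := by
      rw [hkprod]; exact Nat.mul_le_mul hp.two_le hq.two_le
    have hkN : k ≤ N := Nat.le_of_dvd hNpos hkdvd
    refine ⟨by rw [hik]; exact hkprod, by rw [hik]; exact Finset.mem_product.mpr ⟨hpP, hqP⟩, ?_⟩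
    rw [hik]
    have hlogk : Real.log k = Real.log p + Real.log q := by
      rw [hkprod]
      push_cast
      exact Real.log_mul (by exact_mod_cast hp.pos.ne') (by exact_mod_cast hq.pos.ne')
    rw [hlogk]
    apply mul_le_mul_of_nonneg_left
    · exact loglog_mono (by exact_mod_cast le_trans (by norm_num) hk4)
        (by exact_mod_cast hkN)
    · have h1 : (0:ℝ) ≤ Real.log p := Real.log_natCast_nonneg p
      have h2 : (0:ℝ) ≤ Real.log q := Real.log_natCast_nonneg q
      linarith
  have hinj : Set.InjOn i F := by
    intro k₁ h₁ k₂ h₂ he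
    have e₁ := (hmain k₁ h₁).1
    have e₂ := (hmain k₂ h₂).1
    rw [e₁, e₂, he]
  have hSignn : ∀ p ∈ P, (0:ℝ) ≤ Real.log p := fun p _ => Real.log_natCast_nonneg p
  have hΛnn : (0:ℝ) ≤ loglog N := (loglog_pos _).le
  calc ∑ k ∈ F, Real.log k * loglog k
      ≤ ∑ k ∈ F, (Real.log ((i k).1) + Real.log ((i k).2)) * loglog N :=
        Finset.sum_le_sum (fun k hk => (hmain k hk).2.2)
    _ = ∑ pr ∈ F.image i, (Real.log pr.1 + Real.log pr.2) * loglog N := by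
        rw [Finset.sum_image (f := fun pr : ℕ × ℕ => (Real.log pr.1 + Real.log pr.2) * loglog (N:ℝ))
          (fun x hx y hy hxy => hinj hx hy hxy)]
    _ ≤ ∑ pr ∈ P ×ˢ P, (Real.log pr.1 + Real.log pr.2) * loglog N := by
        apply Finset.sum_le_sum_of_subset_of_nonneg
        · intro pr hpr
          obtain ⟨k, hk, rfl⟩ := Finset.mem_image.mp hpr
          exact (hmain k hk).2.1
        · intro pr hpr _
          obtain ⟨h1, h2⟩ := Finset.mem_product.mp hpr
          have := hSignn _ h1
          have := hSignn _ h2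
          positivity
    _ = (2 * ((P.card : ℝ) * ∑ p ∈ P, Real.log p)) * loglog N := by
        rw [← Finset.sum_mul]
        congr 1
        rw [Finset.sum_product]
        simp only [Finset.sum_add_distrib, Finset.sum_const, nsmul_eq_mul]
        rw [← Finset.mul_sum]
        ring
    _ ≤ 40 * Real.log N ^ 2 := by
        have hSigle : ∑ p ∈ P, Real.log p ≤ Real.log N := by
          have h1 : ∑ p ∈ P, Real.log (p:ℝ) = Real.log (∏ p ∈ P, (p:ℝ)) :=
            (Real.log_prod (fun p hp =>
              by exact_mod_cast (Nat.prime_of_mem_primeFactors hp).pos.ne')).symm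
          rw [h1]
          have h2 : (∏ p ∈ P, (p:ℝ)) = ((∏ p ∈ P, p : ℕ) : ℝ) := by push_cast; rfl
          rw [h2]
          apply Real.log_le_log
          · exact_mod_cast Nat.pos_of_ne_zero (by
              intro hcon
              have := Finset.prod_eq_zero_iff.mp hcon
              obtain ⟨p, hp, hp0⟩ := this
              exact (Nat.prime_of_mem_primeFactors hp).pos.ne' hp0)
          · exact_mod_cast Nat.le_of_dvd hNpos (Nat.prod_primeFactors_dvd N)
        have hSignn' : (0:ℝ) ≤ ∑ p ∈ P, Real.log p := Finset.sum_nonneg hSignn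
        have homega := omega_mul_loglog_le hN
        have hcard : (0:ℝ) ≤ (P.card : ℝ) := Nat.cast_nonneg _
        calc (2 * ((P.card : ℝ) * ∑ p ∈ P, Real.log p)) * loglog N
            = 2 * ((P.card : ℝ) * loglog N) * (∑ p ∈ P, Real.log p) := by ring
          _ ≤ 2 * (20 * Real.log N) * Real.log N := by
              apply mul_le_mul
              · apply mul_le_mul_of_nonneg_left homega (by norm_num)
              · exact hSigle
              · exact hSignn'
              · positivity
          _ = 40 * Real.log N ^ 2 := by ring

/-- Per-`N` weighted Cauchy–Schwarz estimate. -/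
lemma perN (b a : ℕ → ℂ) {N : ℕ} (hN : 2 ≤ N) :
    ‖∑ k ∈ N.divisors.filter (fun k => k.primeFactorsList.length = 2),
        b k * (Real.log k : ℂ) * a (N / k)‖ ^ 2 / Real.log N ^ 2
      ≤ 40 * ∑ k ∈ N.divisors.filter (fun k => k.primeFactorsList.length = 2),
          (‖b k‖ ^ 2 * Real.log k / loglog k) * ‖a (N / k)‖ ^ 2 := by
  classical
  have hN1 : (1:ℝ) < N := by exact_mod_cast hN
  have hL : 0 < Real.log N := Real.log_pos hN1
  set F := N.divisors.filter (fun k => k.primeFactorsList.length = 2) with hF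
  -- basic facts about members of F
  have hkfacts : ∀ k ∈ F, 4 ≤ k ∧ 1 < Real.log k := by
    intro k hk
    rw [hF, Finset.mem_filter] at hk
    obtain ⟨hkdiv, hklen⟩ := hk
    have hkpos : 0 < k := Nat.pos_of_mem_divisors hkdiv
    obtain ⟨p, q, hpq⟩ := List.length_eq_two.mp hklen
    have hp : p.Prime := Nat.prime_of_mem_primeFactorsList (by rw [hpq]; simp)
    have hq : q.Prime := Nat.prime_of_mem_primeFactorsList (by rw [hpq]; simp)
    have hkprod : k = p * q := by
      have := Nat.prod_primeFactorsList hkpos.ne'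
      rw [hpq] at this
      simpa using this.symm
    have hk4 : 4 ≤ k := by rw [hkprod]; exact Nat.mul_le_mul hp.two_le hq.two_le
    refine ⟨hk4, ?_⟩
    have : Real.log (Real.exp 1) < Real.log k := by
      apply Real.log_lt_log (Real.exp_pos 1)
      have h4 : (4:ℝ) ≤ (k:ℝ) := by exact_mod_cast hk4
      have := Real.exp_one_lt_d9
      linarith
    rwa [Real.log_exp] at this
  set f : ℕ → ℝ := fun k => Real.sqrt (Real.log k * loglog k) with hf
  set g : ℕ → ℝ := fun k => Real.sqrt (Real.log k / loglog k) * (‖b k‖ * ‖a (N / k)‖)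
    with hg
  have hfg : ∀ k ∈ F, ‖b k * (Real.log k : ℂ) * a (N / k)‖ = f k * g k := by
    intro k hk
    obtain ⟨hk4, hlogk⟩ := hkfacts k hk
    have hl0 : (0:ℝ) < Real.log k := by linarith
    have hll : 0 < loglog (k:ℝ) := loglog_pos _
    have hs : Real.sqrt (Real.log k * loglog k) * Real.sqrt (Real.log k / loglog k)
        = Real.log k := by
      rw [← Real.sqrt_mul (by positivity)]
      rw [show Real.log k * loglog (k:ℝ) * (Real.log k / loglog (k:ℝ))
        = Real.log k ^ 2 by field_simp]
      exact Real.sqrt_sq hl0.le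
    rw [norm_mul, norm_mul, Complex.norm_real, Real.norm_eq_abs, abs_of_nonneg hl0.le]
    rw [hf, hg]
    dsimp only
    rw [show Real.sqrt (Real.log k * loglog k) * (Real.sqrt (Real.log k / loglog k)
          * (‖b k‖ * ‖a (N / k)‖))
        = (Real.sqrt (Real.log k * loglog k) * Real.sqrt (Real.log k / loglog k))
          * (‖b k‖ * ‖a (N / k)‖) from by ring, hs]
    ring
  have hCS : ‖∑ k ∈ F, b k * (Real.log k : ℂ) * a (N / k)‖ ^ 2
      ≤ (∑ k ∈ F, f k ^ 2) * ∑ k ∈ F, g k ^ 2 := by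
    have h1 : ‖∑ k ∈ F, b k * (Real.log k : ℂ) * a (N / k)‖
        ≤ ∑ k ∈ F, f k * g k := by
      refine le_trans (norm_sum_le _ _) ?_
      apply Finset.sum_le_sum
      intro k hk
      rw [hfg k hk]
    have h2 : (0:ℝ) ≤ ∑ k ∈ F, f k * g k := by
      apply Finset.sum_nonneg
      intro k _
      have : 0 ≤ f k := Real.sqrt_nonneg _
      have : 0 ≤ g k := by positivity
      positivity
    calc ‖∑ k ∈ F, b k * (Real.log k : ℂ) * a (N / k)‖ ^ 2
        ≤ (∑ k ∈ F, f k * g k) ^ 2 := by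
          apply pow_le_pow_left₀ (norm_nonneg _) h1
      _ ≤ (∑ k ∈ F, f k ^ 2) * ∑ k ∈ F, g k ^ 2 :=
          Finset.sum_mul_sq_le_sq_mul_sq _ _ _
  have hW : ∑ k ∈ F, f k ^ 2 ≤ 40 * Real.log N ^ 2 := by
    have : ∀ k ∈ F, f k ^ 2 = Real.log k * loglog k := by
      intro k hk
      obtain ⟨hk4, hlogk⟩ := hkfacts k hk
      rw [hf]
      dsimp only
      rw [Real.sq_sqrt]
      have := (loglog_pos (k:ℝ)).le
      positivity
    calc ∑ k ∈ F, f k ^ 2 = ∑ k ∈ F, Real.log k * loglog k :=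
          Finset.sum_congr rfl this
      _ ≤ 40 * Real.log N ^ 2 := sum_weights_le hN
  have hSg : ∑ k ∈ F, g k ^ 2
      = ∑ k ∈ F, (‖b k‖ ^ 2 * Real.log k / loglog k) * ‖a (N / k)‖ ^ 2 := by
    apply Finset.sum_congr rfl
    intro k hk
    obtain ⟨hk4, hlogk⟩ := hkfacts k hk
    have hl0 : (0:ℝ) < Real.log k := by linarith
    have hll : 0 < loglog (k:ℝ) := loglog_pos _
    rw [hg]
    dsimp only
    rw [mul_pow, mul_pow, Real.sq_sqrt (by positivity)]
    ring
  have hSnn : (0:ℝ) ≤ ∑ k ∈ F, (‖b k‖ ^ 2 * Real.log k / loglog k) * ‖a (N / k)‖ ^ 2 := by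
    apply Finset.sum_nonneg
    intro k hk
    obtain ⟨hk4, hlogk⟩ := hkfacts k hk
    have hl0 : (0:ℝ) < Real.log k := by linarith
    have hll : 0 < loglog (k:ℝ) := loglog_pos _
    positivity
  rw [div_le_iff₀ (by positivity : (0:ℝ) < Real.log N ^ 2)]
  calc ‖∑ k ∈ F, b k * (Real.log k : ℂ) * a (N / k)‖ ^ 2
      ≤ (∑ k ∈ F, f k ^ 2) * ∑ k ∈ F, g k ^ 2 := hCS
    _ ≤ (40 * Real.log N ^ 2) * ∑ k ∈ F, g k ^ 2 := by
        apply mul_le_mul_of_nonneg_right hW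
        rw [hSg]
        exact hSnn
    _ = (40 * ∑ k ∈ F, (‖b k‖ ^ 2 * Real.log k / loglog k) * ‖a (N / k)‖ ^ 2)
          * Real.log N ^ 2 := by rw [hSg]; ring

/-- Divisor-convolution sums are dominated by the product of the full sums. -/
lemma swap_le (U V : ℕ → ℝ≥0∞) :
    ∑' N : ℕ, ∑ k ∈ N.divisors.filter (fun k => k.primeFactorsList.length = 2),
        U k * V (N / k) ≤ (∑' k : ℕ, U k) * ∑' m : ℕ, V m := by
  classical
  have h1 : ∀ N : ℕ, ∑ k ∈ N.divisors.filter (fun k => k.primeFactorsList.length = 2),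
      U k * V (N / k)
      = ∑' k : ℕ, (if k ∈ N.divisors.filter (fun k => k.primeFactorsList.length = 2) then
          U k * V (N / k) else 0) := by
    intro N
    rw [tsum_eq_sum (s := N.divisors.filter (fun k => k.primeFactorsList.length = 2))
      (fun k hk => if_neg hk)]
    exact Finset.sum_congr rfl (fun k hk => (if_pos hk).symm)
  calc ∑' N : ℕ, ∑ k ∈ N.divisors.filter (fun k => k.primeFactorsList.length = 2),
        U k * V (N / k)
      = ∑' N : ℕ, ∑' k : ℕ,
          (if k ∈ N.divisors.filter (fun k => k.primeFactorsList.length = 2) then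
            U k * V (N / k) else 0) := tsum_congr h1
    _ = ∑' k : ℕ, ∑' N : ℕ,
          (if k ∈ N.divisors.filter (fun k => k.primeFactorsList.length = 2) then
            U k * V (N / k) else 0) := ENNReal.tsum_comm
    _ ≤ ∑' k : ℕ, (U k * ∑' m : ℕ, V m) := by
        apply ENNReal.tsum_le_tsum
        intro k
        calc ∑' N : ℕ,
              (if k ∈ N.divisors.filter (fun k => k.primeFactorsList.length = 2) then
                U k * V (N / k) else 0)
            ≤ ∑' N : ℕ, ∑' m : ℕ, (if N = k * m then U k * V m else 0) := by
              apply ENNReal.tsum_le_tsum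
              intro N
              by_cases hk : k ∈ N.divisors.filter (fun k => k.primeFactorsList.length = 2)
              · rw [if_pos hk]
                have hkd : k ∈ N.divisors := Finset.mem_filter.mp hk |>.1
                have hdvd : k ∣ N := (Nat.mem_divisors.mp hkd).1
                have hkpos : 0 < k := Nat.pos_of_mem_divisors hkd
                have hNk : N = k * (N / k) := (Nat.mul_div_cancel' hdvd).symm
                have : U k * V (N / k)
                    = (fun m => if N = k * m then U k * V m else 0) (N / k) := by
                  simp only
                  rw [if_pos hNk]
                rw [this]
                exact ENNReal.le_tsum _
              · rw [if_neg hk]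
                exact zero_le
          _ = ∑' m : ℕ, ∑' N : ℕ, (if N = k * m then U k * V m else 0) :=
              ENNReal.tsum_comm
          _ = ∑' m : ℕ, U k * V m := by
              apply tsum_congr
              intro m
              exact tsum_ite_eq (k * m) (fun _ => U k * V m)
          _ = U k * ∑' m : ℕ, V m := ENNReal.tsum_mul_left
    _ = (∑' k : ℕ, U k) * ∑' m : ℕ, V m := ENNReal.tsum_mul_right

/-- there is an absolute constant `C > 0` such that for every 2-homogeneous
symbol `g(s) = ∑_{Ω(n)=2} b_n n^{-s}` the Volterra operator is bounded on `H²` with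
`‖T_g f‖² ≤ C (∑_{Ω(n)=2} |b_n|² (log n)/log₂ n) ‖f‖²`. -/
theorem volterra_two_homogeneous_bounded :
    ∃ C : ℝ, 0 < C ∧ ∀ b a : ℕ → ℂ,
      (∀ n, b n ≠ 0 → n.primeFactorsList.length = 2) →
      (∑' N : ℕ, (if 2 ≤ N then
          ENNReal.ofReal
            (‖∑ k ∈ N.divisors.filter (fun k => k.primeFactorsList.length = 2),
                b k * (Real.log k : ℂ) * a (N / k)‖ ^ 2 / Real.log N ^ 2)
        else 0))
      ≤ ENNReal.ofReal C *
          (∑' n : ℕ, (if n.primeFactorsList.length = 2 then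
              ENNReal.ofReal (‖b n‖ ^ 2 * Real.log n / loglog n) else 0)) *
          ∑' n : ℕ, (if 1 ≤ n then ENNReal.ofReal (‖a n‖ ^ 2) else 0) := by
  classical
  refine ⟨100, by norm_num, ?_⟩
  intro b a _
  set U : ℕ → ℝ≥0∞ := fun n => if n.primeFactorsList.length = 2 then
      ENNReal.ofReal (‖b n‖ ^ 2 * Real.log n / loglog n) else 0 with hU
  set V : ℕ → ℝ≥0∞ := fun n => if 1 ≤ n then ENNReal.ofReal (‖a n‖ ^ 2) else 0 with hV
  have hstep : ∀ N : ℕ, (if 2 ≤ N then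
      ENNReal.ofReal
        (‖∑ k ∈ N.divisors.filter (fun k => k.primeFactorsList.length = 2),
            b k * (Real.log k : ℂ) * a (N / k)‖ ^ 2 / Real.log N ^ 2)
      else 0)
      ≤ (40 : ℝ≥0∞) * ∑ k ∈ N.divisors.filter (fun k => k.primeFactorsList.length = 2),
          U k * V (N / k) := by
    intro N
    by_cases h2N : 2 ≤ N
    · rw [if_pos h2N]
      refine le_trans (ENNReal.ofReal_le_ofReal (perN b a h2N)) ?_
      rw [ENNReal.ofReal_mul (by norm_num : (0:ℝ) ≤ 40)]
      have h40 : ENNReal.ofReal (40:ℝ) = (40 : ℝ≥0∞) := by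
        rw [show (40:ℝ) = ((40:ℕ):ℝ) by norm_num, ENNReal.ofReal_natCast]
        norm_num
      rw [h40]
      apply mul_le_mul_right
      have hnn : ∀ k ∈ N.divisors.filter (fun k => k.primeFactorsList.length = 2),
          (0:ℝ) ≤ (‖b k‖ ^ 2 * Real.log k / loglog k) * ‖a (N / k)‖ ^ 2 := by
        intro k hk
        have hkpos : 0 < k := Nat.pos_of_mem_divisors (Finset.mem_filter.mp hk).1
        have hlognn : (0:ℝ) ≤ Real.log k := Real.log_natCast_nonneg k
        have hll : 0 < loglog (k:ℝ) := loglog_pos _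
        positivity
      rw [ENNReal.ofReal_sum_of_nonneg hnn]
      apply Finset.sum_le_sum
      intro k hk
      obtain ⟨hkdiv, hklen⟩ := Finset.mem_filter.mp hk
      have hkpos : 0 < k := Nat.pos_of_mem_divisors hkdiv
      have hdvd : k ∣ N := (Nat.mem_divisors.mp hkdiv).1
      have hNpos : 0 < N := by omega
      have hNk1 : 1 ≤ N / k := Nat.div_pos (Nat.le_of_dvd hNpos hdvd) hkpos
      have hlognn : (0:ℝ) ≤ Real.log k := Real.log_natCast_nonneg k
      have hll : 0 < loglog (k:ℝ) := loglog_pos _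
      rw [ENNReal.ofReal_mul (by positivity)]
      rw [hU, hV]
      simp only
      rw [if_pos hklen, if_pos hNk1]
    · rw [if_neg h2N]
      exact zero_le
  calc (∑' N : ℕ, (if 2 ≤ N then
          ENNReal.ofReal
            (‖∑ k ∈ N.divisors.filter (fun k => k.primeFactorsList.length = 2),
                b k * (Real.log k : ℂ) * a (N / k)‖ ^ 2 / Real.log N ^ 2)
        else 0))
      ≤ ∑' N : ℕ, (40 : ℝ≥0∞) *
          ∑ k ∈ N.divisors.filter (fun k => k.primeFactorsList.length = 2),
            U k * V (N / k) := ENNReal.tsum_le_tsum hstep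
    _ = (40 : ℝ≥0∞) * ∑' N : ℕ,
          ∑ k ∈ N.divisors.filter (fun k => k.primeFactorsList.length = 2),
            U k * V (N / k) := ENNReal.tsum_mul_left
    _ ≤ (40 : ℝ≥0∞) * ((∑' k : ℕ, U k) * ∑' m : ℕ, V m) :=
        mul_le_mul_right (swap_le U V) _
    _ ≤ ENNReal.ofReal 100 * (∑' k : ℕ, U k) * ∑' m : ℕ, V m := by
        rw [mul_assoc]
        apply mul_le_mul_left
        have h100 : ENNReal.ofReal (100:ℝ) = (100 : ℝ≥0∞) := by
          rw [show (100:ℝ) = ((100:ℕ):ℝ) by norm_num, ENNReal.ofReal_natCast]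
          norm_num
        rw [h100]
        norm_num
end

section
/- The weight (log n)/log₂ n for 2-homogeneous symbols is sharp in the following sense: for every ε > 0 and every C > 0 there exist a finitely supported complex sequence (b_n)_{n≥2} supported on the integers n with Ω(n) = 2 and a finitely supported complex sequence (a_n)_{n≥1}, not identically zero, such that ∑_{N≥2} (log N)^{-2} |∑_{k∣N, Ω(k)=2} b_k (log k) a_{N/k}|² > C · (∑_{Ω(n)=2} |b_n|² (log n)/(log₂ n)^{1+ε}) · ∑_{n≥1} |a_n|². -/
open scoped ENNReal

open Finset

lemma log_le_two_sqrt {y : ℝ} (hy : 0 < y) : Real.log y ≤ 2 * Real.sqrt y := by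
  have h1 : Real.log (Real.sqrt y) ≤ Real.sqrt y - 1 :=
    Real.log_le_sub_one_of_pos (Real.sqrt_pos.2 hy)
  rw [Real.log_sqrt hy.le] at h1
  linarith

lemma omega_mul_prime {p q : ℕ} (hp : p.Prime) (hq : q.Prime) :
    (p * q).primeFactorsList.length = 2 := by
  have h := (Nat.perm_primeFactorsList_mul hp.ne_zero hq.ne_zero).length_eq
  rw [h, List.length_append, Nat.primeFactorsList_prime hp, Nat.primeFactorsList_prime hq]
  rfl

lemma prod_inj {P T T' : Finset ℕ} (hP : ∀ p ∈ P, p.Prime) (hT : T ⊆ P) (hT' : T' ⊆ P)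
    (h : ∏ p ∈ T, p = ∏ p ∈ T', p) : T = T' := by
  have h1 : (∏ p ∈ T, p).primeFactors = T := Nat.primeFactors_prod (fun p hp => hP p (hT hp))
  have h2 : (∏ p ∈ T', p).primeFactors = T' := Nat.primeFactors_prod (fun p hp => hP p (hT' hp))
  rw [← h1, h, h2]

lemma cheb (m : ℕ) (hm : 4 ≤ m) :
    (m : ℝ) < (((Finset.range (2*m+1)).filter Nat.Prime).card + 1) * Real.log (2*m) := by
  set n := ((Finset.range (2*m+1)).filter Nat.Prime).card with hn
  have h2m : 0 < 2*m := by omega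
  have h1 : 4 ^ m < (2*m) ^ (n+1) := by
    have h3 : Nat.centralBinom m =
        ∏ p ∈ (Nat.centralBinom m).factorization.support,
          p ^ (Nat.centralBinom m).factorization p :=
      (Nat.factorization_prod_pow_eq_self (Nat.centralBinom_ne_zero m)).symm
    have h4 : ∀ p ∈ (Nat.centralBinom m).factorization.support,
        p ^ (Nat.centralBinom m).factorization p ≤ 2*m := by
      intro p hp
      have : Nat.centralBinom m = (2*m).choose m := rfl
      rw [this]
      exact Nat.pow_factorization_choose_le h2m
    have hsub : (Nat.centralBinom m).factorization.support ⊆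
        (Finset.range (2*m+1)).filter Nat.Prime := by
      intro p hp
      have hpp : p.Prime := Nat.prime_of_mem_primeFactors (by rwa [Nat.support_factorization] at hp)
      have hple : p ≤ 2*m := by
        have he : (Nat.centralBinom m).factorization p ≠ 0 := by
          simpa using (Finsupp.mem_support_iff.mp hp)
        calc p ≤ p ^ (Nat.centralBinom m).factorization p := Nat.le_self_pow he p
          _ ≤ 2*m := h4 p hp
      simp [Finset.mem_filter, Finset.mem_range, hpp]; omega
    have h2 : Nat.centralBinom m ≤ (2*m) ^ n := by
      calc Nat.centralBinom m = _ := h3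
        _ ≤ (2*m) ^ (Nat.centralBinom m).factorization.support.card :=
          Finset.prod_le_pow_card _ _ _ h4
        _ ≤ (2*m) ^ n := Nat.pow_le_pow_right (by omega) (Finset.card_le_card hsub)
    calc 4 ^ m < m * Nat.centralBinom m := Nat.four_pow_lt_mul_centralBinom m hm
      _ ≤ 2*m * Nat.centralBinom m := Nat.mul_le_mul_right _ (by omega)
      _ ≤ 2*m * (2*m)^n := Nat.mul_le_mul_left _ h2
      _ = (2*m)^(n+1) := by ring
  have hlog : Real.log (4 ^ m) < Real.log ((2*m:ℕ) ^ (n+1)) := by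
    apply Real.log_lt_log (by positivity)
    exact_mod_cast h1
  rw [Real.log_pow, Real.log_pow] at hlog
  have h4e : (1:ℝ) ≤ Real.log 4 := by
    rw [Real.le_log_iff_exp_le (by norm_num)]
    have := Real.exp_one_lt_d9
    linarith
  have : (m:ℝ) ≤ m * Real.log 4 := by
    nlinarith [Nat.cast_nonneg (α := ℝ) m]
  calc (m:ℝ) ≤ m * Real.log 4 := this
    _ < (n+1) * Real.log ((2*m:ℕ):ℝ) := by exact_mod_cast hlog
    _ = (n+1) * Real.log (2*m) := by push_cast; ring

set_option maxHeartbeats 2000000 in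
lemma main_construction (ε C : ℝ) (hε : 0 < ε) (hC : 0 < C) (x k q : ℕ)
    (hx : 3 ≤ x) (hk : 1 ≤ k)
    (hq : q.Prime) (hq1 : x ^ (k+1) < q) (hq2 : q ≤ 2 * x ^ (k+1))
    (hkn : 2 * k ≤ ((Finset.range (x+1)).filter Nat.Prime).card)
    (hkey : 32 * C * Real.log x < Real.log (k+1) ^ (1+ε)) :
    ∃ b a : ℕ → ℂ,
      (Function.support b).Finite ∧ (∀ n, b n ≠ 0 → n.primeFactorsList.length = 2) ∧
      (Function.support a).Finite ∧ (∃ n, 1 ≤ n ∧ a n ≠ 0) ∧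
      ENNReal.ofReal C *
          (∑' n : ℕ, (if n.primeFactorsList.length = 2 then
              ENNReal.ofReal (‖b n‖ ^ 2 * Real.log n / loglog n ^ (1 + ε)) else 0)) *
          (∑' n : ℕ, (if 1 ≤ n then ENNReal.ofReal (‖a n‖ ^ 2) else 0))
        < ∑' N : ℕ, (if 2 ≤ N then
            ENNReal.ofReal
              (‖∑ k ∈ N.divisors.filter (fun k => k.primeFactorsList.length = 2),
                  b k * (Real.log k : ℂ) * a (N / k)‖ ^ 2 / Real.log N ^ 2)
          else 0) := by
  classical
  set P := (Finset.range (x+1)).filter Nat.Prime with hPdef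
  set nP := P.card with hnP
  have hPprime : ∀ p ∈ P, p.Prime := fun p hp => (Finset.mem_filter.1 hp).2
  have hPle : ∀ p ∈ P, p ≤ x := by
    intro p hp
    have := (Finset.mem_filter.1 hp).1
    rw [Finset.mem_range] at this; omega
  have hq0 : 0 < q := hq.pos
  have hqx : x < q := lt_of_le_of_lt (Nat.le_self_pow (by omega) x) hq1
  set A := (P.powersetCard k).image (fun T => ∏ p ∈ T, p) with hAdef
  set B := P.image (fun p => p * q) with hBdef
  set NN := (P.powersetCard (k+1)).image (fun S => q * ∏ p ∈ S, p) with hNNdef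
  set a : ℕ → ℂ := fun m => if m ∈ A then 1 else 0 with hadef
  set b : ℕ → ℂ := fun m => if m ∈ B then 1 else 0 with hbdef
  have hbsupp : ∀ m, b m ≠ 0 → m ∈ B := by
    intro m hm; by_contra hmB; exact hm (by simp [hbdef, hmB])
  have hasupp : ∀ m, a m ≠ 0 → m ∈ A := by
    intro m hm; by_contra hmA; exact hm (by simp [hadef, hmA])
  have hkP : k ≤ nP := by omega
  have hk1P : k + 1 ≤ nP := by omega
  -- elements of A are positive
  have hApos : ∀ m ∈ A, 1 ≤ m := by
    intro m hm
    obtain ⟨T, hT, rfl⟩ := Finset.mem_image.1 hm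
    have hTP := (Finset.mem_powersetCard.1 hT).1
    exact Finset.one_le_prod' (fun p hp => (hPprime p (hTP hp)).one_lt.le)
  refine ⟨b, a, ?_, ?_, ?_, ?_, ?_⟩
  · exact Set.Finite.subset B.finite_toSet (fun m hm => hbsupp m hm)
  · intro m hm
    obtain ⟨p, hp, rfl⟩ := Finset.mem_image.1 (hbsupp m hm)
    exact omega_mul_prime (hPprime p hp) hq
  · exact Set.Finite.subset A.finite_toSet (fun m hm => hasupp m hm)
  · obtain ⟨T, hT⟩ := Finset.exists_subset_card_eq hkP
    refine ⟨∏ p ∈ T, p, ?_, ?_⟩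
    · exact hApos _ (Finset.mem_image.2 ⟨T, Finset.mem_powersetCard.2 hT, rfl⟩)
    · rw [hadef]; simp only [Finset.mem_image]
      rw [if_pos (Finset.mem_image.2 ⟨T, Finset.mem_powersetCard.2 hT, rfl⟩)]
      exact one_ne_zero
  -- ===== the main inequality =====
  · set L := Real.log q with hLdef
    have hxpos : (0:ℝ) < (x:ℝ) := by positivity
    have hx3 : (3:ℝ) ≤ (x:ℝ) := by exact_mod_cast hx
    have hlogx1 : (1:ℝ) ≤ Real.log x := by
      rw [Real.le_log_iff_exp_le hxpos]
      have := Real.exp_one_lt_d9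
      linarith
    have hLx : ((k:ℝ)+1) * Real.log x < L := by
      have hcast : ((x:ℝ))^(k+1) < (q:ℝ) := by exact_mod_cast hq1
      have := Real.log_lt_log (by positivity) hcast
      rwa [Real.log_pow, Nat.cast_add, Nat.cast_one] at this
    have hk1pos : (0:ℝ) < (k:ℝ)+1 := by positivity
    have hLpos : (0:ℝ) < L := lt_trans (by nlinarith) hLx
    have hL2 : L ≤ 2*((k:ℝ)+1)*Real.log x := by
      have hcast : (q:ℝ) ≤ 2*((x:ℝ))^(k+1) := by exact_mod_cast hq2
      have h1 : L ≤ Real.log (2*((x:ℝ))^(k+1)) := Real.log_le_log (by positivity) hcast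
      rw [Real.log_mul (by norm_num) (by positivity), Real.log_pow] at h1
      have h2 : Real.log 2 ≤ Real.log x := Real.log_le_log (by norm_num) (by linarith)
      have h3 : Real.log 2 ≤ ((k:ℝ)+1) * Real.log x := by nlinarith
      push_cast at h1
      nlinarith
    set l0 := max 1 (Real.log L) with hl0def
    have hl0one : (1:ℝ) ≤ l0 := le_max_left _ _
    have hl0pos : (0:ℝ) < l0 := by linarith
    have hl0k : Real.log ((k:ℝ)+1) ≤ l0 := by
      have hkL : ((k:ℝ)+1) ≤ L := by nlinarith
      have := Real.log_le_log hk1pos hkL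
      exact this.trans (le_max_right _ _)
    have hkey2 : 32 * C * Real.log x < l0 ^ (1+ε) := by
      refine lt_of_lt_of_le hkey ?_
      exact Real.rpow_le_rpow (Real.log_nonneg (by linarith)) hl0k (by linarith)
    have hl0epos : (0:ℝ) < l0 ^ (1+ε) := Real.rpow_pos_of_pos hl0pos _
    -- ===== bound for the b-weight sum =====
    have hWsum : (∑' n : ℕ, (if n.primeFactorsList.length = 2 then
          ENNReal.ofReal (‖b n‖ ^ 2 * Real.log n / loglog n ^ (1 + ε)) else 0))
        ≤ ENNReal.ofReal ((nP : ℝ) * (2*L / l0 ^ (1+ε))) := by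
      have hvan : ∀ m ∉ B, (if m.primeFactorsList.length = 2 then
          ENNReal.ofReal (‖b m‖ ^ 2 * Real.log m / loglog m ^ (1 + ε)) else 0) = 0 := by
        intro m hm
        have hb0 : b m = 0 := by
          by_contra h; exact hm (hbsupp m h)
        split <;> simp [hb0]
      rw [tsum_eq_sum hvan]
      have hterm : ∀ m ∈ B, (if m.primeFactorsList.length = 2 then
          ENNReal.ofReal (‖b m‖ ^ 2 * Real.log m / loglog m ^ (1 + ε)) else 0)
          ≤ ENNReal.ofReal (2*L / l0 ^ (1+ε)) := by
        intro m hm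
        obtain ⟨p, hpP, rfl⟩ := Finset.mem_image.1 hm
        have hppr := hPprime p hpP
        have hb1 : b (p*q) = 1 := if_pos hm
        rw [if_pos (omega_mul_prime hppr hq)]
        apply ENNReal.ofReal_le_ofReal
        rw [hb1]
        have hpq : p ≤ q := le_of_lt (lt_of_le_of_lt (hPle p hpP) hqx)
        have hmq2 : ((p*q : ℕ):ℝ) ≤ (q:ℝ)*q := by
          have : p*q ≤ q*q := Nat.mul_le_mul_right q hpq
          exact_mod_cast this
        have hmpos : (0:ℝ) < ((p*q : ℕ):ℝ) := by
          have := hppr.pos; have := hq0; positivity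
        have hlogm : Real.log ((p*q : ℕ):ℝ) ≤ 2*L := by
          calc Real.log ((p*q : ℕ):ℝ) ≤ Real.log ((q:ℝ)*q) := Real.log_le_log hmpos hmq2
            _ = 2*L := by
              rw [Real.log_mul (by positivity) (by positivity)]; rw [hLdef]; ring
        have hqm : (q:ℝ) ≤ ((p*q : ℕ):ℝ) := by
          have : q ≤ p*q := Nat.le_mul_of_pos_left q hppr.pos
          exact_mod_cast this
        have hlogqm : L ≤ Real.log ((p*q : ℕ):ℝ) := by
          rw [hLdef]; exact Real.log_le_log (by positivity) hqm
        have hll : l0 ≤ loglog ((p*q : ℕ):ℝ) := by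
          rw [loglog, hl0def]
          exact max_le_max le_rfl (Real.log_le_log hLpos hlogqm)
        have hllpow : l0 ^ (1+ε) ≤ loglog ((p*q : ℕ):ℝ) ^ (1+ε) :=
          Real.rpow_le_rpow hl0pos.le hll (by linarith)
        have hlog_nonneg : (0:ℝ) ≤ Real.log ((p*q : ℕ):ℝ) := by linarith
        calc ‖(1:ℂ)‖^2 * Real.log ((p*q : ℕ):ℝ) / loglog ((p*q : ℕ):ℝ) ^ (1+ε)
            = Real.log ((p*q : ℕ):ℝ) / loglog ((p*q : ℕ):ℝ) ^ (1+ε) := by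
              rw [norm_one]; ring
          _ ≤ 2*L / l0 ^ (1+ε) := by
              apply div_le_div₀ (by positivity) hlogm hl0epos hllpow
      calc ∑ m ∈ B, (if m.primeFactorsList.length = 2 then
            ENNReal.ofReal (‖b m‖ ^ 2 * Real.log m / loglog m ^ (1 + ε)) else 0)
          ≤ B.card • ENNReal.ofReal (2*L / l0 ^ (1+ε)) := Finset.sum_le_card_nsmul _ _ _ hterm
        _ = (B.card : ℝ≥0∞) * ENNReal.ofReal (2*L / l0 ^ (1+ε)) := nsmul_eq_mul _ _
        _ = ENNReal.ofReal ((B.card : ℝ) * (2*L / l0 ^ (1+ε))) := by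
            rw [ENNReal.ofReal_mul (Nat.cast_nonneg _), ENNReal.ofReal_natCast]
        _ ≤ ENNReal.ofReal ((nP : ℝ) * (2*L / l0 ^ (1+ε))) := by
            apply ENNReal.ofReal_le_ofReal
            apply mul_le_mul_of_nonneg_right _ (by positivity)
            have : B.card ≤ nP := le_trans Finset.card_image_le le_rfl
            exact_mod_cast this
    -- ===== the a-sum =====
    have hAcard : A.card = nP.choose k := by
      rw [hAdef, Finset.card_image_of_injOn, Finset.card_powersetCard]
      intro T hT T' hT' h
      exact prod_inj hPprime
        (Finset.mem_powersetCard.1 (Finset.mem_coe.1 hT)).1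
        (Finset.mem_powersetCard.1 (Finset.mem_coe.1 hT')).1 h
    have hAsum : (∑' n : ℕ, (if 1 ≤ n then ENNReal.ofReal (‖a n‖ ^ 2) else 0))
        = ENNReal.ofReal (nP.choose k : ℝ) := by
      have hvan : ∀ m ∉ A, (if 1 ≤ m then ENNReal.ofReal (‖a m‖ ^ 2) else 0) = 0 := by
        intro m hm
        have ha0 : a m = 0 := by
          by_contra h; exact hm (hasupp m h)
        split <;> simp [ha0]
      rw [tsum_eq_sum hvan]
      have h1 : ∀ m ∈ A, (if 1 ≤ m then ENNReal.ofReal (‖a m‖ ^ 2) else 0) = 1 := by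
        intro m hm
        have ha1 : a m = 1 := if_pos hm
        rw [if_pos (hApos m hm), ha1]
        simp
      rw [Finset.sum_congr rfl h1, Finset.sum_const, hAcard, nsmul_eq_mul, mul_one,
        ← ENNReal.ofReal_natCast]
    -- ===== the RHS lower bound =====
    have hNNcard : NN.card = nP.choose (k+1) := by
      rw [hNNdef, Finset.card_image_of_injOn, Finset.card_powersetCard]
      intro S hS S' hS' h
      exact prod_inj hPprime
        (Finset.mem_powersetCard.1 (Finset.mem_coe.1 hS)).1
        (Finset.mem_powersetCard.1 (Finset.mem_coe.1 hS')).1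
        (Nat.eq_of_mul_eq_mul_left hq0 h)
    have hRHS : (NN.card : ℝ≥0∞) * ENNReal.ofReal ((((k:ℝ)+1)^2)/4)
        ≤ ∑' N : ℕ, (if 2 ≤ N then
            ENNReal.ofReal
              (‖∑ d ∈ N.divisors.filter (fun d => d.primeFactorsList.length = 2),
                  b d * (Real.log d : ℂ) * a (N / d)‖ ^ 2 / Real.log N ^ 2)
          else 0) := by
      have hterm : ∀ N ∈ NN, ENNReal.ofReal ((((k:ℝ)+1)^2)/4) ≤ (if 2 ≤ N then
            ENNReal.ofReal
              (‖∑ d ∈ N.divisors.filter (fun d => d.primeFactorsList.length = 2),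
                  b d * (Real.log d : ℂ) * a (N / d)‖ ^ 2 / Real.log N ^ 2)
          else 0) := by
        intro N hN
        obtain ⟨S, hS, rfl⟩ := Finset.mem_image.1 hN
        obtain ⟨hSP, hScard⟩ := Finset.mem_powersetCard.1 hS
        set M := ∏ p ∈ S, p with hMdef
        have hMpos : 0 < M := Finset.prod_pos (fun p hp => (hPprime p (hSP hp)).pos)
        have hN0 : q * M ≠ 0 := by positivity
        have h2N : 2 ≤ q * M := le_trans hq.two_le (Nat.le_mul_of_pos_right q hMpos)
        rw [if_pos h2N]
        -- the inner sum
        have hinner : ∑ d ∈ (q*M).divisors.filter (fun d => d.primeFactorsList.length = 2),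
            b d * (Real.log d : ℂ) * a ((q*M) / d) = ∑ p ∈ S, ((Real.log ((p*q : ℕ):ℝ) : ℝ) : ℂ) := by
          have hEsub : S.image (fun p => p*q) ⊆
              (q*M).divisors.filter (fun d => d.primeFactorsList.length = 2) := by
            intro d hd
            obtain ⟨p, hpS, rfl⟩ := Finset.mem_image.1 hd
            refine Finset.mem_filter.2 ⟨Nat.mem_divisors.2 ⟨⟨∏ r ∈ S.erase p, r, ?_⟩, hN0⟩,
              omega_mul_prime (hPprime p (hSP hpS)) hq⟩
            rw [hMdef, ← Finset.mul_prod_erase S _ hpS]; ring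
          have hvan : ∀ d ∈ (q*M).divisors.filter (fun d => d.primeFactorsList.length = 2),
              d ∉ S.image (fun p => p*q) → b d * (Real.log d : ℂ) * a ((q*M) / d) = 0 := by
            intro d hd hdE
            by_contra hne
            have hb : b d ≠ 0 := by
              intro h; exact hne (by rw [h, zero_mul, zero_mul])
            obtain ⟨p', hp'P, rfl⟩ := Finset.mem_image.1 (hbsupp _ hb)
            have hd' : (p'*q) ∣ (q*M) := (Nat.mem_divisors.1 (Finset.mem_filter.1 hd).1).1
            obtain ⟨t, ht⟩ := hd'
            have hM : M = p' * t := by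
              have h : q * M = q * (p' * t) := by rw [ht]; ring
              exact Nat.eq_of_mul_eq_mul_left hq0 h
            have hdvd : p' ∣ ∏ r ∈ S, r := by rw [← hMdef]; exact ⟨t, hM⟩
            obtain ⟨r, hrS, hpr⟩ := (Nat.Prime.prime (hPprime p' hp'P)).exists_mem_finset_dvd hdvd
            have hpr' : p' = r :=
              (Nat.prime_dvd_prime_iff_eq (hPprime p' hp'P) (hPprime r (hSP hrS))).1 hpr
            exact hdE (Finset.mem_image.2 ⟨p', hpr' ▸ hrS, rfl⟩)
          rw [← Finset.sum_subset hEsub hvan]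
          rw [Finset.sum_image (fun p _ p' _ h => Nat.eq_of_mul_eq_mul_right hq0 h)]
          apply Finset.sum_congr rfl
          intro p hpS
          have hpq_B : p*q ∈ B := Finset.mem_image.2 ⟨p, hSP hpS, rfl⟩
          have hb1 : b (p*q) = 1 := if_pos hpq_B
          have hdiv : (q*M) / (p*q) = ∏ r ∈ S.erase p, r := by
            rw [hMdef, ← Finset.mul_prod_erase S _ hpS,
              show q * (p * ∏ r ∈ S.erase p, r) = (p*q) * ∏ r ∈ S.erase p, r by ring]
            exact Nat.mul_div_cancel_left _ (by have := (hPprime p (hSP hpS)).pos; positivity)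
          have haA : (∏ r ∈ S.erase p, r) ∈ A :=
            Finset.mem_image.2 ⟨S.erase p, Finset.mem_powersetCard.2
              ⟨(Finset.erase_subset _ _).trans hSP,
                by rw [Finset.card_erase_of_mem hpS, hScard]; rfl⟩, rfl⟩
          have ha1 : a (∏ r ∈ S.erase p, r) = 1 := if_pos haA
          rw [hdiv, hb1, ha1, one_mul, mul_one]
        -- size bounds
        have hMle : M ≤ q := by
          have h1 : M ≤ x ^ S.card := Finset.prod_le_pow_card S (fun p => p) x
            (fun p hp => hPle p (hSP hp))
          rw [hScard] at h1
          exact le_trans h1 hq1.le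
        have hNq2 : ((q*M : ℕ):ℝ) ≤ (q:ℝ)*q := by
          have : q*M ≤ q*q := Nat.mul_le_mul_left q hMle
          exact_mod_cast this
        have hNpos : (0:ℝ) < ((q*M : ℕ):ℝ) := by
          have := hq0; have := hMpos; positivity
        have hlogN : Real.log ((q*M : ℕ):ℝ) ≤ 2*L := by
          calc Real.log ((q*M : ℕ):ℝ) ≤ Real.log ((q:ℝ)*q) := Real.log_le_log hNpos hNq2
            _ = 2*L := by rw [Real.log_mul (by positivity) (by positivity), hLdef]; ring
        have hlogNpos : (0:ℝ) < Real.log ((q*M : ℕ):ℝ) := by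
          apply Real.log_pos
          have : (2:ℕ) ≤ q*M := h2N
          exact_mod_cast lt_of_lt_of_le one_lt_two (by exact_mod_cast this)
        have hnorm : ((k:ℝ)+1)*L ≤
            ‖∑ d ∈ (q*M).divisors.filter (fun d => d.primeFactorsList.length = 2),
              b d * (Real.log d : ℂ) * a ((q*M) / d)‖ := by
          rw [hinner, ← Complex.ofReal_sum, Complex.norm_real]
          have hge : ((k:ℝ)+1)*L ≤ ∑ p ∈ S, Real.log ((p*q : ℕ):ℝ) := by
            have hLle : ∀ p ∈ S, L ≤ Real.log ((p*q : ℕ):ℝ) := by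
              intro p hp
              have hqm : (q:ℝ) ≤ ((p*q : ℕ):ℝ) := by
                have : q ≤ p*q := Nat.le_mul_of_pos_left q (hPprime p (hSP hp)).pos
                exact_mod_cast this
              rw [hLdef]
              exact Real.log_le_log (by positivity) hqm
            calc ((k:ℝ)+1)*L = S.card • L := by
                  rw [hScard, nsmul_eq_mul]; push_cast; ring
              _ ≤ ∑ p ∈ S, Real.log ((p*q : ℕ):ℝ) := Finset.card_nsmul_le_sum S _ L hLle
          exact le_trans hge (le_abs_self _)
        apply ENNReal.ofReal_le_ofReal
        have hnorm_nonneg : (0:ℝ) ≤ ((k:ℝ)+1)*L := by positivity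
        calc ((k:ℝ)+1)^2/4 = (((k:ℝ)+1)*L)^2 / (2*L)^2 := by
              field_simp; ring
          _ ≤ ‖∑ d ∈ (q*M).divisors.filter (fun d => d.primeFactorsList.length = 2),
                b d * (Real.log d : ℂ) * a ((q*M) / d)‖^2 / Real.log ((q*M : ℕ):ℝ) ^ 2 := by
              apply div_le_div₀ (by positivity)
                (by nlinarith [hnorm, hnorm_nonneg]) (by positivity)
                (by nlinarith [hlogN, hlogNpos])
      calc (NN.card : ℝ≥0∞) * ENNReal.ofReal ((((k:ℝ)+1)^2)/4)
          = NN.card • ENNReal.ofReal ((((k:ℝ)+1)^2)/4) := (nsmul_eq_mul _ _).symm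
        _ ≤ ∑ N ∈ NN, (if 2 ≤ N then
            ENNReal.ofReal
              (‖∑ d ∈ N.divisors.filter (fun d => d.primeFactorsList.length = 2),
                  b d * (Real.log d : ℂ) * a (N / d)‖ ^ 2 / Real.log N ^ 2)
          else 0) := Finset.card_nsmul_le_sum _ _ _ hterm
        _ ≤ _ := ENNReal.sum_le_tsum NN
    -- ===== the final real inequality =====
    have hchoose : (nP.choose (k+1) : ℝ) * ((k:ℝ)+1) = (nP.choose k : ℝ) * ((nP - k : ℕ) : ℝ) := by
      exact_mod_cast Nat.choose_succ_right_eq nP k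
    have hnk : ((nP - k : ℕ) : ℝ) = (nP:ℝ) - k := by
      rw [Nat.cast_sub hkP]
    have hch_pos : (0:ℝ) < (nP.choose k : ℝ) := by exact_mod_cast Nat.choose_pos hkP
    have hch1_pos : (0:ℝ) < (nP.choose (k+1) : ℝ) := by exact_mod_cast Nat.choose_pos hk1P
    have hnkpos : (0:ℝ) < (nP:ℝ) - (k:ℝ) := by
      have : k < nP := by omega
      have := (Nat.cast_lt (α := ℝ)).2 this
      linarith
    have hreal : C * ((nP:ℝ) * (2*L / l0 ^ (1+ε))) * (nP.choose k : ℝ)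
        < (nP.choose (k+1) : ℝ) * (((k:ℝ)+1)^2/4) := by
      have hkeyL : 16*C*L < ((k:ℝ)+1) * (l0 ^ (1+ε)) := by
        have h1 : 16*C*L ≤ ((k:ℝ)+1) * (32*C*Real.log x) := by nlinarith
        have h2 : ((k:ℝ)+1) * (32*C*Real.log x) < ((k:ℝ)+1) * (l0 ^ (1+ε)) :=
          mul_lt_mul_of_pos_left hkey2 hk1pos
        linarith
      have hn2 : (nP:ℝ) ≤ 2*((nP:ℝ)-(k:ℝ)) := by
        have : (2*k : ℕ) ≤ nP := hkn
        have := (Nat.cast_le (α := ℝ)).2 this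
        push_cast at this
        linarith
      have e1 : (nP.choose (k+1) : ℝ) * (((k:ℝ)+1)^2/4)
          = ((nP.choose k : ℝ) * ((nP:ℝ)-(k:ℝ))) * (((k:ℝ)+1)/4) := by
        calc (nP.choose (k+1) : ℝ) * (((k:ℝ)+1)^2/4)
            = ((nP.choose (k+1) : ℝ) * ((k:ℝ)+1)) * (((k:ℝ)+1)/4) := by ring
          _ = ((nP.choose k : ℝ) * ((nP:ℝ)-(k:ℝ))) * (((k:ℝ)+1)/4) := by
              rw [hchoose, hnk]
      rw [e1, show C * ((nP:ℝ) * (2*L / l0 ^ (1+ε))) * (nP.choose k : ℝ)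
          = (nP.choose k : ℝ) * ((2*C*(nP:ℝ)*L) / l0^(1+ε)) from by ring,
        show ((nP.choose k : ℝ) * ((nP:ℝ)-(k:ℝ))) * (((k:ℝ)+1)/4)
          = (nP.choose k : ℝ) * (((nP:ℝ)-(k:ℝ)) * (((k:ℝ)+1)/4)) from by ring]
      apply mul_lt_mul_of_pos_left _ hch_pos
      rw [div_lt_iff₀ hl0epos]
      have hnPpos : (0:ℝ) < (nP:ℝ) := by
        have : 0 < nP := by omega
        exact_mod_cast this
      have hh1 := mul_lt_mul_of_pos_left hkeyL hnkpos
      have hh2 := mul_le_mul_of_nonneg_left hn2 (mul_pos hC hLpos).le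
      nlinarith [hh1, hh2]
    -- ===== assembly =====
    calc ENNReal.ofReal C *
          (∑' n : ℕ, (if n.primeFactorsList.length = 2 then
              ENNReal.ofReal (‖b n‖ ^ 2 * Real.log n / loglog n ^ (1 + ε)) else 0)) *
          (∑' n : ℕ, (if 1 ≤ n then ENNReal.ofReal (‖a n‖ ^ 2) else 0))
        ≤ ENNReal.ofReal C * ENNReal.ofReal ((nP : ℝ) * (2*L / l0 ^ (1+ε))) *
            ENNReal.ofReal (nP.choose k : ℝ) := by
          rw [hAsum]
          exact mul_le_mul_left (mul_le_mul_right hWsum _) _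
      _ = ENNReal.ofReal (C * ((nP : ℝ) * (2*L / l0 ^ (1+ε))) * (nP.choose k : ℝ)) := by
          rw [← ENNReal.ofReal_mul hC.le, ← ENNReal.ofReal_mul (by positivity)]
      _ < ENNReal.ofReal ((nP.choose (k+1) : ℝ) * (((k:ℝ)+1)^2/4)) := by
          rw [ENNReal.ofReal_lt_ofReal_iff (by positivity)]
          exact hreal
      _ = (NN.card : ℝ≥0∞) * ENNReal.ofReal ((((k:ℝ)+1)^2)/4) := by
          rw [hNNcard, ENNReal.ofReal_mul (Nat.cast_nonneg _), ENNReal.ofReal_natCast]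
      _ ≤ _ := hRHS

set_option maxHeartbeats 2000000 in
/-- sharpness of the weight `(log n)/log₂ n` for 2-homogeneous symbols:
for every `ε > 0` and `C > 0` there are a finitely supported 2-homogeneous coefficient
sequence `b` and a finitely supported sequence `a` (not identically zero) with
`∑_{N≥2} (log N)^{-2}|∑_{k∣N, Ω(k)=2} b_k (log k) a_{N/k}|²
  > C (∑_{Ω(n)=2} |b_n|² (log n)/(log₂ n)^{1+ε}) ∑_{n≥1}|a_n|²`. -/
theorem volterra_two_homogeneous_sharp (ε : ℝ) (hε : 0 < ε) (C : ℝ) (hC : 0 < C) :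
    ∃ b a : ℕ → ℂ,
      (Function.support b).Finite ∧ (∀ n, b n ≠ 0 → n.primeFactorsList.length = 2) ∧
      (Function.support a).Finite ∧ (∃ n, 1 ≤ n ∧ a n ≠ 0) ∧
      ENNReal.ofReal C *
          (∑' n : ℕ, (if n.primeFactorsList.length = 2 then
              ENNReal.ofReal (‖b n‖ ^ 2 * Real.log n / loglog n ^ (1 + ε)) else 0)) *
          (∑' n : ℕ, (if 1 ≤ n then ENNReal.ofReal (‖a n‖ ^ 2) else 0))
        < ∑' N : ℕ, (if 2 ≤ N then
            ENNReal.ofReal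
              (‖∑ k ∈ N.divisors.filter (fun k => k.primeFactorsList.length = 2),
                  b k * (Real.log k : ℂ) * a (N / k)‖ ^ 2 / Real.log N ^ 2)
          else 0) := by
  classical
  set G : ℝ := max 1 ((64*C+64) ^ (1/ε)) with hG
  obtain ⟨m, hm⟩ := exists_nat_ge (max (Real.exp (2*G)) (max (Real.exp 64) 512))
  have hm1 : Real.exp (2*G) ≤ m := le_trans (le_max_left _ _) hm
  have hm2 : Real.exp 64 ≤ m := le_trans (le_trans (le_max_left _ _) (le_max_right _ _)) hm
  have hm3 : (512:ℝ) ≤ m := le_trans (le_trans (le_max_right _ _) (le_max_right _ _)) hm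
  have hm512 : 512 ≤ m := by exact_mod_cast hm3
  set nP := ((Finset.range (2*m+1)).filter Nat.Prime).card with hnP
  set t := Real.log (2*(m:ℝ)) with ht
  have hmpos : (0:ℝ) < m := by linarith
  have hmx : (m:ℝ) ≤ 2*m := by linarith
  have ht64 : (64:ℝ) ≤ t := by
    rw [ht, Real.le_log_iff_exp_le (by linarith)]
    linarith
  have ht2G : 2*G ≤ t := by
    rw [ht, Real.le_log_iff_exp_le (by linarith)]
    linarith
  have htpos : (0:ℝ) < t := by linarith
  have hsq : Real.sqrt (2*(m:ℝ)) ≤ m/16 := by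
    rw [show (m:ℝ)/16 = Real.sqrt (((m:ℝ)/16)^2) from (Real.sqrt_sq (by positivity)).symm]
    apply Real.sqrt_le_sqrt
    nlinarith
  have htm : t ≤ (m:ℝ)/8 := by
    have := log_le_two_sqrt (show (0:ℝ) < 2*m by linarith)
    rw [← ht] at this
    linarith
  have hcheb : (m:ℝ) < (nP+1)*t := by
    have h := cheb m (by omega)
    rw [← hnP] at h
    convert h using 3
  have hnP8 : 8 ≤ nP := by
    have h8 : (8:ℝ)*t ≤ m := by linarith
    have h9 : (8:ℝ)*t < (nP+1)*t := lt_of_le_of_lt h8 hcheb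
    have h10 : (8:ℝ) < nP+1 := by
      have := (mul_lt_mul_iff_of_pos_right htpos).1 h9
      linarith
    have h11 : (7:ℝ) < nP := by linarith
    have : (7:ℕ) < nP := by exact_mod_cast h11
    omega
  set k := nP/2 with hk
  have hx3 : 3 ≤ 2*m := by omega
  have hk1 : 1 ≤ k := by omega
  have hkn : 2 * k ≤ nP := by omega
  have hk1nP : (nP:ℝ) ≤ 2*((k:ℝ)+1) := by
    have : nP ≤ 2*k+2 := by omega
    have h := (Nat.cast_le (α := ℝ)).2 this
    push_cast at h
    linarith
  set d : ℝ := (m:ℝ)/t with hd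
  have hd8 : (8:ℝ) ≤ d := by
    rw [hd, le_div_iff₀ htpos]
    linarith
  have hdlt : d < nP+1 := by
    rw [hd, div_lt_iff₀ htpos]
    exact hcheb
  have hk1d : d/4 ≤ (k:ℝ)+1 := by
    linarith
  have hlogk : t/2 ≤ Real.log ((k:ℝ)+1) := by
    have hd4pos : (0:ℝ) < d/4 := by linarith
    have h1 : Real.log (d/4) ≤ Real.log ((k:ℝ)+1) := Real.log_le_log hd4pos hk1d
    have h2 : Real.log (d/4) = Real.log m - Real.log t - Real.log 4 := by
      rw [hd, div_div, Real.log_div (by positivity) (by positivity),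
        Real.log_mul (by positivity) (by norm_num)]
      ring
    have h3 : t = Real.log 2 + Real.log m := by
      rw [ht, Real.log_mul (by norm_num) (by positivity)]
    have h4 : Real.log t ≤ t/4 := by
      have hs8 : (8:ℝ) ≤ Real.sqrt t := by
        rw [show (8:ℝ) = Real.sqrt 64 from by
          rw [show (64:ℝ) = 8^2 by norm_num, Real.sqrt_sq (by norm_num)]]
        exact Real.sqrt_le_sqrt ht64
      have hss : Real.sqrt t * Real.sqrt t = t := Real.mul_self_sqrt htpos.le
      have := log_le_two_sqrt htpos
      nlinarith
    have h5 : Real.log 2 ≤ 1 := by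
      have := Real.log_le_sub_one_of_pos (show (0:ℝ) < 2 by norm_num); linarith
    have h6 : Real.log 4 ≤ 3 := by
      have := Real.log_le_sub_one_of_pos (show (0:ℝ) < 4 by norm_num); linarith
    linarith
  have hbase : (0:ℝ) ≤ 64*C+64 := by linarith
  have hGe : 64*C+64 ≤ G ^ ε := by
    have h1 : ((64*C+64) ^ (1/ε)) ^ ε = 64*C+64 := by
      rw [← Real.rpow_mul hbase, one_div_mul_cancel hε.ne', Real.rpow_one]
    calc 64*C+64 = ((64*C+64) ^ (1/ε)) ^ ε := h1.symm
      _ ≤ G ^ ε := Real.rpow_le_rpow (Real.rpow_nonneg hbase _) (le_max_right _ _) hε.le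
  have hGpos : (0:ℝ) < G := lt_of_lt_of_le one_pos (le_max_left _ _)
  have htG : G ^ ε ≤ (t/2) ^ ε := Real.rpow_le_rpow hGpos.le (by linarith) hε.le
  have h12 : (t/2) ^ ((1:ℝ)+ε) = (t/2) * (t/2) ^ ε := by
    rw [Real.rpow_add (by linarith : (0:ℝ) < t/2), Real.rpow_one]
  have hfin : 32 * C * t < Real.log ((k:ℝ)+1) ^ (1+ε) := by
    calc 32 * C * t < (t/2) * (64*C+64) := by nlinarith
      _ ≤ (t/2) * ((t/2) ^ ε) := by
          apply mul_le_mul_of_nonneg_left (le_trans hGe htG) (by linarith)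
      _ = (t/2) ^ ((1:ℝ)+ε) := h12.symm
      _ ≤ Real.log ((k:ℝ)+1) ^ (1+ε) :=
          Real.rpow_le_rpow (by linarith) hlogk (by linarith)
  have hcast : Real.log ((2*m : ℕ):ℝ) = t := by
    rw [ht]; norm_cast
  have hkey : 32 * C * Real.log ((2*m : ℕ):ℝ) < Real.log ((k:ℕ)+1) ^ (1+ε) := by
    rw [hcast]
    convert hfin using 3
  obtain ⟨q, hqp, hq1, hq2⟩ :=
    Nat.exists_prime_lt_and_le_two_mul ((2*m)^(k+1)) (by positivity)
  exact main_construction ε C hε hC (2*m) k q hx3 hk1 hqp hq1 hq2 hkn hkey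
end

section
/- For every integer m ≥ 3, the weight n^{(m−2)/m}/(log n)^{m−2} for m-homogeneous symbols is sharp in the following sense: for every ε > 0 and every C > 0 there exist a finitely supported complex sequence (b_n)_{n≥2} supported on the integers n with Ω(n) = m and a finitely supported complex sequence (a_n)_{n≥1}, not identically zero, such that ∑_{N≥2} (log N)^{-2} |∑_{k∣N, Ω(k)=m} b_k (log k) a_{N/k}|² > C · (∑_{Ω(n)=m} |b_n|² n^{(m−2)/m}/(log n)^{m−2+ε}) · ∑_{n≥1} |a_n|². -/
open scoped ENNReal


open Finset in
private lemma cheb_nat (n : ℕ) (hn : 1 ≤ n) :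
    4 ^ n ≤ (2 * n + 1) * (2 * n) ^ (((range (2 * n + 1)).filter Nat.Prime).card) := by
  have h1 : 4 ^ n ≤ (2 * n + 1) * (2 * n).choose n :=
    Nat.four_pow_le_two_mul_add_one_mul_central_binom n
  set c := (2 * n).choose n with hc
  have hc0 : c ≠ 0 := Nat.choose_pos (by omega) |>.ne'
  have h2 : c ≤ (2 * n) ^ c.primeFactors.card := by
    calc c = ∏ p ∈ c.primeFactors, p ^ c.factorization p :=
            (Nat.factorization_prod_pow_eq_self hc0).symm
      _ ≤ ∏ _p ∈ c.primeFactors, (2 * n) := by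
            refine Finset.prod_le_prod' ?_
            intro p hp
            exact Nat.pow_factorization_choose_le (by omega)
      _ = (2 * n) ^ c.primeFactors.card := by rw [Finset.prod_const]
  have h3 : c.primeFactors ⊆ (range (2 * n + 1)).filter Nat.Prime := by
    intro p hp
    rw [Nat.mem_primeFactors] at hp
    rw [mem_filter, mem_range]
    refine ⟨?_, hp.1⟩
    have hle : p ^ c.factorization p ≤ 2 * n := Nat.pow_factorization_choose_le (by omega)
    have h1le : 1 ≤ c.factorization p := by
      rw [← Nat.Prime.dvd_iff_one_le_factorization hp.1 hc0]
      exact hp.2.1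
    have : p ≤ p ^ c.factorization p := Nat.le_self_pow (by omega) p
    omega
  calc 4 ^ n ≤ (2 * n + 1) * c := h1
    _ ≤ (2 * n + 1) * (2 * n) ^ c.primeFactors.card := by
        exact Nat.mul_le_mul_left _ h2
    _ ≤ (2 * n + 1) * (2 * n) ^ (((range (2 * n + 1)).filter Nat.Prime).card) := by
        refine Nat.mul_le_mul_left _ (Nat.pow_le_pow_right (by omega) (card_le_card h3))


open Filter Asymptotics in
private lemma ev_core : ∀ᶠ y : ℝ in atTop,
    Real.log (y + 1) + (Real.sqrt y + 1) * Real.log y ≤ 0.44 * y := by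
  have h2 : (fun y : ℝ => Real.log (y + 1)) =o[atTop] (fun y : ℝ => y) := by
    have h := Real.isLittleO_log_id_atTop.comp_tendsto
      (tendsto_atTop_add_const_right atTop (1:ℝ) tendsto_id)
    refine h.trans_isBigO ?_
    rw [isBigO_iff]
    refine ⟨2, ?_⟩
    filter_upwards [eventually_ge_atTop (1:ℝ)] with y hy
    simp only [Function.comp, id_eq, Real.norm_eq_abs]
    rw [abs_of_nonneg (by linarith), abs_of_nonneg (by linarith)]; linarith
  have h3 : (fun y : ℝ => (Real.sqrt y + 1) * Real.log y) =o[atTop] (fun y : ℝ => y) := by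
    have hb : (fun y : ℝ => Real.sqrt y + 1) =O[atTop] (fun y : ℝ => y ^ (1/2 : ℝ)) := by
      rw [isBigO_iff]
      refine ⟨2, ?_⟩
      filter_upwards [eventually_ge_atTop (1:ℝ)] with y hy
      have h0 : (0:ℝ) ≤ y := by linarith
      have h1 : Real.sqrt y = y ^ (1/2:ℝ) := Real.sqrt_eq_rpow y
      have h2 : (1:ℝ) ≤ y ^ (1/2:ℝ) := Real.one_le_rpow hy (by norm_num)
      rw [Real.norm_eq_abs, Real.norm_eq_abs, abs_of_nonneg (by positivity),
        abs_of_nonneg (by positivity), ← h1] at *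
      rw [h1]; linarith
    have hl : (fun y : ℝ => Real.log y) =o[atTop] (fun y : ℝ => y ^ (1/2:ℝ)) :=
      isLittleO_log_rpow_atTop (by norm_num)
    have hmul := hb.mul_isLittleO hl
    refine hmul.trans_isBigO ?_
    rw [isBigO_iff]
    refine ⟨1, ?_⟩
    filter_upwards [eventually_ge_atTop (0:ℝ)] with y hy
    have : y ^ (1/2:ℝ) * y ^ (1/2:ℝ) = y := by
      rw [← Real.rpow_add' hy (by norm_num)]
      norm_num
    rw [this, one_mul]
  have hsum := (h2.add h3).def (by norm_num : (0:ℝ) < 0.44)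
  filter_upwards [hsum, eventually_ge_atTop (0:ℝ)] with y hy h0
  calc Real.log (y + 1) + (Real.sqrt y + 1) * Real.log y
      ≤ ‖Real.log (y + 1) + (Real.sqrt y + 1) * Real.log y‖ := Real.le_norm_self _
    _ ≤ 0.44 * ‖y‖ := hy
    _ = 0.44 * y := by rw [Real.norm_eq_abs, abs_of_nonneg h0]


open Filter Finset in
private lemma exists_good_x (m : ℕ) (K : ℝ) (ε : ℝ) (hε : 0 < ε)
    (core : ∀ᶠ y : ℝ in atTop, Real.log (y + 1) + (Real.sqrt y + 1) * Real.log y ≤ 0.44 * y)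
    (cheb : ∀ n : ℕ, 1 ≤ n →
      4 ^ n ≤ (2 * n + 1) * (2 * n) ^ (((range (2 * n + 1)).filter Nat.Prime).card)) :
    ∃ x : ℕ, 2 ≤ x ∧ 1 ≤ Real.log x ∧ K < Real.log x ^ ε ∧
      (16 * m + 16 : ℝ) ≤ (x : ℝ) / (4 * Real.log x) ∧
      (x : ℝ) / (4 * Real.log x) ≤ (((Finset.Ioc (Nat.sqrt x) x).filter Nat.Prime).card : ℝ) := by
  have t0 : Tendsto (fun n : ℕ => 2 * n) atTop atTop :=
    tendsto_atTop_mono (fun n => by simp only [id_eq]; omega) tendsto_id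
  have t1 : Tendsto (fun n : ℕ => ((2 * n : ℕ) : ℝ)) atTop atTop :=
    tendsto_natCast_atTop_atTop.comp t0
  have tlog : Tendsto (fun n : ℕ => Real.log ((2 * n : ℕ) : ℝ)) atTop atTop :=
    Real.tendsto_log_atTop.comp t1
  have ev_a : ∀ᶠ n : ℕ in atTop, 1 ≤ Real.log ((2 * n : ℕ) : ℝ) := tlog.eventually_ge_atTop 1
  have ev_b : ∀ᶠ n : ℕ in atTop, K < Real.log ((2 * n : ℕ) : ℝ) ^ ε :=
    ((tendsto_rpow_atTop hε).comp tlog).eventually_gt_atTop K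
  have hcpos : (0:ℝ) < 1 / (4 * (16 * (m:ℝ) + 16)) := by positivity
  have ev_c0 := (Real.isLittleO_log_id_atTop.def hcpos)
  have ev_c : ∀ᶠ n : ℕ in atTop,
      (16 * (m:ℝ) + 16) ≤ ((2 * n : ℕ) : ℝ) / (4 * Real.log ((2 * n : ℕ) : ℝ)) := by
    filter_upwards [t1.eventually ev_c0, ev_a, t1.eventually_ge_atTop 1] with n h1 h2 h3
    set y := ((2 * n : ℕ) : ℝ) with hy
    have hylog : (0:ℝ) < Real.log y := by linarith
    rw [le_div_iff₀ (by positivity)]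
    have hn1 : ‖Real.log y‖ = Real.log y := by
      rw [Real.norm_eq_abs, abs_of_nonneg hylog.le]
    have hn2 : ‖id y‖ = y := by
      rw [id_eq, Real.norm_eq_abs, abs_of_nonneg (by linarith)]
    rw [hn1, hn2] at h1
    calc (16 * (m:ℝ) + 16) * (4 * Real.log y)
        = (4 * (16 * (m:ℝ) + 16)) * Real.log y := by ring
      _ ≤ (4 * (16 * (m:ℝ) + 16)) * (1 / (4 * (16 * (m:ℝ) + 16)) * y) := by
          exact mul_le_mul_of_nonneg_left h1 (by positivity)
      _ = y := by field_simp
  have ev_d : ∀ᶠ n : ℕ in atTop,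
      ((2 * n : ℕ) : ℝ) / (4 * Real.log ((2 * n : ℕ) : ℝ)) ≤
        (((Finset.Ioc (Nat.sqrt (2 * n)) (2 * n)).filter Nat.Prime).card : ℝ) := by
    filter_upwards [t1.eventually core, ev_a, eventually_ge_atTop 1] with n hcore hlog hn1
    set x := 2 * n with hx
    set y := (x : ℝ) with hy
    have hy2 : (2:ℝ) ≤ y := by
      rw [hy]; exact_mod_cast (show (2:ℕ) ≤ x by omega)
    have hy0 : (0:ℝ) < y := by linarith
    have hylog : (0:ℝ) < Real.log y := by linarith
    set pc := ((range (x + 1)).filter Nat.Prime).card with hpc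
    set R := ((Finset.Ioc (Nat.sqrt x) x).filter Nat.Prime).card with hR
    have hsplit : pc ≤ R + (Nat.sqrt x + 1) := by
      have hsub : (range (x + 1)).filter Nat.Prime ⊆
          ((Finset.Ioc (Nat.sqrt x) x).filter Nat.Prime) ∪ range (Nat.sqrt x + 1) := by
        intro p hp
        rw [mem_filter, mem_range] at hp
        rcases le_or_gt p (Nat.sqrt x) with h | h
        · exact Finset.mem_union_right _ (by rw [mem_range]; omega)
        · exact Finset.mem_union_left _
            (by rw [mem_filter, Finset.mem_Ioc]; exact ⟨⟨h, by omega⟩, hp.2⟩)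
      calc pc ≤ (((Finset.Ioc (Nat.sqrt x) x).filter Nat.Prime) ∪ range (Nat.sqrt x + 1)).card :=
            card_le_card hsub
        _ ≤ R + (Nat.sqrt x + 1) := by
            refine (card_union_le _ _).trans ?_
            simp [hR]
    have hchebR : (4:ℝ) ^ n ≤ (y + 1) * y ^ pc := by
      calc (4:ℝ) ^ n = ((4 ^ n : ℕ) : ℝ) := by push_cast; ring
        _ ≤ (((2 * n + 1) * (2 * n) ^ pc : ℕ) : ℝ) := by exact_mod_cast cheb n hn1
        _ = (y + 1) * y ^ pc := by rw [hy, hx]; push_cast; ring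
    have hlog4 : (n : ℝ) * Real.log 4 ≤ Real.log (y + 1) + pc * Real.log y := by
      have h1 : Real.log ((4:ℝ) ^ n) ≤ Real.log ((y + 1) * y ^ pc) :=
        Real.log_le_log (by positivity) hchebR
      rw [Real.log_pow, Real.log_mul (by linarith) (by positivity), Real.log_pow] at h1
      exact_mod_cast h1
    have hsqrt : ((Nat.sqrt x : ℕ) : ℝ) ≤ Real.sqrt y := by
      refine Real.le_sqrt_of_sq_le ?_
      have h1 : (Nat.sqrt x) * (Nat.sqrt x) ≤ x := Nat.sqrt_le x
      rw [hy]
      calc ((Nat.sqrt x : ℕ) : ℝ) ^ 2 = ((Nat.sqrt x * Nat.sqrt x : ℕ) : ℝ) := by push_cast; ring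
        _ ≤ (x:ℝ) := by exact_mod_cast h1
    have hl4 : (1.386:ℝ) ≤ Real.log 4 := by
      have h2 : Real.log 4 = 2 * Real.log 2 := by
        rw [show (4:ℝ) = 2 ^ 2 by norm_num, Real.log_pow]; push_cast; ring
      have := Real.log_two_gt_d9
      rw [h2]; linarith
    have hn2 : (n : ℝ) = y / 2 := by rw [hy, hx]; push_cast; ring
    have hchain : y / 4 ≤ (R : ℝ) * Real.log y := by
      have hRpc : (pc : ℝ) ≤ (R : ℝ) + ((Nat.sqrt x : ℕ) : ℝ) + 1 := by
        exact_mod_cast hsplit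
      have h5 : (n : ℝ) * Real.log 4 - Real.log (y + 1) ≤ (pc : ℝ) * Real.log y := by linarith
      have h6 : (pc : ℝ) * Real.log y - (Real.sqrt y + 1) * Real.log y ≤ (R : ℝ) * Real.log y := by
        have h7 : (pc : ℝ) ≤ (R : ℝ) + (Real.sqrt y + 1) := by linarith
        nlinarith [mul_le_mul_of_nonneg_right h7 hylog.le]
      have h7 : y * 0.693 ≤ (n : ℝ) * Real.log 4 := by rw [hn2]; nlinarith
      nlinarith
    rw [div_le_iff₀ (by positivity)]
    nlinarith
  obtain ⟨n, h2, h3, h4, h5, h1⟩ :=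
    (ev_a.and (ev_b.and (ev_c.and (ev_d.and (eventually_ge_atTop 1))))).exists
  exact ⟨2 * n, by omega, h2, h3, h4, h5⟩


open Finset in
private lemma sf_prod {S : Finset ℕ} (h : ∀ p ∈ S, p.Prime) : Squarefree (∏ p ∈ S, p) := by
  induction S using Finset.cons_induction with
  | empty => simpa using squarefree_one
  | cons p S hp ih =>
    rw [Finset.prod_cons, Nat.squarefree_mul_iff]
    have hpp := h p (Finset.mem_cons_self p S)
    refine ⟨?_, hpp.squarefree, ih (fun q hq => h q (Finset.mem_cons.2 (Or.inr hq)))⟩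
    rw [Nat.Prime.coprime_iff_not_dvd hpp]
    intro hdvd
    obtain ⟨q, hq, hqd⟩ := (Nat.Prime.prime hpp).dvd_finset_prod_iff _ |>.1 hdvd
    have : p = q := (Nat.prime_dvd_prime_iff_eq hpp (h q (Finset.mem_cons.2 (Or.inr hq)))).1 hqd
    exact hp (this ▸ hq)

private lemma length_eq_card {n : ℕ} (hn : Squarefree n) :
    n.primeFactorsList.length = n.primeFactors.card := by
  have hnodup := (Nat.squarefree_iff_nodup_primeFactorsList hn.ne_zero).1 hn
  rw [← Nat.toFinset_factors, List.toFinset_card_of_nodup hnodup]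

section MainProof
open Finset

set_option maxHeartbeats 1000000 in
/-- sharpness of the weight `n^{(m-2)/m}/(log n)^{m-2}` for
`m`-homogeneous symbols, `m ≥ 3`: for every `ε > 0` and `C > 0` there are a finitely
supported `m`-homogeneous coefficient sequence `b` and a finitely supported sequence `a`
(not identically zero) such that
`∑_{N≥2} (log N)^{-2}|∑_{k∣N, Ω(k)=m} b_k (log k) a_{N/k}|²
  > C (∑_{Ω(n)=m} |b_n|² n^{(m-2)/m}/(log n)^{m-2+ε}) ∑_{n≥1}|a_n|²`. -/
theorem volterra_m_homogeneous_sharp (m : ℕ) (hm : 3 ≤ m) (ε : ℝ) (hε : 0 < ε)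
    (C : ℝ) (hC : 0 < C) :
    ∃ b a : ℕ → ℂ,
      (Function.support b).Finite ∧ (∀ n, b n ≠ 0 → n.primeFactorsList.length = m) ∧
      (Function.support a).Finite ∧ (∃ n, 1 ≤ n ∧ a n ≠ 0) ∧
      ENNReal.ofReal C *
          (∑' n : ℕ, (if n.primeFactorsList.length = m then
              ENNReal.ofReal
                (‖b n‖ ^ 2 * (n : ℝ) ^ (((m : ℝ) - 2) / m) /
                  Real.log n ^ ((m : ℝ) - 2 + ε))
            else 0)) *
          (∑' n : ℕ, (if 1 ≤ n then ENNReal.ofReal (‖a n‖ ^ 2) else 0))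
        < ∑' N : ℕ, (if 2 ≤ N then
            ENNReal.ofReal
              (‖∑ k ∈ N.divisors.filter (fun k => k.primeFactorsList.length = m),
                  b k * (Real.log k : ℂ) * a (N / k)‖ ^ 2 / Real.log N ^ 2)
          else 0) := by
  classical
  have hmR : (3:ℝ) ≤ (m:ℝ) := by exact_mod_cast hm
  set mf : ℝ := (Nat.factorial m : ℝ) with hmf
  have hmf1 : (1:ℝ) ≤ mf := by
    rw [hmf]; exact_mod_cast Nat.one_le_iff_ne_zero.2 (Nat.factorial_ne_zero m)
  set K : ℝ := 2 * C * 16 ^ m * mf ^ 2 * 4 ^ m with hKdef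
  obtain ⟨x, hx2, hlam1, hKlam, h16, hRlow⟩ := exists_good_x m K ε hε ev_core cheb_nat
  set lam : ℝ := Real.log x with hlam
  set P : Finset ℕ := (Finset.Ioc (Nat.sqrt x) x).filter Nat.Prime with hPdef
  set R : ℕ := P.card with hRdef
  set L : ℕ := R / 2 with hLdef
  have hlam0 : (0:ℝ) < lam := by linarith
  -- prime facts
  have hPprime : ∀ p ∈ P, Nat.Prime p := fun p hp => (Finset.mem_filter.1 hp).2
  have hPle : ∀ p ∈ P, p ≤ x := fun p hp =>
    (Finset.mem_Ioc.1 (Finset.mem_filter.1 hp).1).2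
  have hPgt : ∀ p ∈ P, Nat.sqrt x < p := fun p hp =>
    (Finset.mem_Ioc.1 (Finset.mem_filter.1 hp).1).1
  have hPpos : ∀ p ∈ P, 0 < p := fun p hp => (hPprime p hp).pos
  have hPlog_up : ∀ p ∈ P, Real.log p ≤ lam := by
    intro p hp
    rw [hlam]
    exact Real.log_le_log (by exact_mod_cast (hPpos p hp)) (by exact_mod_cast hPle p hp)
  have hPlog_low : ∀ p ∈ P, lam / 2 ≤ Real.log p := by
    intro p hp
    have h1 : x < (Nat.sqrt x + 1) * (Nat.sqrt x + 1) := Nat.lt_succ_sqrt x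
    have h2 : Nat.sqrt x + 1 ≤ p := hPgt p hp
    have h3 : (x:ℝ) ≤ (p:ℝ) * (p:ℝ) := by
      have : x ≤ p * p := by nlinarith [Nat.lt_succ_sqrt x, hPgt p hp]
      exact_mod_cast this
    have h4 : Real.log x ≤ Real.log ((p:ℝ) * (p:ℝ)) := by
      apply Real.log_le_log (by positivity) h3
    rw [Real.log_mul (by exact_mod_cast (hPpos p hp).ne') (by exact_mod_cast (hPpos p hp).ne')]
      at h4
    rw [hlam]; linarith
  -- R bounds
  have hRreal : ((16 * m + 16 : ℕ) :ℝ) ≤ (R:ℝ) := by push_cast; linarith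
  have hR16 : 16 * m + 16 ≤ R := by exact_mod_cast hRreal
  have hR1 : 1 ≤ R := by omega
  have hmL : m ≤ L := by omega
  have hRlam : (x:ℝ) / 4 ≤ (R:ℝ) * lam := by
    have := hRlow
    rw [div_le_iff₀ (by positivity)] at this
    calc (x:ℝ)/4 ≤ (R:ℝ) * (4 * lam) / 4 := by
          rw [div_le_div_iff₀ (by norm_num) (by norm_num)]; nlinarith
      _ = (R:ℝ) * lam := by ring
  -- products of subsets of P
  have hprod_prime : ∀ S : Finset ℕ, S ⊆ P → ∀ p ∈ S, p.Prime :=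
    fun S hS p hp => hPprime p (hS hp)
  have hprod_sf : ∀ S : Finset ℕ, S ⊆ P → Squarefree (∏ p ∈ S, p) :=
    fun S hS => sf_prod (hprod_prime S hS)
  have hprod_pf : ∀ S : Finset ℕ, S ⊆ P → (∏ p ∈ S, p).primeFactors = S :=
    fun S hS => Nat.primeFactors_prod (hprod_prime S hS)
  have hprod_pos : ∀ S : Finset ℕ, S ⊆ P → 0 < ∏ p ∈ S, p :=
    fun S hS => Finset.prod_pos (fun p hp => hPpos p (hS hp))
  have hprod_len : ∀ S : Finset ℕ, S ⊆ P → (∏ p ∈ S, p).primeFactorsList.length = S.card := by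
    intro S hS
    rw [length_eq_card (hprod_sf S hS), hprod_pf S hS]
  have hprod_log_low : ∀ S : Finset ℕ, S ⊆ P →
      (S.card : ℝ) * (lam / 2) ≤ Real.log ((∏ p ∈ S, p : ℕ) : ℝ) := by
    intro S hS
    rw [show ((∏ p ∈ S, p : ℕ) : ℝ) = ∏ p ∈ S, (p:ℝ) by push_cast; rfl]
    rw [Real.log_prod (fun p hp => by exact_mod_cast (hPpos p (hS hp)).ne')]
    calc (S.card : ℝ) * (lam / 2) = ∑ _p ∈ S, (lam / 2) := by rw [Finset.sum_const, nsmul_eq_mul]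
      _ ≤ ∑ p ∈ S, Real.log p := Finset.sum_le_sum (fun p hp => hPlog_low p (hS hp))
  have hprod_log_up : ∀ S : Finset ℕ, S ⊆ P →
      Real.log ((∏ p ∈ S, p : ℕ) : ℝ) ≤ (R : ℝ) * lam := by
    intro S hS
    rw [show ((∏ p ∈ S, p : ℕ) : ℝ) = ∏ p ∈ S, (p:ℝ) by push_cast; rfl]
    rw [Real.log_prod (fun p hp => by exact_mod_cast (hPpos p (hS hp)).ne')]
    calc ∑ p ∈ S, Real.log p ≤ ∑ _p ∈ S, lam :=
          Finset.sum_le_sum (fun p hp => hPlog_up p (hS hp))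
      _ = (S.card : ℝ) * lam := by rw [Finset.sum_const, nsmul_eq_mul]
      _ ≤ (R:ℝ) * lam := by
          have : S.card ≤ R := by rw [hRdef]; exact Finset.card_le_card hS
          have : (S.card : ℝ) ≤ (R:ℝ) := by exact_mod_cast this
          nlinarith
  have hprod_le : ∀ S : Finset ℕ, S ⊆ P → (∏ p ∈ S, p) ≤ x ^ S.card := by
    intro S hS
    calc (∏ p ∈ S, p) ≤ ∏ _p ∈ S, x := Finset.prod_le_prod' (fun p hp => hPle p (hS hp))
      _ = x ^ S.card := Finset.prod_const x
  have hprod_inj : ∀ S₁, S₁ ⊆ P → ∀ S₂, S₂ ⊆ P → (∏ p ∈ S₁, p) = (∏ p ∈ S₂, p) → S₁ = S₂ := by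
    intro S₁ h₁ S₂ h₂ h
    rw [← hprod_pf S₁ h₁, ← hprod_pf S₂ h₂, h]
  clear_value K lam P R L mf
  -- the sequences
  set bR : ℕ → ℝ := fun n =>
    if Squarefree n ∧ n.primeFactors ⊆ P ∧ n.primeFactorsList.length = m then 1 else 0 with hbR
  set aR : ℕ → ℝ := fun n => if Squarefree n ∧ n.primeFactors ⊆ P then 1 else 0 with haR
  -- common support facts
  set Q : ℕ := ∏ p ∈ P, p with hQdef
  have hQsf : Squarefree Q := hprod_sf P Finset.Subset.rfl
  have hQ0 : Q ≠ 0 := (hprod_pos P Finset.Subset.rfl).ne'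
  have hQpf : Q.primeFactors = P := hprod_pf P Finset.Subset.rfl
  have hQdvd : ∀ n : ℕ, Squarefree n → n.primeFactors ⊆ P → n ∣ Q := by
    intro n hsf hsub
    rw [hQdef]
    calc n = ∏ p ∈ n.primeFactors, p := (Nat.prod_primeFactors_of_squarefree hsf).symm
      _ ∣ ∏ p ∈ P, p := Finset.prod_dvd_prod_of_subset _ _ _ hsub
  clear_value Q
  have ha_dvd : ∀ n, aR n ≠ 0 → n ∈ Q.divisors := by
    intro n hn
    rw [haR] at hn
    by_cases hcond : Squarefree n ∧ n.primeFactors ⊆ P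
    · obtain ⟨hsf, hsub⟩ := hcond
      rw [Nat.mem_divisors]
      exact ⟨hQdvd n hsf hsub, hQ0⟩
    · simp [hcond] at hn
  clear_value bR aR
  have haR_one : ∀ n, Squarefree n → n.primeFactors ⊆ P → aR n = 1 := by
    intro n h1 h2
    have h : aR n = if Squarefree n ∧ n.primeFactors ⊆ P then (1:ℝ) else 0 := by rw [haR]
    rw [h, if_pos ⟨h1, h2⟩]
  have hbR_one : ∀ n, Squarefree n → n.primeFactors ⊆ P →
      n.primeFactorsList.length = m → bR n = 1 := by
    intro n h1 h2 h3
    have h : bR n = if Squarefree n ∧ n.primeFactors ⊆ P ∧ n.primeFactorsList.length = m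
        then (1:ℝ) else 0 := by rw [hbR]
    rw [h, if_pos ⟨h1, h2, h3⟩]
  have hba : ∀ n, bR n ≠ 0 → aR n ≠ 0 := by
    intro n hn
    rw [hbR] at hn
    by_cases hcond : Squarefree n ∧ n.primeFactors ⊆ P ∧ n.primeFactorsList.length = m
    · rw [haR_one n hcond.1 hcond.2.1]
      norm_num
    · simp [hcond] at hn
  have hbR_nonneg : ∀ n, 0 ≤ bR n := by
    intro n; rw [hbR]; dsimp only; split <;> norm_num
  have haR_nonneg : ∀ n, 0 ≤ aR n := by
    intro n; rw [haR]; dsimp only; split <;> norm_num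
  have hbR_le : ∀ n, bR n ≤ 1 := by
    intro n; rw [hbR]; dsimp only; split <;> norm_num
  have haR_le : ∀ n, aR n ≤ 1 := by
    intro n; rw [haR]; dsimp only; split <;> norm_num
  refine ⟨fun n => ((bR n : ℝ) : ℂ), fun n => ((aR n : ℝ) : ℂ), ?_, ?_, ?_, ?_, ?_⟩
  · refine Set.Finite.subset Q.divisors.finite_toSet ?_
    intro n hn
    simp only [Function.mem_support, ne_eq, Complex.ofReal_eq_zero] at hn
    exact ha_dvd n (hba n hn)
  · intro n hn
    simp only [ne_eq, Complex.ofReal_eq_zero] at hn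
    rw [hbR] at hn
    by_cases hcond : Squarefree n ∧ n.primeFactors ⊆ P ∧ n.primeFactorsList.length = m
    · exact hcond.2.2
    · simp [hcond] at hn
  · refine Set.Finite.subset Q.divisors.finite_toSet ?_
    intro n hn
    simp only [Function.mem_support, ne_eq, Complex.ofReal_eq_zero] at hn
    exact ha_dvd n hn
  · refine ⟨1, le_rfl, ?_⟩
    have h1 : aR 1 = 1 := haR_one 1 squarefree_one (by simp)
    show ((aR 1 : ℝ) : ℂ) ≠ 0
    rw [h1]
    norm_num
  · -- the main inequality
    set DD : ℝ := (m : ℝ) * (lam / 2) with hDD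
    have hDD_lam : lam ≤ DD := by
      rw [hDD]; nlinarith
    have hDD_pos : (0:ℝ) < DD := by
      rw [hDD]; nlinarith
    have hexp_pos : (0:ℝ) ≤ (m:ℝ) - 2 + ε := by linarith
    set xm2 : ℝ := (x:ℝ) ^ (m - 2) with hxm2
    have hxR : (0:ℝ) < (x:ℝ) := by
      have : (0:ℕ) < x := by omega
      exact_mod_cast this
    have hxm2_pos : (0:ℝ) < xm2 := by rw [hxm2]; positivity
    set W : ℝ := xm2 / DD ^ ((m:ℝ) - 2 + ε) with hW
    set c0 : ℝ := (L.choose m : ℝ) * DD with hc0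
    have hLc_pos : (0:ℝ) < (L.choose m : ℝ) := by
      have : 0 < L.choose m := Nat.choose_pos hmL
      exact_mod_cast this
    have hc0_pos : (0:ℝ) < c0 := by rw [hc0]; positivity
    set t0r : ℝ := c0 ^ 2 / ((R:ℝ) * lam) ^ 2 with ht0r
    have hRlam_pos : (0:ℝ) < (R:ℝ) * lam := by
      have : (0:ℝ) < (R:ℝ) := by exact_mod_cast hR1
      positivity
    have ht0r_pos : (0:ℝ) < t0r := by rw [ht0r]; positivity
    clear_value DD xm2 W c0 t0r
    -- (i) the a-sum
    have hA : (∑' n : ℕ, (if 1 ≤ n then ENNReal.ofReal (‖((aR n : ℝ) : ℂ)‖ ^ 2) else 0))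
        ≤ ((2 ^ R : ℕ) : ℝ≥0∞) := by
      have hsupp : ∀ n ∉ Q.divisors,
          (if 1 ≤ n then ENNReal.ofReal (‖((aR n : ℝ) : ℂ)‖ ^ 2) else 0) = 0 := by
        intro n hn
        by_cases h1 : 1 ≤ n
        · rw [if_pos h1]
          have : aR n = 0 := by
            by_contra hc
            exact hn (ha_dvd n hc)
          rw [this]
          simp
        · rw [if_neg h1]
      rw [tsum_eq_sum hsupp]
      have hterm : ∀ n ∈ Q.divisors,
          (if 1 ≤ n then ENNReal.ofReal (‖((aR n : ℝ) : ℂ)‖ ^ 2) else 0) ≤ 1 := by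
        intro n _
        by_cases h1 : 1 ≤ n
        · rw [if_pos h1]
          have h2 : ‖((aR n : ℝ) : ℂ)‖ ^ 2 ≤ 1 := by
            rw [Complex.norm_real, Real.norm_eq_abs, abs_of_nonneg (haR_nonneg n)]
            nlinarith [haR_nonneg n, haR_le n]
          calc ENNReal.ofReal (‖((aR n : ℝ) : ℂ)‖ ^ 2) ≤ ENNReal.ofReal 1 :=
                ENNReal.ofReal_le_ofReal h2
            _ = 1 := ENNReal.ofReal_one
        · rw [if_neg h1]; norm_num
      have hcard : Q.divisors.card ≤ 2 ^ R := by
        have hmono : Q.divisors.card ≤ P.powerset.card :=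
          Finset.card_le_card_of_injOn (fun n => n.primeFactors)
          (fun n hn => by
            rw [Finset.mem_coe, Finset.mem_powerset]
            rw [Finset.mem_coe, Nat.mem_divisors] at hn
            rw [← hQpf]
            exact Nat.primeFactors_mono hn.1 hQ0)
          (fun n₁ h₁ n₂ h₂ h => by
            rw [Finset.mem_coe, Nat.mem_divisors] at h₁ h₂
            have hsf₁ : Squarefree n₁ := hQsf.squarefree_of_dvd h₁.1
            have hsf₂ : Squarefree n₂ := hQsf.squarefree_of_dvd h₂.1
            have h' : n₁.primeFactors = n₂.primeFactors := h
            rw [← Nat.prod_primeFactors_of_squarefree hsf₁,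
              ← Nat.prod_primeFactors_of_squarefree hsf₂, h'])
        calc Q.divisors.card ≤ P.powerset.card := hmono
          _ = 2 ^ R := by rw [Finset.card_powerset, hRdef]
      calc ∑ n ∈ Q.divisors, (if 1 ≤ n then ENNReal.ofReal (‖((aR n : ℝ) : ℂ)‖ ^ 2) else 0)
          ≤ ∑ _n ∈ Q.divisors, (1:ℝ≥0∞) := Finset.sum_le_sum hterm
        _ = (Q.divisors.card : ℝ≥0∞) := by rw [Finset.sum_const, nsmul_eq_mul, mul_one]
        _ ≤ ((2 ^ R : ℕ) : ℝ≥0∞) := by exact_mod_cast Nat.cast_le.2 hcard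
    -- (ii) the b-sum
    have hB : (∑' n : ℕ, (if n.primeFactorsList.length = m then
            ENNReal.ofReal (‖((bR n : ℝ) : ℂ)‖ ^ 2 * (n : ℝ) ^ (((m : ℝ) - 2) / m) /
              Real.log n ^ ((m : ℝ) - 2 + ε)) else 0))
        ≤ ((R ^ m : ℕ) : ℝ≥0∞) * ENNReal.ofReal W := by
      set Dm : Finset ℕ := Q.divisors.filter (fun n => n.primeFactorsList.length = m) with hDm
      clear_value Dm
      have hsupp : ∀ n ∉ Dm, (if n.primeFactorsList.length = m then
            ENNReal.ofReal (‖((bR n : ℝ) : ℂ)‖ ^ 2 * (n : ℝ) ^ (((m : ℝ) - 2) / m) /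
              Real.log n ^ ((m : ℝ) - 2 + ε)) else 0) = 0 := by
        intro n hn
        by_cases hlen : n.primeFactorsList.length = m
        · rw [if_pos hlen]
          have hb0 : bR n = 0 := by
            by_contra hc
            have hcond : Squarefree n ∧ n.primeFactors ⊆ P ∧ n.primeFactorsList.length = m := by
              by_contra hcond
              rw [hbR] at hc
              simp [hcond] at hc
            have : n ∈ Dm := by
              rw [hDm, Finset.mem_filter]
              exact ⟨ha_dvd n (hba n hc), hlen⟩
            exact hn this
          rw [hb0]
          simp
        · rw [if_neg hlen]
      rw [tsum_eq_sum hsupp]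
      have hterm : ∀ n ∈ Dm, (if n.primeFactorsList.length = m then
            ENNReal.ofReal (‖((bR n : ℝ) : ℂ)‖ ^ 2 * (n : ℝ) ^ (((m : ℝ) - 2) / m) /
              Real.log n ^ ((m : ℝ) - 2 + ε)) else 0) ≤ ENNReal.ofReal W := by
        intro n hn
        rw [hDm, Finset.mem_filter, Nat.mem_divisors] at hn
        obtain ⟨⟨hdvd, _⟩, hlen⟩ := hn
        rw [if_pos hlen]
        refine ENNReal.ofReal_le_ofReal ?_
        have hsf : Squarefree n := hQsf.squarefree_of_dvd hdvd
        set S := n.primeFactors with hSdef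
        have hSsub : S ⊆ P := by rw [hSdef, ← hQpf]; exact Nat.primeFactors_mono hdvd hQ0
        have hneq : n = ∏ p ∈ S, p := (Nat.prod_primeFactors_of_squarefree hsf).symm
        have hScard : S.card = m := by
          rw [hSdef, ← length_eq_card hsf, hlen]
        -- numerator bound
        have hnle : (n:ℝ) ≤ ((x ^ m : ℕ) : ℝ) := by
          have h1 : n ≤ x ^ m := by
            rw [hneq]
            calc (∏ p ∈ S, p) ≤ x ^ S.card := hprod_le S hSsub
              _ = x ^ m := by rw [hScard]
          exact_mod_cast h1
        have hpow_eq : ((x ^ m : ℕ) : ℝ) ^ (((m : ℝ) - 2) / m) = xm2 := by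
          have hm0 : (m:ℝ) ≠ 0 := by linarith
          rw [hxm2]
          push_cast
          rw [← Real.rpow_natCast (x:ℝ) m, ← Real.rpow_mul hxR.le]
          rw [show (m:ℝ) * (((m : ℝ) - 2) / m) = (m:ℝ) - 2 by field_simp]
          rw [show ((m:ℝ) - 2) = ((m - 2 : ℕ) : ℝ) by push_cast [Nat.cast_sub (by omega : 2 ≤ m)]; ring]
          rw [Real.rpow_natCast]
        have hnum : ‖((bR n : ℝ) : ℂ)‖ ^ 2 * (n : ℝ) ^ (((m : ℝ) - 2) / m) ≤ xm2 := by
          have h1 : ‖((bR n : ℝ) : ℂ)‖ ^ 2 ≤ 1 := by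
            rw [Complex.norm_real, Real.norm_eq_abs, abs_of_nonneg (hbR_nonneg n)]
            nlinarith [hbR_nonneg n, hbR_le n]
          have h2 : (n : ℝ) ^ (((m : ℝ) - 2) / m) ≤ xm2 := by
            rw [← hpow_eq]
            refine Real.rpow_le_rpow (by positivity) hnle
              (div_nonneg (by linarith) (by linarith))
          calc ‖((bR n : ℝ) : ℂ)‖ ^ 2 * (n : ℝ) ^ (((m : ℝ) - 2) / m)
              ≤ 1 * (n : ℝ) ^ (((m : ℝ) - 2) / m) := by
                refine mul_le_mul_of_nonneg_right h1 (by positivity)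
            _ = (n : ℝ) ^ (((m : ℝ) - 2) / m) := by ring
            _ ≤ xm2 := h2
        -- denominator bound
        have hden : DD ^ ((m:ℝ) - 2 + ε) ≤ Real.log n ^ ((m:ℝ) - 2 + ε) := by
          refine Real.rpow_le_rpow hDD_pos.le ?_ hexp_pos
          have := hprod_log_low S hSsub
          rw [hScard] at this
          rw [hneq]
          rw [hDD]
          linarith [this]
        rw [hW]
        exact div_le_div₀ hxm2_pos.le hnum (by positivity) hden
      have hcard : Dm.card ≤ R ^ m := by
        have hinj : Dm.card ≤ (P.powersetCard m).card :=
          Finset.card_le_card_of_injOn (fun n => n.primeFactors)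
          (fun n hn => by
            rw [hDm, Finset.mem_coe, Finset.mem_filter, Nat.mem_divisors] at hn
            rw [Finset.mem_coe, Finset.mem_powersetCard]
            have hsf : Squarefree n := hQsf.squarefree_of_dvd hn.1.1
            constructor
            · rw [← hQpf]; exact Nat.primeFactors_mono hn.1.1 hQ0
            · rw [← length_eq_card hsf, hn.2])
          (fun n₁ h₁ n₂ h₂ h => by
            rw [Finset.mem_coe, hDm, Finset.mem_filter, Nat.mem_divisors] at h₁ h₂
            have hsf₁ : Squarefree n₁ := hQsf.squarefree_of_dvd h₁.1.1
            have hsf₂ : Squarefree n₂ := hQsf.squarefree_of_dvd h₂.1.1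
            have h' : n₁.primeFactors = n₂.primeFactors := h
            rw [← Nat.prod_primeFactors_of_squarefree hsf₁,
              ← Nat.prod_primeFactors_of_squarefree hsf₂, h'])
        calc Dm.card ≤ (P.powersetCard m).card := hinj
          _ = R.choose m := by rw [Finset.card_powersetCard, hRdef]
          _ ≤ R ^ m := Nat.choose_le_pow R m
      calc ∑ n ∈ Dm, (if n.primeFactorsList.length = m then
            ENNReal.ofReal (‖((bR n : ℝ) : ℂ)‖ ^ 2 * (n : ℝ) ^ (((m : ℝ) - 2) / m) /
              Real.log n ^ ((m : ℝ) - 2 + ε)) else 0)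
          ≤ ∑ _n ∈ Dm, ENNReal.ofReal W := Finset.sum_le_sum hterm
        _ = (Dm.card : ℝ≥0∞) * ENNReal.ofReal W := by rw [Finset.sum_const, nsmul_eq_mul]
        _ ≤ ((R ^ m : ℕ) : ℝ≥0∞) * ENNReal.ofReal W := by
            refine mul_le_mul_left ?_ _
            exact_mod_cast Nat.cast_le.2 hcard
    -- (iii) the collection G of large subsets
    set G : Finset (Finset ℕ) := P.powerset.filter (fun S => L ≤ S.card) with hG
    clear_value G
    have hGsub : ∀ S ∈ G, S ⊆ P ∧ L ≤ S.card := by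
      intro S hS
      rw [hG, Finset.mem_filter, Finset.mem_powerset] at hS
      exact hS
    have hcardG : 2 ^ (R - 1) ≤ G.card := by
      set G' : Finset (Finset ℕ) := P.powerset.filter (fun S => ¬ L ≤ S.card) with hG'
      have hsumc : G.card + G'.card = 2 ^ R := by
        rw [hG, hG', Finset.card_filter_add_card_filter_not, Finset.card_powerset,
          hRdef]
      have hle : G'.card ≤ G.card := by
        refine Finset.card_le_card_of_injOn (fun S => P \ S) ?_ ?_
        · intro S hS
          rw [hG', Finset.mem_coe, Finset.mem_filter, Finset.mem_powerset] at hS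
          rw [hG, Finset.mem_coe, Finset.mem_filter, Finset.mem_powerset]
          have hc : S.card ≤ P.card := Finset.card_le_card hS.1
          have hcs : (P \ S).card = P.card - S.card := Finset.card_sdiff_of_subset hS.1
          have hPR : P.card = R := hRdef.symm
          refine ⟨Finset.sdiff_subset, ?_⟩
          rw [hcs, hPR]
          have h2 : ¬ L ≤ S.card := hS.2
          omega
        · intro S₁ h₁ S₂ h₂ h
          rw [Finset.mem_coe, hG', Finset.mem_filter, Finset.mem_powerset] at h₁ h₂
          have h' : P \ S₁ = P \ S₂ := h
          rw [← Finset.sdiff_sdiff_eq_self h₁.1, ← Finset.sdiff_sdiff_eq_self h₂.1, h']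
      have h2R : 2 ^ R = 2 ^ (R - 1) * 2 := by
        rw [← pow_succ]
        congr 1
        omega
      omega
    -- (iv) inner sum lower bound
    have hinner : ∀ S ∈ G, c0 ≤
        ∑ k ∈ (∏ p ∈ S, p).divisors.filter (fun k => k.primeFactorsList.length = m),
          bR k * Real.log k * aR ((∏ p ∈ S, p) / k) := by
      intro S hS
      obtain ⟨hSP, hLS⟩ := hGsub S hS
      have hN0 : (∏ p ∈ S, p) ≠ 0 := (hprod_pos S hSP).ne'
      have hFsub : (S.powersetCard m).image (fun T => ∏ p ∈ T, p) ⊆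
          (∏ p ∈ S, p).divisors.filter (fun k => k.primeFactorsList.length = m) := by
        intro k hk
        rw [Finset.mem_image] at hk
        obtain ⟨T, hT, rfl⟩ := hk
        rw [Finset.mem_powersetCard] at hT
        obtain ⟨hTS, hTcard⟩ := hT
        rw [Finset.mem_filter, Nat.mem_divisors]
        refine ⟨⟨Finset.prod_dvd_prod_of_subset _ _ _ hTS, hN0⟩, ?_⟩
        rw [hprod_len T (hTS.trans hSP), hTcard]
      have hnonneg : ∀ k ∈ (∏ p ∈ S, p).divisors.filter
            (fun k => k.primeFactorsList.length = m),
          k ∉ (S.powersetCard m).image (fun T => ∏ p ∈ T, p) →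
          0 ≤ bR k * Real.log k * aR ((∏ p ∈ S, p) / k) := by
        intro k hk _
        have hk1 : 0 < k := Nat.pos_of_mem_divisors (Finset.mem_filter.1 hk).1
        have hlogk : (0:ℝ) ≤ Real.log k := Real.log_natCast_nonneg k
        exact mul_nonneg (mul_nonneg (hbR_nonneg k) hlogk) (haR_nonneg _)
      have hsum_image : ∑ k ∈ (S.powersetCard m).image (fun T => ∏ p ∈ T, p),
            bR k * Real.log k * aR ((∏ p ∈ S, p) / k)
          = ∑ T ∈ S.powersetCard m, bR (∏ p ∈ T, p) *
              Real.log ((∏ p ∈ T, p : ℕ) : ℝ) * aR ((∏ p ∈ S, p) / ∏ p ∈ T, p) := by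
        refine Finset.sum_image ?_
        intro T₁ h₁ T₂ h₂ h
        exact hprod_inj T₁ ((Finset.mem_powersetCard.1 h₁).1.trans hSP) T₂
          ((Finset.mem_powersetCard.1 h₂).1.trans hSP) h
      have hterm_eq : ∀ T ∈ S.powersetCard m,
          bR (∏ p ∈ T, p) * Real.log ((∏ p ∈ T, p : ℕ) : ℝ) *
            aR ((∏ p ∈ S, p) / ∏ p ∈ T, p)
          = Real.log ((∏ p ∈ T, p : ℕ) : ℝ) := by
        intro T hT
        rw [Finset.mem_powersetCard] at hT
        obtain ⟨hTS, hTcard⟩ := hT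
        have hTP : T ⊆ P := hTS.trans hSP
        have hb1 : bR (∏ p ∈ T, p) = 1 := by
          refine hbR_one _ (hprod_sf T hTP) ?_ ?_
          · rw [hprod_pf T hTP]; exact hTP
          · rw [hprod_len T hTP, hTcard]
        have hdiv : (∏ p ∈ S, p) / (∏ p ∈ T, p) = ∏ p ∈ S \ T, p := by
          have hsd : (∏ p ∈ S \ T, p) * (∏ p ∈ T, p) = ∏ p ∈ S, p :=
            Finset.prod_sdiff hTS
          rw [← hsd, Nat.mul_div_cancel _ (hprod_pos T hTP)]
        have hSTP : S \ T ⊆ P := Finset.sdiff_subset.trans hSP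
        have ha1 : aR (∏ p ∈ S \ T, p) = 1 := by
          refine haR_one _ (hprod_sf _ hSTP) ?_
          rw [hprod_pf _ hSTP]; exact hSTP
        rw [hb1, hdiv, ha1]
        ring
      have hlog_each : ∀ T ∈ S.powersetCard m, DD ≤ Real.log ((∏ p ∈ T, p : ℕ) : ℝ) := by
        intro T hT
        rw [Finset.mem_powersetCard] at hT
        obtain ⟨hTS, hTcard⟩ := hT
        have := hprod_log_low T (hTS.trans hSP)
        rw [hTcard] at this
        rw [hDD]
        linarith
      have hcardpc : (S.powersetCard m).card = S.card.choose m := Finset.card_powersetCard m S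
      have hchoose : L.choose m ≤ S.card.choose m := Nat.choose_le_choose m hLS
      calc c0 = (L.choose m : ℝ) * DD := hc0
        _ ≤ (S.card.choose m : ℝ) * DD := by
            refine mul_le_mul_of_nonneg_right ?_ hDD_pos.le
            exact_mod_cast hchoose
        _ = ((S.powersetCard m).card : ℝ) * DD := by rw [hcardpc]
        _ ≤ ∑ T ∈ S.powersetCard m, Real.log ((∏ p ∈ T, p : ℕ) : ℝ) := by
            have := Finset.card_nsmul_le_sum (S.powersetCard m)
              (fun T => Real.log ((∏ p ∈ T, p : ℕ) : ℝ)) DD hlog_each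
            rw [nsmul_eq_mul] at this
            exact this
        _ = ∑ T ∈ S.powersetCard m, bR (∏ p ∈ T, p) *
              Real.log ((∏ p ∈ T, p : ℕ) : ℝ) * aR ((∏ p ∈ S, p) / ∏ p ∈ T, p) :=
            (Finset.sum_congr rfl hterm_eq).symm
        _ = ∑ k ∈ (S.powersetCard m).image (fun T => ∏ p ∈ T, p),
              bR k * Real.log k * aR ((∏ p ∈ S, p) / k) := hsum_image.symm
        _ ≤ ∑ k ∈ (∏ p ∈ S, p).divisors.filter (fun k => k.primeFactorsList.length = m),
              bR k * Real.log k * aR ((∏ p ∈ S, p) / k) :=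
            Finset.sum_le_sum_of_subset_of_nonneg hFsub hnonneg
    -- (v) lower bound on the right-hand side
    have hN2 : ∀ S ∈ G, 2 ≤ ∏ p ∈ S, p := by
      intro S hS
      obtain ⟨hSP, hLS⟩ := hGsub S hS
      have hL1 : 1 ≤ L := by omega
      have hSne : S.Nonempty := Finset.card_pos.1 (by omega)
      obtain ⟨p, hp⟩ := hSne
      have h2p : 2 ≤ p := (hPprime p (hSP hp)).two_le
      have hple : p ≤ ∏ q ∈ S, q :=
        Nat.le_of_dvd (hprod_pos S hSP) (Finset.dvd_prod_of_mem _ hp)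
      omega
    have hRHS : ((2 ^ (R - 1) : ℕ) : ℝ≥0∞) * ENNReal.ofReal t0r ≤
        ∑' N : ℕ, (if 2 ≤ N then
            ENNReal.ofReal
              (‖∑ k ∈ N.divisors.filter (fun k => k.primeFactorsList.length = m),
                  ((bR k : ℝ) : ℂ) * (Real.log k : ℂ) * ((aR (N / k) : ℝ) : ℂ)‖ ^ 2 /
                Real.log N ^ 2)
          else 0) := by
      have hinjG : ∀ S₁ ∈ G, ∀ S₂ ∈ G, (∏ p ∈ S₁, p) = (∏ p ∈ S₂, p) → S₁ = S₂ := by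
        intro S₁ h₁ S₂ h₂ h
        exact hprod_inj S₁ (hGsub S₁ h₁).1 S₂ (hGsub S₂ h₂).1 h
      have hsum_im : ∑ N ∈ G.image (fun S => ∏ p ∈ S, p), (if 2 ≤ N then
            ENNReal.ofReal
              (‖∑ k ∈ N.divisors.filter (fun k => k.primeFactorsList.length = m),
                  ((bR k : ℝ) : ℂ) * (Real.log k : ℂ) * ((aR (N / k) : ℝ) : ℂ)‖ ^ 2 /
                Real.log N ^ 2)
          else 0)
          = ∑ S ∈ G, (if 2 ≤ (∏ p ∈ S, p) then
            ENNReal.ofReal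
              (‖∑ k ∈ (∏ p ∈ S, p).divisors.filter
                    (fun k => k.primeFactorsList.length = m),
                  ((bR k : ℝ) : ℂ) * (Real.log k : ℂ) *
                    ((aR ((∏ p ∈ S, p) / k) : ℝ) : ℂ)‖ ^ 2 /
                Real.log ((∏ p ∈ S, p) : ℕ) ^ 2)
          else 0) := Finset.sum_image hinjG
      have hterm_ge : ∀ S ∈ G, ENNReal.ofReal t0r ≤ (if 2 ≤ (∏ p ∈ S, p) then
            ENNReal.ofReal
              (‖∑ k ∈ (∏ p ∈ S, p).divisors.filter
                    (fun k => k.primeFactorsList.length = m),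
                  ((bR k : ℝ) : ℂ) * (Real.log k : ℂ) *
                    ((aR ((∏ p ∈ S, p) / k) : ℝ) : ℂ)‖ ^ 2 /
                Real.log ((∏ p ∈ S, p) : ℕ) ^ 2)
          else 0) := by
        intro S hS
        obtain ⟨hSP, hLS⟩ := hGsub S hS
        rw [if_pos (hN2 S hS)]
        refine ENNReal.ofReal_le_ofReal ?_
        have hcast : (∑ k ∈ (∏ p ∈ S, p).divisors.filter
                (fun k => k.primeFactorsList.length = m),
              ((bR k : ℝ) : ℂ) * (Real.log k : ℂ) * ((aR ((∏ p ∈ S, p) / k) : ℝ) : ℂ))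
            = (((∑ k ∈ (∏ p ∈ S, p).divisors.filter
                (fun k => k.primeFactorsList.length = m),
              bR k * Real.log k * aR ((∏ p ∈ S, p) / k)) : ℝ) : ℂ) := by
          push_cast
          rfl
        rw [hcast, Complex.norm_real, Real.norm_eq_abs]
        have habs : c0 ≤ |∑ k ∈ (∏ p ∈ S, p).divisors.filter
              (fun k => k.primeFactorsList.length = m),
            bR k * Real.log k * aR ((∏ p ∈ S, p) / k)| :=
          le_trans (hinner S hS) (le_abs_self _)
        have hlogN_up : Real.log ((∏ p ∈ S, p : ℕ) : ℝ) ≤ (R:ℝ) * lam := hprod_log_up S hSP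
        have hlogN_pos : 0 < Real.log ((∏ p ∈ S, p : ℕ) : ℝ) := by
          refine Real.log_pos ?_
          have := hN2 S hS
          exact_mod_cast (by omega : 1 < ∏ p ∈ S, p)
        rw [ht0r]
        refine div_le_div₀ (by positivity) ?_ (by positivity) ?_
        · exact pow_le_pow_left₀ hc0_pos.le habs 2
        · exact pow_le_pow_left₀ hlogN_pos.le hlogN_up 2
      calc ((2 ^ (R - 1) : ℕ) : ℝ≥0∞) * ENNReal.ofReal t0r
          ≤ (G.card : ℝ≥0∞) * ENNReal.ofReal t0r := by
            refine mul_le_mul_left ?_ _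
            exact_mod_cast Nat.cast_le.2 hcardG
        _ = ∑ _S ∈ G, ENNReal.ofReal t0r := by rw [Finset.sum_const, nsmul_eq_mul]
        _ ≤ ∑ S ∈ G, (if 2 ≤ (∏ p ∈ S, p) then
            ENNReal.ofReal
              (‖∑ k ∈ (∏ p ∈ S, p).divisors.filter
                    (fun k => k.primeFactorsList.length = m),
                  ((bR k : ℝ) : ℂ) * (Real.log k : ℂ) *
                    ((aR ((∏ p ∈ S, p) / k) : ℝ) : ℂ)‖ ^ 2 /
                Real.log ((∏ p ∈ S, p) : ℕ) ^ 2)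
          else 0) := Finset.sum_le_sum hterm_ge
        _ = ∑ N ∈ G.image (fun S => ∏ p ∈ S, p), (if 2 ≤ N then
            ENNReal.ofReal
              (‖∑ k ∈ N.divisors.filter (fun k => k.primeFactorsList.length = m),
                  ((bR k : ℝ) : ℂ) * (Real.log k : ℂ) * ((aR (N / k) : ℝ) : ℂ)‖ ^ 2 /
                Real.log N ^ 2)
          else 0) := hsum_im.symm
        _ ≤ _ := ENNReal.sum_le_tsum _
    -- (vi) the final numeric inequality over ℝ
    set Rr : ℝ := (R : ℝ) with hRr
    have hRr_pos : (0:ℝ) < Rr := by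
      rw [hRr]; exact_mod_cast hR1
    have hW_pos : 0 < W := by
      rw [hW]; positivity
    set p1 : ℝ := lam ^ (m - 2) * lam ^ ε with hp1
    have hp1_pos : 0 < p1 := by
      rw [hp1]
      have := Real.rpow_pos_of_pos hlam0 ε
      positivity
    set q1 : ℝ := (16:ℝ) ^ m * mf ^ 2 with hq1
    have hq1_pos : 0 < q1 := by rw [hq1]; positivity
    clear_value Rr p1 q1
    have hWp1 : W * p1 ≤ xm2 := by
      have hDDe : p1 ≤ DD ^ ((m:ℝ) - 2 + ε) := by
        have h1 : DD ^ ((m:ℝ) - 2 + ε) = DD ^ ((m:ℝ) - 2) * DD ^ ε := Real.rpow_add hDD_pos _ _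
        have h2 : DD ^ ((m:ℝ) - 2) = DD ^ (m - 2 : ℕ) := by
          rw [show ((m:ℝ) - 2) = ((m - 2 : ℕ) : ℝ) by
            push_cast [Nat.cast_sub (by omega : 2 ≤ m)]; ring]
          rw [Real.rpow_natCast]
        have h3 : lam ^ (m - 2 : ℕ) ≤ DD ^ (m - 2 : ℕ) :=
          pow_le_pow_left₀ hlam0.le hDD_lam _
        have h4 : lam ^ ε ≤ DD ^ ε := Real.rpow_le_rpow hlam0.le hDD_lam hε.le
        rw [h1, h2, hp1]
        refine mul_le_mul h3 h4 (Real.rpow_nonneg hlam0.le ε) (by positivity)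
      have hWD : W * DD ^ ((m:ℝ) - 2 + ε) = xm2 := by
        rw [hW]
        field_simp
      calc W * p1 ≤ W * DD ^ ((m:ℝ) - 2 + ε) := mul_le_mul_of_nonneg_left hDDe hW_pos.le
        _ = xm2 := hWD
    set Z : ℝ := (Rr / 4) ^ m / mf with hZ
    have hZ_pos : 0 < Z := by rw [hZ]; positivity
    clear_value Z
    have hZc0 : Z * lam ≤ c0 := by
      have hch : Z ≤ (L.choose m : ℝ) := by
        have h1 := Nat.pow_le_choose (α := ℝ) m L
        have h2 : Rr / 4 ≤ ((L + 1 - m : ℕ) : ℝ) := by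
          have h3 : R ≤ 4 * (L + 1 - m) := by omega
          have h4 : (R:ℝ) ≤ 4 * ((L + 1 - m : ℕ) : ℝ) := by exact_mod_cast h3
          rw [hRr]; linarith
        have h5 : (Rr / 4) ^ m ≤ ((L + 1 - m : ℕ) : ℝ) ^ m :=
          pow_le_pow_left₀ (div_nonneg hRr_pos.le (by norm_num)) h2 m
        rw [hZ]
        calc (Rr / 4) ^ m / mf ≤ ((L + 1 - m : ℕ) : ℝ) ^ m / mf :=
              (div_le_div_iff_of_pos_right (by positivity : (0:ℝ) < mf)).2 h5
          _ ≤ (L.choose m : ℝ) := by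
              rw [hmf]
              exact_mod_cast h1
      rw [hc0]
      calc Z * lam ≤ (L.choose m : ℝ) * lam := mul_le_mul_of_nonneg_right hch hlam0.le
        _ ≤ (L.choose m : ℝ) * DD := mul_le_mul_of_nonneg_left hDD_lam hLc_pos.le
    have hZq1 : Z ^ 2 * q1 = Rr ^ (2 * m) := by
      have hmf0 : mf ≠ 0 := by positivity
      have h1 : Z ^ 2 = ((Rr / 4) ^ m) ^ 2 / mf ^ 2 := by rw [hZ, div_pow]
      have h2 : ((Rr / 4) ^ m) ^ 2 = Rr ^ (2 * m) / (16:ℝ) ^ m := by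
        rw [← pow_mul, div_pow]
        rw [show m * 2 = 2 * m from by omega]
        congr 1
        rw [show (4:ℝ) ^ (2 * m) = ((4:ℝ) ^ 2) ^ m from by rw [← pow_mul]]
        norm_num
      rw [h1, h2, hq1]
      field_simp
    have hcore : 2 * C * xm2 * q1 < Rr ^ (m - 2) * p1 := by
      have hKpos : 0 < K := by rw [hKdef]; positivity
      have s1 : xm2 / (4:ℝ) ^ (m - 2) ≤ Rr ^ (m - 2) * lam ^ (m - 2) := by
        have h1 : ((x:ℝ) / 4) ^ (m - 2) ≤ (Rr * lam) ^ (m - 2) := by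
          refine pow_le_pow_left₀ (by positivity) ?_ _
          exact hRlam
        rw [div_pow, mul_pow] at h1
        rw [hxm2]
        exact h1
      have s2 : (xm2 / (4:ℝ) ^ (m - 2)) * K < Rr ^ (m - 2) * p1 := by
        rw [hp1]
        calc (xm2 / (4:ℝ) ^ (m - 2)) * K < (xm2 / (4:ℝ) ^ (m - 2)) * lam ^ ε := by
              refine mul_lt_mul_of_pos_left hKlam (by positivity)
          _ ≤ (Rr ^ (m - 2) * lam ^ (m - 2)) * lam ^ ε := by
              refine mul_le_mul_of_nonneg_right s1 (Real.rpow_nonneg hlam0.le ε)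
          _ = Rr ^ (m - 2) * (lam ^ (m - 2) * lam ^ ε) := by ring
      have s3 : 2 * C * xm2 * q1 ≤ (xm2 / (4:ℝ) ^ (m - 2)) * K := by
        rw [hKdef, hq1]
        have h4 : (4:ℝ) ^ (m - 2) ≤ (4:ℝ) ^ m := pow_le_pow_right₀ (by norm_num) (by omega)
        have h5 : (1:ℝ) ≤ (4:ℝ) ^ m / (4:ℝ) ^ (m - 2) := (one_le_div (by positivity)).2 h4
        calc 2 * C * xm2 * ((16:ℝ) ^ m * mf ^ 2)
            = (2 * C * (16:ℝ) ^ m * mf ^ 2 * xm2) * 1 := by ring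
          _ ≤ (2 * C * (16:ℝ) ^ m * mf ^ 2 * xm2) * ((4:ℝ) ^ m / (4:ℝ) ^ (m - 2)) := by
              refine mul_le_mul_of_nonneg_left h5 (by positivity)
          _ = (xm2 / (4:ℝ) ^ (m - 2)) * (2 * C * 16 ^ m * mf ^ 2 * 4 ^ m) := by
              field_simp
      exact lt_of_le_of_lt s3 s2
    have hmain : C * (Rr ^ m * W) * 2 < t0r := by
      rw [ht0r, lt_div_iff₀ (pow_pos hRlam_pos 2)]
      have hc0sq : (Z * lam) ^ 2 ≤ c0 ^ 2 :=
        pow_le_pow_left₀ (mul_nonneg hZ_pos.le hlam0.le) hZc0 2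
      have hred : C * (Rr ^ m * W) * 2 * ((Rr * lam) ^ 2) = (2 * C * Rr ^ m * Rr ^ 2 * W) * lam ^ 2 := by
        ring
      have hred2 : (Z * lam) ^ 2 = Z ^ 2 * lam ^ 2 := by ring
      refine lt_of_lt_of_le ?_ hc0sq
      rw [hred, hred2]
      refine mul_lt_mul_of_pos_right ?_ (pow_pos hlam0 2)
      -- goal : 2 * C * Rr ^ m * Rr ^ 2 * W < Z ^ 2
      have key : (2 * C * Rr ^ m * Rr ^ 2 * W) * (q1 * p1) < Z ^ 2 * (q1 * p1) := by
        have hRm2 : Rr ^ m * Rr ^ 2 = Rr ^ (m + 2) := by rw [← pow_add]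
        have hR2m : Rr ^ (m + 2) * Rr ^ (m - 2) = Rr ^ (2 * m) := by
          rw [← pow_add]; congr 1; omega
        calc (2 * C * Rr ^ m * Rr ^ 2 * W) * (q1 * p1)
            = (2 * C * (Rr ^ m * Rr ^ 2) * q1) * (W * p1) := by ring
          _ ≤ (2 * C * (Rr ^ m * Rr ^ 2) * q1) * xm2 := by
              refine mul_le_mul_of_nonneg_left hWp1 (by positivity)
          _ = (Rr ^ m * Rr ^ 2) * (2 * C * xm2 * q1) := by ring
          _ < (Rr ^ m * Rr ^ 2) * (Rr ^ (m - 2) * p1) := by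
              refine mul_lt_mul_of_pos_left hcore (by positivity)
          _ = Rr ^ (2 * m) * p1 := by rw [hRm2, ← mul_assoc, hR2m]
          _ = Z ^ 2 * (q1 * p1) := by rw [← hZq1]; ring
      exact lt_of_mul_lt_mul_right key (mul_pos hq1_pos hp1_pos).le
    -- conclude in ℝ≥0∞
    have hfinalR : C * (((R ^ m : ℕ) : ℝ) * W) * ((2 ^ R : ℕ) : ℝ) <
        ((2 ^ (R - 1) : ℕ) : ℝ) * t0r := by
      push_cast
      have hpow2 : (2:ℝ) ^ R = (2:ℝ) ^ (R - 1) * 2 := by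
        rw [← pow_succ]; congr 1; omega
      rw [hpow2]
      calc C * ((R:ℝ) ^ m * W) * ((2:ℝ) ^ (R - 1) * 2)
          = (C * (Rr ^ m * W) * 2) * (2:ℝ) ^ (R - 1) := by rw [hRr]; ring
        _ < t0r * (2:ℝ) ^ (R - 1) := by
            refine mul_lt_mul_of_pos_right hmain (by positivity)
        _ = (2:ℝ) ^ (R - 1) * t0r := by ring
    calc ENNReal.ofReal C *
          (∑' n : ℕ, (if n.primeFactorsList.length = m then
              ENNReal.ofReal (‖((bR n : ℝ) : ℂ)‖ ^ 2 * (n : ℝ) ^ (((m : ℝ) - 2) / m) /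
                Real.log n ^ ((m : ℝ) - 2 + ε)) else 0)) *
          (∑' n : ℕ, (if 1 ≤ n then ENNReal.ofReal (‖((aR n : ℝ) : ℂ)‖ ^ 2) else 0))
        ≤ ENNReal.ofReal C * (((R ^ m : ℕ) : ℝ≥0∞) * ENNReal.ofReal W) *
            ((2 ^ R : ℕ) : ℝ≥0∞) := by
          exact mul_le_mul' (mul_le_mul' le_rfl hB) hA
      _ = ENNReal.ofReal (C * (((R ^ m : ℕ) : ℝ) * W) * ((2 ^ R : ℕ) : ℝ)) := by
          rw [ENNReal.ofReal_mul (by positivity), ENNReal.ofReal_mul hC.le,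
            ENNReal.ofReal_mul (by positivity), ENNReal.ofReal_natCast,
            ENNReal.ofReal_natCast]
      _ < ENNReal.ofReal (((2 ^ (R - 1) : ℕ) : ℝ) * t0r) := by
          refine (ENNReal.ofReal_lt_ofReal_iff ?_).2 hfinalR
          positivity
      _ = ((2 ^ (R - 1) : ℕ) : ℝ≥0∞) * ENNReal.ofReal t0r := by
          rw [ENNReal.ofReal_mul (by positivity), ENNReal.ofReal_natCast]
      _ ≤ _ := hRHS

end MainProof
end
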